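/- arXiv:2404.09947 — 7 statements merged into one kernel-verified Lean document; each statement's English description precedes it below -/
import Mathlib

section
/- Let f_d be a probability density on ℝ² with finite mean dispersal distance μ = ∬ |x| f_d(x) dA. Define G(x)·n for a unit vector n by G(x)·n = ∬_{y ∈ Ĥ} (y·n / |y|²) (∫_{|y|}^∞ f_d(r, θ_y) r dr) dA, where Ĥ ⊂ ℝ² is any measurable set. Then for every unit vector n and every measurable Ĥ, G(x)·n ≤ (1/2) n · E[X_d] + μ/2, where E[X_d] = ∬ y f_d(y) dA. -/
open MeasureTheory Real Set

theorem my_lintegral_polar (g : ℝ × ℝ → ENNReal) :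
    ∫⁻ p in polarCoord.target, ENNReal.ofReal p.1 * g (polarCoord.symm p) = ∫⁻ p, g p := by
  set B : ℝ × ℝ → ℝ × ℝ →L[ℝ] ℝ × ℝ := fun p =>
    LinearMap.toContinuousLinearMap (Matrix.toLin (Module.Basis.finTwoProd ℝ) (Module.Basis.finTwoProd ℝ)
      !![Real.cos p.2, -p.1 * Real.sin p.2; Real.sin p.2, p.1 * Real.cos p.2])
  have A : ∀ p ∈ polarCoord.target, HasFDerivWithinAt polarCoord.symm (B p) polarCoord.target p :=
    fun p _ => (hasFDerivAt_polarCoord_symm p).hasFDerivWithinAt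
  have B_det : ∀ p, (B p).det = p.1 := by
    intro p
    conv_rhs => rw [← one_mul p.1, ← cos_sq_add_sin_sq p.2]
    simp only [B, neg_mul, LinearMap.det_toContinuousLinearMap, LinearMap.det_toLin,
      Matrix.det_fin_two_of, sub_neg_eq_add]
    ring
  have hinj : Set.InjOn polarCoord.symm polarCoord.target := by
    have := polarCoord.symm.injOn
    rwa [OpenPartialHomeomorph.symm_source] at this
  symm
  calc
    ∫⁻ p, g p = ∫⁻ p in polarCoord.source, g p := by
      rw [← setLIntegral_univ]
      exact setLIntegral_congr polarCoord_source_ae_eq_univ.symm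
    _ = ∫⁻ p in polarCoord.symm '' polarCoord.target, g p := by
      rw [polarCoord.symm_image_target_eq_source]
    _ = ∫⁻ p in polarCoord.target, ENNReal.ofReal |(B p).det| * g (polarCoord.symm p) := by
      exact lintegral_image_eq_lintegral_abs_det_fderiv_mul volume
        polarCoord.open_target.measurableSet A hinj g
    _ = ∫⁻ p in polarCoord.target, ENNReal.ofReal p.1 * g (polarCoord.symm p) := by
      apply setLIntegral_congr_fun polarCoord.open_target.measurableSet
      exact fun p hp => by rw [B_det, abs_of_pos hp.1]


theorem my_swap (G : ℝ → ENNReal) (hG : AEMeasurable G (volume.restrict (Ioi 0))) :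
    ∫⁻ ρ in Ioi (0:ℝ), ∫⁻ r in Ioi ρ, G r = ∫⁻ r in Ioi (0:ℝ), G r * ENNReal.ofReal r := by
  set ν := volume.restrict (Ioi (0:ℝ)) with hν
  have h1 : ∀ ρ : ℝ, 0 < ρ → ∫⁻ r in Ioi ρ, G r = ∫⁻ r, (Ioi ρ).indicator G r ∂ν := by
    intro ρ hρ
    rw [lintegral_indicator measurableSet_Ioi, hν, Measure.restrict_restrict measurableSet_Ioi,
      Set.inter_eq_left.mpr (Ioi_subset_Ioi hρ.le)]
  have hmeas : AEMeasurable (fun z : ℝ × ℝ => (Ioi z.1).indicator G z.2) (ν.prod ν) := by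
    refine ⟨fun z => {q : ℝ × ℝ | q.1 < q.2}.indicator (fun q => hG.mk G q.2) z, ?_, ?_⟩
    · exact Measurable.indicator (hG.measurable_mk.comp measurable_snd)
        (measurableSet_lt measurable_fst measurable_snd)
    · have h2 : (fun z : ℝ × ℝ => G z.2) =ᵐ[ν.prod ν] fun z => hG.mk G z.2 :=
        Measure.QuasiMeasurePreserving.ae_eq_comp Measure.quasiMeasurePreserving_snd hG.ae_eq_mk
      filter_upwards [h2] with z hz
      by_cases h : z.1 < z.2
      · simp [Set.indicator_of_mem, h, Set.mem_Ioi, Set.mem_setOf_eq, hz]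
      · simp [Set.indicator_of_notMem, h, Set.mem_Ioi, Set.mem_setOf_eq]
  calc
    ∫⁻ ρ in Ioi (0:ℝ), ∫⁻ r in Ioi ρ, G r
        = ∫⁻ ρ, ∫⁻ r, (Ioi ρ).indicator G r ∂ν ∂ν := by
      refine setLIntegral_congr_fun measurableSet_Ioi ?_
      intro ρ hρ; exact h1 ρ hρ
    _ = ∫⁻ r, ∫⁻ ρ, (Ioi ρ).indicator G r ∂ν ∂ν := lintegral_lintegral_swap hmeas
    _ = ∫⁻ r in Ioi (0:ℝ), G r * ENNReal.ofReal r := by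
      refine setLIntegral_congr_fun measurableSet_Ioi ?_
      intro r hr
      beta_reduce
      have : (fun ρ => (Ioi ρ).indicator G r) = fun ρ => (Iio r).indicator (fun _ => G r) ρ := by
        funext ρ
        by_cases h : ρ < r
        · simp [Set.indicator_of_mem, Set.mem_Ioi, Set.mem_Iio, h]
        · simp [Set.indicator_of_notMem, Set.mem_Ioi, Set.mem_Iio, h]
      rw [this, lintegral_indicator measurableSet_Iio, hν,
        Measure.restrict_restrict measurableSet_Iio, setLIntegral_const]
      have : Iio r ∩ Ioi (0:ℝ) = Ioo 0 r := by ext x; simp [Set.mem_Ioo, Set.mem_Iio, Set.mem_Ioi, and_comm]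
      rw [this, Real.volume_Ioo, sub_zero]

noncomputable def aa (n : ℝ × ℝ) (θ : ℝ) : ℝ :=
  (Real.cos θ * n.1 + Real.sin θ * n.2) + |Real.cos θ * n.1 + Real.sin θ * n.2|

lemma aa_nonneg (n : ℝ × ℝ) (θ : ℝ) : 0 ≤ aa n θ := by
  unfold aa; have := neg_abs_le (Real.cos θ * n.1 + Real.sin θ * n.2); linarith

lemma aa_continuous (n : ℝ × ℝ) : Continuous (aa n) := by
  unfold aa; fun_prop

theorem polar_main (fd : ℝ × ℝ → ℝ) (hnn : ∀ x, 0 ≤ fd x) (hint : Integrable fd)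
    (n : ℝ × ℝ) :
    ∫⁻ y : ℝ × ℝ, ENNReal.ofReal
        ((y.1 * n.1 + y.2 * n.2 + |y.1 * n.1 + y.2 * n.2|) / (2 * (y.1 ^ 2 + y.2 ^ 2))) *
        ∫⁻ r in Ioi (Real.sqrt (y.1 ^ 2 + y.2 ^ 2)),
          ENNReal.ofReal (fd ((r / Real.sqrt (y.1 ^ 2 + y.2 ^ 2)) • y) * r)
      = ∫⁻ x : ℝ × ℝ, ENNReal.ofReal
          ((x.1 * n.1 + x.2 * n.2 + |x.1 * n.1 + x.2 * n.2|) / 2 * fd x) := by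
  have hπ : (0:ℝ) < π := Real.pi_pos
  set μ1 := volume.restrict (Ioi (0:ℝ)) with hμ1
  set μ2 := volume.restrict (Ioo (-π) π) with hμ2
  have hmk := hint.aestronglyMeasurable
  set f₀ : ℝ × ℝ → ℝ := hmk.mk fd with hf₀def
  have hf₀m : Measurable f₀ := hmk.stronglyMeasurable_mk.measurable
  have hae : fd =ᵐ[volume] f₀ := hmk.ae_eq_mk
  set N : Set (ℝ × ℝ) := toMeasurable volume {x | fd x ≠ f₀ x} with hNdef
  have hNmeas : MeasurableSet N := measurableSet_toMeasurable _ _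
  have hN0 : volume N = 0 := by
    rw [hNdef, measure_toMeasurable]; exact hae
  have hNsub : ∀ x : ℝ × ℝ, x ∉ N → fd x = f₀ x := by
    intro x hx
    by_contra h
    exact hx (subset_toMeasurable _ _ h)
  have hTmeas : MeasurableSet polarCoord.target := polarCoord.open_target.measurableSet
  have hrest : volume.restrict polarCoord.target = μ1.prod μ2 := by
    rw [polarCoord_target, hμ1, hμ2, Measure.volume_eq_prod, Measure.prod_restrict]
  -- the measurable "section" map
  have hqmeas : Measurable (fun z : ℝ × ℝ => (z.1 * Real.cos z.2, z.1 * Real.sin z.2)) := by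
    fun_prop
  -- membership a.e.
  have hmem : ∀ᵐ p ∂(μ1.prod μ2), 0 < p.1 := by
    rw [← hrest]
    filter_upwards [ae_restrict_mem hTmeas] with p hp
    rw [polarCoord_target] at hp
    exact hp.1
  -- the bad set is null in polar coordinates
  have hnull : ∀ᵐ p ∂(μ1.prod μ2), (p.1 * Real.cos p.2, p.1 * Real.sin p.2) ∉ N := by
    have h0 : ∫⁻ p in polarCoord.target,
        ENNReal.ofReal p.1 *
          (N.indicator (1 : (ℝ × ℝ) → ENNReal) (p.1 * Real.cos p.2, p.1 * Real.sin p.2)) = 0 := by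
      have := my_lintegral_polar (N.indicator (1 : (ℝ × ℝ) → ENNReal))
      simp only [polarCoord_symm_apply] at this
      rw [this, lintegral_indicator_one hNmeas, hN0]
    have hfm : Measurable (fun p : ℝ × ℝ => ENNReal.ofReal p.1 *
        (N.indicator (1 : (ℝ × ℝ) → ENNReal) (p.1 * Real.cos p.2, p.1 * Real.sin p.2))) := by
      exact (ENNReal.measurable_ofReal.comp measurable_fst).mul
        ((measurable_const.indicator hNmeas).comp hqmeas)
    have hz := (lintegral_eq_zero_iff hfm).mp h0
    rw [hrest] at hz
    filter_upwards [hz, hmem] with p hp hp1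
    intro hmemN
    simp only [Pi.zero_apply, Set.indicator_of_mem hmemN] at hp
    have : ENNReal.ofReal p.1 ≠ 0 := (ENNReal.ofReal_pos.mpr hp1).ne'
    simp [this] at hp
  -- sectionwise goodness
  have hsec : ∀ᵐ θ ∂μ2, ∀ᵐ r ∂μ1,
      fd (r * Real.cos θ, r * Real.sin θ) = f₀ (r * Real.cos θ, r * Real.sin θ) := by
    have hswap : ∀ᵐ z ∂(μ2.prod μ1), (z.2 * Real.cos z.1, z.2 * Real.sin z.1) ∉ N := by
      have : μ2.prod μ1 = Measure.map Prod.swap (μ1.prod μ2) := (Measure.prod_swap).symm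
      rw [this, ae_map_iff measurable_swap.aemeasurable]
      · exact hnull
      · exact (hqmeas.comp measurable_swap) hNmeas.compl
    filter_upwards [Measure.ae_ae_of_ae_prod hswap] with θ hθ
    filter_upwards [hθ] with r hr
    exact hNsub _ hr
  -- measurable inner integral with representative f₀
  have hK₀m : Measurable (fun p : ℝ × ℝ => ∫⁻ r in Ioi p.1,
      ENNReal.ofReal (f₀ (r * Real.cos p.2, r * Real.sin p.2) * r)) := by
    have h2 : Measurable ({z : (ℝ × ℝ) × ℝ | z.1.1 < z.2}.indicator
        (fun z => ENNReal.ofReal (f₀ (z.2 * Real.cos z.1.2, z.2 * Real.sin z.1.2) * z.2))) := by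
      refine Measurable.indicator ?_ (measurableSet_lt (measurable_fst.fst) measurable_snd)
      refine ENNReal.measurable_ofReal.comp ?_
      refine Measurable.mul ?_ measurable_snd
      exact hf₀m.comp (by fun_prop)
    have h3 := Measurable.lintegral_prod_right' (ν := volume) (f := {z : (ℝ × ℝ) × ℝ | z.1.1 < z.2}.indicator
        (fun z => ENNReal.ofReal (f₀ (z.2 * Real.cos z.1.2, z.2 * Real.sin z.1.2) * z.2))) h2
    have h1 : (fun p : ℝ × ℝ => ∫⁻ r in Ioi p.1,
        ENNReal.ofReal (f₀ (r * Real.cos p.2, r * Real.sin p.2) * r))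
        = fun p : ℝ × ℝ => ∫⁻ r, ({z : (ℝ × ℝ) × ℝ | z.1.1 < z.2}.indicator
          (fun z => ENNReal.ofReal (f₀ (z.2 * Real.cos z.1.2, z.2 * Real.sin z.1.2) * z.2)) (p, r)) := by
      funext p
      rw [← lintegral_indicator measurableSet_Ioi]
      refine lintegral_congr fun r => ?_
      by_cases h : p.1 < r
      · simp [Set.indicator_of_mem, h, Set.mem_Ioi, Set.mem_setOf_eq]
      · simp [Set.indicator_of_notMem, h, Set.mem_Ioi, Set.mem_setOf_eq]
    rw [h1]
    exact h3
  have haameas : Measurable fun p : ℝ × ℝ => ENNReal.ofReal (aa n p.2 / 2) :=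
    ENNReal.measurable_ofReal.comp (((aa_continuous n).measurable.comp measurable_snd).div_const 2)
  set F : ℝ × ℝ → ENNReal := fun p => ENNReal.ofReal (aa n p.2 / 2) *
      ∫⁻ r in Ioi p.1, ENNReal.ofReal (fd (r * Real.cos p.2, r * Real.sin p.2) * r) with hFdef
  set H : ℝ × ℝ → ENNReal := fun p => ENNReal.ofReal (aa n p.2 / 2) *
      (ENNReal.ofReal (fd (p.1 * Real.cos p.2, p.1 * Real.sin p.2) * p.1) * ENNReal.ofReal p.1)
      with hHdef
  have hgood : ∀ᵐ p ∂(μ1.prod μ2), ∀ᵐ r ∂μ1,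
      fd (r * Real.cos p.2, r * Real.sin p.2) = f₀ (r * Real.cos p.2, r * Real.sin p.2) :=
    Measure.quasiMeasurePreserving_snd.tendsto_ae.eventually hsec
  have hFaem : AEMeasurable F (μ1.prod μ2) := by
    refine ⟨fun p => ENNReal.ofReal (aa n p.2 / 2) * ∫⁻ r in Ioi p.1,
        ENNReal.ofReal (f₀ (r * Real.cos p.2, r * Real.sin p.2) * r),
      haameas.mul hK₀m, ?_⟩
    filter_upwards [hgood, hmem] with p hp hp1
    have hres : ∀ᵐ r ∂(volume.restrict (Ioi p.1)),
        fd (r * Real.cos p.2, r * Real.sin p.2) = f₀ (r * Real.cos p.2, r * Real.sin p.2) :=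
      hp.filter_mono (ae_mono (Measure.restrict_mono (Ioi_subset_Ioi hp1.le) le_rfl))
    simp only [hFdef]
    congr 1
    apply lintegral_congr_ae
    filter_upwards [hres] with r hr
    rw [hr]
  have hHaem : AEMeasurable H (μ1.prod μ2) := by
    refine ⟨fun p => ENNReal.ofReal (aa n p.2 / 2) *
        (ENNReal.ofReal (f₀ (p.1 * Real.cos p.2, p.1 * Real.sin p.2) * p.1) * ENNReal.ofReal p.1),
      haameas.mul ((ENNReal.measurable_ofReal.comp
        ((hf₀m.comp hqmeas).mul measurable_fst)).mul
        (ENNReal.measurable_ofReal.comp measurable_fst)), ?_⟩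
    filter_upwards [hnull] with p hp
    simp only [hHdef, hNsub _ hp]
  -- the main chain
  calc
    ∫⁻ y : ℝ × ℝ, ENNReal.ofReal
        ((y.1 * n.1 + y.2 * n.2 + |y.1 * n.1 + y.2 * n.2|) / (2 * (y.1 ^ 2 + y.2 ^ 2))) *
        ∫⁻ r in Ioi (Real.sqrt (y.1 ^ 2 + y.2 ^ 2)),
          ENNReal.ofReal (fd ((r / Real.sqrt (y.1 ^ 2 + y.2 ^ 2)) • y) * r)
      = ∫⁻ p in polarCoord.target, ENNReal.ofReal p.1 * ((fun y : ℝ × ℝ => ENNReal.ofReal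
          ((y.1 * n.1 + y.2 * n.2 + |y.1 * n.1 + y.2 * n.2|) / (2 * (y.1 ^ 2 + y.2 ^ 2))) *
          ∫⁻ r in Ioi (Real.sqrt (y.1 ^ 2 + y.2 ^ 2)),
            ENNReal.ofReal (fd ((r / Real.sqrt (y.1 ^ 2 + y.2 ^ 2)) • y) * r))
          (polarCoord.symm p)) := (my_lintegral_polar _).symm
    _ = ∫⁻ p, F p ∂(μ1.prod μ2) := by
      rw [← hrest]
      apply setLIntegral_congr_fun hTmeas
      intro p hp
      rw [polarCoord_target] at hp
      have hp1 : 0 < p.1 := hp.1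
      simp only [polarCoord_symm_apply]
      have hsum : (p.1 * Real.cos p.2) ^ 2 + (p.1 * Real.sin p.2) ^ 2 = p.1 ^ 2 := by
        have h := Real.sin_sq_add_cos_sq p.2
        nlinarith [h]
      have hsqrt : Real.sqrt ((p.1 * Real.cos p.2) ^ 2 + (p.1 * Real.sin p.2) ^ 2) = p.1 := by
        rw [hsum, Real.sqrt_sq hp1.le]
      have habs : |p.1 * Real.cos p.2 * n.1 + p.1 * Real.sin p.2 * n.2|
          = p.1 * |Real.cos p.2 * n.1 + Real.sin p.2 * n.2| := by
        rw [show p.1 * Real.cos p.2 * n.1 + p.1 * Real.sin p.2 * n.2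
            = p.1 * (Real.cos p.2 * n.1 + Real.sin p.2 * n.2) by ring, abs_mul, abs_of_pos hp1]
      have hcoef : (p.1 * Real.cos p.2 * n.1 + p.1 * Real.sin p.2 * n.2 +
            |p.1 * Real.cos p.2 * n.1 + p.1 * Real.sin p.2 * n.2|) /
            (2 * ((p.1 * Real.cos p.2) ^ 2 + (p.1 * Real.sin p.2) ^ 2))
          = aa n p.2 / (2 * p.1) := by
        rw [hsum, habs]
        unfold aa
        field_simp
      have hsmul : ∀ r : ℝ, (r / p.1) • ((p.1 * Real.cos p.2, p.1 * Real.sin p.2) : ℝ × ℝ)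
          = (r * Real.cos p.2, r * Real.sin p.2) := by
        intro r
        show ((r / p.1) * (p.1 * Real.cos p.2), (r / p.1) * (p.1 * Real.sin p.2)) = _
        rw [Prod.mk.injEq]
        constructor <;> field_simp
      rw [hcoef, hsqrt]
      simp only [hsmul]
      rw [hFdef]
      rw [← mul_assoc, ← ENNReal.ofReal_mul hp1.le,
        show p.1 * (aa n p.2 / (2 * p.1)) = aa n p.2 / 2 by field_simp]
    _ = ∫⁻ θ, ∫⁻ ρ, F (ρ, θ) ∂μ1 ∂μ2 := lintegral_prod_symm F hFaem
    _ = ∫⁻ θ, ∫⁻ ρ, H (ρ, θ) ∂μ1 ∂μ2 := by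
      apply lintegral_congr_ae
      filter_upwards [hsec] with θ hθ
      have hGθ : AEMeasurable (fun r => ENNReal.ofReal (fd (r * Real.cos θ, r * Real.sin θ) * r))
          μ1 := by
        refine ⟨fun r => ENNReal.ofReal (f₀ (r * Real.cos θ, r * Real.sin θ) * r),
          ENNReal.measurable_ofReal.comp ((hf₀m.comp (by fun_prop)).mul measurable_id), ?_⟩
        filter_upwards [hθ] with r hr
        rw [hr]
      simp only [hFdef, hHdef]
      rw [lintegral_const_mul' _ _ ENNReal.ofReal_ne_top, hμ1,
        my_swap (fun r => ENNReal.ofReal (fd (r * Real.cos θ, r * Real.sin θ) * r))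
          (by rw [← hμ1]; exact hGθ),
        ← lintegral_const_mul' _ _ (ENNReal.ofReal_ne_top (r := aa n θ / 2))]
    _ = ∫⁻ p, H p ∂(μ1.prod μ2) := (lintegral_prod_symm H hHaem).symm
    _ = ∫⁻ p in polarCoord.target, ENNReal.ofReal p.1 * ((fun x : ℝ × ℝ => ENNReal.ofReal
          ((x.1 * n.1 + x.2 * n.2 + |x.1 * n.1 + x.2 * n.2|) / 2 * fd x)) (polarCoord.symm p)) := by
      rw [← hrest]
      apply setLIntegral_congr_fun hTmeas
      intro p hp
      rw [polarCoord_target] at hp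
      have hp1 : 0 < p.1 := hp.1
      simp only [polarCoord_symm_apply]
      have habs : |p.1 * Real.cos p.2 * n.1 + p.1 * Real.sin p.2 * n.2|
          = p.1 * |Real.cos p.2 * n.1 + Real.sin p.2 * n.2| := by
        rw [show p.1 * Real.cos p.2 * n.1 + p.1 * Real.sin p.2 * n.2
            = p.1 * (Real.cos p.2 * n.1 + Real.sin p.2 * n.2) by ring, abs_mul, abs_of_pos hp1]
      simp only [hHdef]
      have hfd0 : 0 ≤ fd (p.1 * Real.cos p.2, p.1 * Real.sin p.2) := hnn _
      have haa2 : (0:ℝ) ≤ aa n p.2 / 2 := by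
        have := aa_nonneg n p.2; linarith
      rw [← ENNReal.ofReal_mul (mul_nonneg hfd0 hp1.le), ← ENNReal.ofReal_mul haa2,
        ← ENNReal.ofReal_mul hp1.le]
      congr 1
      rw [habs]
      unfold aa
      ring
    _ = ∫⁻ x : ℝ × ℝ, ENNReal.ofReal
          ((x.1 * n.1 + x.2 * n.2 + |x.1 * n.1 + x.2 * n.2|) / 2 * fd x) := by
      exact my_lintegral_polar (fun x : ℝ × ℝ => ENNReal.ofReal
        ((x.1 * n.1 + x.2 * n.2 + |x.1 * n.1 + x.2 * n.2|) / 2 * fd x))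

/-- Bound on the flux density `G(x)·n` of the total dispersal field, without any
symmetry assumption.  For a seed displacement `y` we write `|y| = √(y₁²+y₂²)`
and `f_d(r, θ_y) = fd ((r/|y|) • y)` (the density at radius `r` in the
direction of `y`).  For any measurable set `Hhat` and unit vector `n`,
`∬_{y∈Hhat} (y·n/|y|²) (∫_{|y|}^∞ f_d(r,θ_y) r dr) dA ≤ (1/2) n·E[X_d] + μ/2`. -/
theorem G_dot_n_le_asymmetric
    (fd : ℝ × ℝ → ℝ) (hnn : ∀ x, 0 ≤ fd x) (hint : Integrable fd)
    (hprob : ∫ x, fd x = 1)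
    (μ : ℝ) (hμ : μ = ∫ x, Real.sqrt (x.1 ^ 2 + x.2 ^ 2) * fd x)
    (hμint : Integrable fun x : ℝ × ℝ => Real.sqrt (x.1 ^ 2 + x.2 ^ 2) * fd x)
    (hm1 : Integrable fun x : ℝ × ℝ => x.1 * fd x)
    (hm2 : Integrable fun x : ℝ × ℝ => x.2 * fd x)
    (n : ℝ × ℝ) (hn : n.1 ^ 2 + n.2 ^ 2 = 1)
    (Hhat : Set (ℝ × ℝ)) (hHhat : MeasurableSet Hhat) :
    (∫ y in Hhat, ((y.1 * n.1 + y.2 * n.2) / (y.1 ^ 2 + y.2 ^ 2)) *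
        ∫ r in Set.Ioi (Real.sqrt (y.1 ^ 2 + y.2 ^ 2)),
          fd ((r / Real.sqrt (y.1 ^ 2 + y.2 ^ 2)) • y) * r)
      ≤ (1 / 2) * ((∫ x, x.1 * fd x) * n.1 + (∫ x, x.2 * fd x) * n.2) + μ / 2 := by
  -- Cauchy-Schwarz for the unit vector n
  have hcs : ∀ x : ℝ × ℝ, |x.1 * n.1 + x.2 * n.2| ≤ Real.sqrt (x.1 ^ 2 + x.2 ^ 2) := by
    intro x
    have h1 : (x.1 * n.1 + x.2 * n.2) ^ 2 ≤ x.1 ^ 2 + x.2 ^ 2 := by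
      nlinarith [sq_nonneg (x.1 * n.2 - x.2 * n.1)]
    calc |x.1 * n.1 + x.2 * n.2| = Real.sqrt ((x.1 * n.1 + x.2 * n.2) ^ 2) :=
          (Real.sqrt_sq_eq_abs _).symm
      _ ≤ Real.sqrt (x.1 ^ 2 + x.2 ^ 2) := Real.sqrt_le_sqrt h1
  have habsm : AEStronglyMeasurable (fun x : ℝ × ℝ => |x.1 * n.1 + x.2 * n.2| * fd x) volume :=
    (Continuous.aestronglyMeasurable (by fun_prop)).mul hint.aestronglyMeasurable
  have hInt_abs : Integrable (fun x : ℝ × ℝ => |x.1 * n.1 + x.2 * n.2| * fd x) := by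
    refine hμint.mono habsm (Filter.Eventually.of_forall fun x => ?_)
    rw [Real.norm_eq_abs, Real.norm_eq_abs,
      abs_of_nonneg (mul_nonneg (abs_nonneg _) (hnn x)),
      abs_of_nonneg (mul_nonneg (Real.sqrt_nonneg _) (hnn x))]
    exact mul_le_mul_of_nonneg_right (hcs x) (hnn x)
  have hfun : (fun x : ℝ × ℝ => (x.1 * n.1 + x.2 * n.2) * fd x)
      = fun x => x.1 * fd x * n.1 + x.2 * fd x * n.2 := by funext x; ring
  have hInt_dot : Integrable (fun x : ℝ × ℝ => (x.1 * n.1 + x.2 * n.2) * fd x) := by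
    rw [hfun]; exact (hm1.mul_const _).add (hm2.mul_const _)
  have hEdot : ∫ x, (x.1 * n.1 + x.2 * n.2) * fd x
      = (∫ x, x.1 * fd x) * n.1 + (∫ x, x.2 * fd x) * n.2 := by
    rw [hfun, integral_add (hm1.mul_const _) (hm2.mul_const _), integral_mul_const,
      integral_mul_const]
  have habs_le : ∫ x, |x.1 * n.1 + x.2 * n.2| * fd x ≤ μ := by
    rw [hμ]
    exact integral_mono hInt_abs hμint fun x => mul_le_mul_of_nonneg_right (hcs x) (hnn x)
  have hdot_lb : -μ ≤ ∫ x, (x.1 * n.1 + x.2 * n.2) * fd x := by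
    have h1 : |∫ x, (x.1 * n.1 + x.2 * n.2) * fd x|
        ≤ ∫ x, |(x.1 * n.1 + x.2 * n.2) * fd x| := by
      have := norm_integral_le_integral_norm (μ := volume)
        (fun x : ℝ × ℝ => (x.1 * n.1 + x.2 * n.2) * fd x)
      simpa only [Real.norm_eq_abs] using this
    have h2 : ∫ x, |(x.1 * n.1 + x.2 * n.2) * fd x| = ∫ x, |x.1 * n.1 + x.2 * n.2| * fd x := by
      congr 1; funext x; rw [abs_mul, abs_of_nonneg (hnn x)]
    have h3 := neg_abs_le (∫ x, (x.1 * n.1 + x.2 * n.2) * fd x)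
    linarith
  have hRHS0 : 0 ≤ (1 / 2) * ((∫ x, x.1 * fd x) * n.1 + (∫ x, x.2 * fd x) * n.2) + μ / 2 := by
    rw [← hEdot]; linarith
  -- w x = (x·n + |x·n|)/2
  have hwfun : (fun x : ℝ × ℝ => (x.1 * n.1 + x.2 * n.2 + |x.1 * n.1 + x.2 * n.2|) / 2 * fd x)
      = fun x => (1 / 2) * ((x.1 * n.1 + x.2 * n.2) * fd x)
        + (1 / 2) * (|x.1 * n.1 + x.2 * n.2| * fd x) := by funext x; ring
  have hw_int : Integrable
      (fun x : ℝ × ℝ => (x.1 * n.1 + x.2 * n.2 + |x.1 * n.1 + x.2 * n.2|) / 2 * fd x) := by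
    rw [hwfun]; exact (hInt_dot.const_mul _).add (hInt_abs.const_mul _)
  have hw_nonneg : ∀ x : ℝ × ℝ,
      0 ≤ (x.1 * n.1 + x.2 * n.2 + |x.1 * n.1 + x.2 * n.2|) / 2 * fd x := by
    intro x
    have := neg_abs_le (x.1 * n.1 + x.2 * n.2)
    exact mul_nonneg (by linarith) (hnn x)
  have hw_val : ∫ x, (x.1 * n.1 + x.2 * n.2 + |x.1 * n.1 + x.2 * n.2|) / 2 * fd x
      ≤ (1 / 2) * ((∫ x, x.1 * fd x) * n.1 + (∫ x, x.2 * fd x) * n.2) + μ / 2 := by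
    rw [hwfun, integral_add (hInt_dot.const_mul _) (hInt_abs.const_mul _),
      integral_const_mul, integral_const_mul, hEdot]
    linarith
  -- nonnegativity of the inner integral
  have hF0 : ∀ y : ℝ × ℝ, 0 ≤ ∫ r in Set.Ioi (Real.sqrt (y.1 ^ 2 + y.2 ^ 2)),
      fd ((r / Real.sqrt (y.1 ^ 2 + y.2 ^ 2)) • y) * r := by
    intro y
    apply setIntegral_nonneg measurableSet_Ioi
    intro r hr
    exact mul_nonneg (hnn _) (le_trans (Real.sqrt_nonneg _) (le_of_lt hr))
  -- pointwise bound
  have hpt : ∀ y : ℝ × ℝ, ENNReal.ofReal (((y.1 * n.1 + y.2 * n.2) / (y.1 ^ 2 + y.2 ^ 2)) *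
        ∫ r in Set.Ioi (Real.sqrt (y.1 ^ 2 + y.2 ^ 2)),
          fd ((r / Real.sqrt (y.1 ^ 2 + y.2 ^ 2)) • y) * r)
      ≤ ENNReal.ofReal
          ((y.1 * n.1 + y.2 * n.2 + |y.1 * n.1 + y.2 * n.2|) / (2 * (y.1 ^ 2 + y.2 ^ 2))) *
        ∫⁻ r in Set.Ioi (Real.sqrt (y.1 ^ 2 + y.2 ^ 2)),
          ENNReal.ofReal (fd ((r / Real.sqrt (y.1 ^ 2 + y.2 ^ 2)) • y) * r) := by
    intro y
    have hs : (0:ℝ) ≤ y.1 ^ 2 + y.2 ^ 2 := by positivity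
    have habs0 := neg_abs_le (y.1 * n.1 + y.2 * n.2)
    have habs1 := le_abs_self (y.1 * n.1 + y.2 * n.2)
    have hcoefnn : 0 ≤ (y.1 * n.1 + y.2 * n.2 + |y.1 * n.1 + y.2 * n.2|) /
        (2 * (y.1 ^ 2 + y.2 ^ 2)) := div_nonneg (by linarith) (by linarith)
    have hcoef : (y.1 * n.1 + y.2 * n.2) / (y.1 ^ 2 + y.2 ^ 2)
        ≤ (y.1 * n.1 + y.2 * n.2 + |y.1 * n.1 + y.2 * n.2|) / (2 * (y.1 ^ 2 + y.2 ^ 2)) := by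
      rcases eq_or_lt_of_le hs with h | h
      · rw [← h]; simp
      · rw [div_le_div_iff₀ h (by linarith)]
        nlinarith
    calc ENNReal.ofReal (((y.1 * n.1 + y.2 * n.2) / (y.1 ^ 2 + y.2 ^ 2)) *
          ∫ r in Set.Ioi (Real.sqrt (y.1 ^ 2 + y.2 ^ 2)),
            fd ((r / Real.sqrt (y.1 ^ 2 + y.2 ^ 2)) • y) * r)
        ≤ ENNReal.ofReal
            (((y.1 * n.1 + y.2 * n.2 + |y.1 * n.1 + y.2 * n.2|) / (2 * (y.1 ^ 2 + y.2 ^ 2))) *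
            ∫ r in Set.Ioi (Real.sqrt (y.1 ^ 2 + y.2 ^ 2)),
              fd ((r / Real.sqrt (y.1 ^ 2 + y.2 ^ 2)) • y) * r) :=
          ENNReal.ofReal_le_ofReal (mul_le_mul_of_nonneg_right hcoef (hF0 y))
      _ = ENNReal.ofReal
            ((y.1 * n.1 + y.2 * n.2 + |y.1 * n.1 + y.2 * n.2|) / (2 * (y.1 ^ 2 + y.2 ^ 2))) *
            ENNReal.ofReal (∫ r in Set.Ioi (Real.sqrt (y.1 ^ 2 + y.2 ^ 2)),
              fd ((r / Real.sqrt (y.1 ^ 2 + y.2 ^ 2)) • y) * r) :=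
          ENNReal.ofReal_mul hcoefnn
      _ ≤ ENNReal.ofReal
            ((y.1 * n.1 + y.2 * n.2 + |y.1 * n.1 + y.2 * n.2|) / (2 * (y.1 ^ 2 + y.2 ^ 2))) *
            ∫⁻ r in Set.Ioi (Real.sqrt (y.1 ^ 2 + y.2 ^ 2)),
              ENNReal.ofReal (fd ((r / Real.sqrt (y.1 ^ 2 + y.2 ^ 2)) • y) * r) := by
        apply mul_le_mul_right
        have hnnae : 0 ≤ᵐ[volume.restrict (Set.Ioi (Real.sqrt (y.1 ^ 2 + y.2 ^ 2)))]
            fun r => fd ((r / Real.sqrt (y.1 ^ 2 + y.2 ^ 2)) • y) * r := by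
          refine (ae_restrict_iff' measurableSet_Ioi).2 (Filter.Eventually.of_forall ?_)
          intro r hr
          exact mul_nonneg (hnn _) (le_trans (Real.sqrt_nonneg _) (le_of_lt hr))
        by_cases hi : IntegrableOn
            (fun r => fd ((r / Real.sqrt (y.1 ^ 2 + y.2 ^ 2)) • y) * r)
            (Set.Ioi (Real.sqrt (y.1 ^ 2 + y.2 ^ 2))) volume
        · rw [ofReal_integral_eq_lintegral_ofReal hi hnnae]
        · rw [integral_undef hi]; simp
  -- main case split
  by_cases hig : IntegrableOn (fun y : ℝ × ℝ =>
      ((y.1 * n.1 + y.2 * n.2) / (y.1 ^ 2 + y.2 ^ 2)) *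
        ∫ r in Set.Ioi (Real.sqrt (y.1 ^ 2 + y.2 ^ 2)),
          fd ((r / Real.sqrt (y.1 ^ 2 + y.2 ^ 2)) • y) * r) Hhat volume
  · have key : ∫⁻ y : ℝ × ℝ, ENNReal.ofReal (((y.1 * n.1 + y.2 * n.2) / (y.1 ^ 2 + y.2 ^ 2)) *
          ∫ r in Set.Ioi (Real.sqrt (y.1 ^ 2 + y.2 ^ 2)),
            fd ((r / Real.sqrt (y.1 ^ 2 + y.2 ^ 2)) • y) * r)
        ≤ ENNReal.ofReal (∫ x, (x.1 * n.1 + x.2 * n.2 + |x.1 * n.1 + x.2 * n.2|) / 2 * fd x) := by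
      calc ∫⁻ y : ℝ × ℝ, ENNReal.ofReal (((y.1 * n.1 + y.2 * n.2) / (y.1 ^ 2 + y.2 ^ 2)) *
            ∫ r in Set.Ioi (Real.sqrt (y.1 ^ 2 + y.2 ^ 2)),
              fd ((r / Real.sqrt (y.1 ^ 2 + y.2 ^ 2)) • y) * r)
          ≤ ∫⁻ y : ℝ × ℝ, ENNReal.ofReal
              ((y.1 * n.1 + y.2 * n.2 + |y.1 * n.1 + y.2 * n.2|) / (2 * (y.1 ^ 2 + y.2 ^ 2))) *
              ∫⁻ r in Set.Ioi (Real.sqrt (y.1 ^ 2 + y.2 ^ 2)),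
                ENNReal.ofReal (fd ((r / Real.sqrt (y.1 ^ 2 + y.2 ^ 2)) • y) * r) :=
            lintegral_mono hpt
        _ = ∫⁻ x : ℝ × ℝ, ENNReal.ofReal
              ((x.1 * n.1 + x.2 * n.2 + |x.1 * n.1 + x.2 * n.2|) / 2 * fd x) :=
            polar_main fd hnn hint n
        _ = ENNReal.ofReal
              (∫ x, (x.1 * n.1 + x.2 * n.2 + |x.1 * n.1 + x.2 * n.2|) / 2 * fd x) :=
            (ofReal_integral_eq_lintegral_ofReal hw_int
              (Filter.Eventually.of_forall hw_nonneg)).symm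
    have h1 : (∫ y in Hhat, ((y.1 * n.1 + y.2 * n.2) / (y.1 ^ 2 + y.2 ^ 2)) *
          ∫ r in Set.Ioi (Real.sqrt (y.1 ^ 2 + y.2 ^ 2)),
            fd ((r / Real.sqrt (y.1 ^ 2 + y.2 ^ 2)) • y) * r)
        ≤ (∫⁻ y in Hhat, ENNReal.ofReal (((y.1 * n.1 + y.2 * n.2) / (y.1 ^ 2 + y.2 ^ 2)) *
            ∫ r in Set.Ioi (Real.sqrt (y.1 ^ 2 + y.2 ^ 2)),
              fd ((r / Real.sqrt (y.1 ^ 2 + y.2 ^ 2)) • y) * r)).toReal := by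
      rw [integral_eq_lintegral_pos_part_sub_lintegral_neg_part hig]
      have h0 : (0:ℝ) ≤ (∫⁻ y in Hhat, ENNReal.ofReal
          (-(((y.1 * n.1 + y.2 * n.2) / (y.1 ^ 2 + y.2 ^ 2)) *
            ∫ r in Set.Ioi (Real.sqrt (y.1 ^ 2 + y.2 ^ 2)),
              fd ((r / Real.sqrt (y.1 ^ 2 + y.2 ^ 2)) • y) * r))).toReal :=
        ENNReal.toReal_nonneg
      linarith
    have h2 : (∫⁻ y in Hhat, ENNReal.ofReal (((y.1 * n.1 + y.2 * n.2) / (y.1 ^ 2 + y.2 ^ 2)) *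
          ∫ r in Set.Ioi (Real.sqrt (y.1 ^ 2 + y.2 ^ 2)),
            fd ((r / Real.sqrt (y.1 ^ 2 + y.2 ^ 2)) • y) * r))
        ≤ ENNReal.ofReal
            (∫ x, (x.1 * n.1 + x.2 * n.2 + |x.1 * n.1 + x.2 * n.2|) / 2 * fd x) :=
      le_trans (setLIntegral_le_lintegral _ _) key
    have h3 := ENNReal.toReal_mono ENNReal.ofReal_ne_top h2
    rw [ENNReal.toReal_ofReal (integral_nonneg hw_nonneg)] at h3
    linarith
  · rw [integral_undef hig]
    exact hRHS0
end

section
/- Let f_d be a rotationally symmetric probability density on ℝ², i.e. f_d(x) = g(|x|) for some function g, with finite mean dispersal distance μ = ∬ |x| f_d dA = 2π ∫_0^∞ g(r) r² dr. Then for every unit vector n and every measurable set Ĥ ⊂ ℝ², ∬_{y ∈ Ĥ} (y·n / |y|²) (∫_{|y|}^∞ g(r) r dr) dA ≤ μ/π. -/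
open MeasureTheory Real Set
open scoped ENNReal

lemma cospos_integral : ∫ θ in (-Real.pi)..Real.pi, max (Real.cos θ) 0 = 2 := by
  have hcont : Continuous fun θ : ℝ => max (Real.cos θ) 0 :=
    Real.continuous_cos.max continuous_const
  have hpi : (0:ℝ) < Real.pi := Real.pi_pos
  have h1 : ∫ θ in (-Real.pi)..(-(Real.pi/2)), max (Real.cos θ) 0 = 0 := by
    rw [intervalIntegral.integral_congr (g := fun _ => (0:ℝ))]
    · simp
    · intro x hx
      rw [Set.uIcc_of_le (by linarith)] at hx
      have hx1 : Real.pi / 2 ≤ -x := by have := hx.2; linarith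
      have hx2 : -x ≤ Real.pi + Real.pi / 2 := by have := hx.1; linarith
      have : Real.cos x ≤ 0 := by
        rw [← Real.cos_neg]
        exact Real.cos_nonpos_of_pi_div_two_le_of_le hx1 hx2
      simp [max_eq_right this]
  have h2 : ∫ θ in (-(Real.pi/2))..(Real.pi/2), max (Real.cos θ) 0 = 2 := by
    rw [intervalIntegral.integral_congr (g := fun x => Real.cos x)]
    · rw [integral_cos]; norm_num
    · intro x hx
      rw [Set.uIcc_of_le (by linarith)] at hx
      exact max_eq_left (Real.cos_nonneg_of_mem_Icc hx)
  have h3 : ∫ θ in (Real.pi/2)..Real.pi, max (Real.cos θ) 0 = 0 := by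
    rw [intervalIntegral.integral_congr (g := fun _ => (0:ℝ))]
    · simp
    · intro x hx
      rw [Set.uIcc_of_le (by linarith)] at hx
      have : Real.cos x ≤ 0 :=
        Real.cos_nonpos_of_pi_div_two_le_of_le hx.1 (by linarith [hx.2])
      simp [max_eq_right this]
  have i1 : IntervalIntegrable (fun θ : ℝ => max (Real.cos θ) 0) volume (-Real.pi) (-(Real.pi/2)) :=
    hcont.intervalIntegrable _ _
  have i2 : IntervalIntegrable (fun θ : ℝ => max (Real.cos θ) 0) volume (-(Real.pi/2)) (Real.pi/2) :=
    hcont.intervalIntegrable _ _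
  have i3 : IntervalIntegrable (fun θ : ℝ => max (Real.cos θ) 0) volume (Real.pi/2) Real.pi :=
    hcont.intervalIntegrable _ _
  have := intervalIntegral.integral_add_adjacent_intervals (a := -Real.pi)
    (b := -(Real.pi/2)) (c := Real.pi) i1 (i2.trans i3)
  rw [← this, ← intervalIntegral.integral_add_adjacent_intervals i2 i3, h1, h2, h3]
  norm_num

lemma angular (n : ℝ × ℝ) (hn : n.1 ^ 2 + n.2 ^ 2 = 1) :
    ∫ θ in Set.Ioo (-Real.pi) Real.pi,
      max (n.1 * Real.cos θ + n.2 * Real.sin θ) 0 = 2 := by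
  set z : ℂ := ⟨n.1, n.2⟩ with hz
  have habs : ‖z‖ = 1 := by
    rw [Complex.norm_def, Complex.normSq_mk]
    rw [show n.1 * n.1 + n.2 * n.2 = 1 by nlinarith]
    exact Real.sqrt_one
  have hz0 : z ≠ 0 := by
    intro h; rw [h] at habs; simp at habs
  have hc : Real.cos z.arg = n.1 := by
    rw [Complex.cos_arg hz0, habs]; simp [hz]
  have hs : Real.sin z.arg = n.2 := by
    rw [Complex.sin_arg, habs]; simp [hz]
  set φ := z.arg
  have hpt : ∀ θ : ℝ, n.1 * Real.cos θ + n.2 * Real.sin θ = Real.cos (θ - φ) := by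
    intro θ
    rw [Real.cos_sub, ← hc, ← hs]; ring
  have hper : Function.Periodic (fun θ : ℝ => max (Real.cos θ) 0) (2 * Real.pi) := by
    intro x; simp [Real.cos_add_two_pi]
  calc ∫ θ in Set.Ioo (-Real.pi) Real.pi, max (n.1 * Real.cos θ + n.2 * Real.sin θ) 0
      = ∫ θ in Set.Ioc (-Real.pi) Real.pi, max (Real.cos (θ - φ)) 0 := by
        rw [← integral_Ioc_eq_integral_Ioo]
        exact setIntegral_congr_fun measurableSet_Ioc fun x _ => by rw [hpt]
    _ = ∫ θ in (-Real.pi)..Real.pi, max (Real.cos (θ - φ)) 0 := by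
        rw [intervalIntegral.integral_of_le (by linarith [Real.pi_pos])]
    _ = ∫ θ in (-Real.pi - φ)..(Real.pi - φ), max (Real.cos θ) 0 := by
        rw [← intervalIntegral.integral_comp_sub_right (fun θ => max (Real.cos θ) 0) φ]
    _ = ∫ θ in (-Real.pi)..Real.pi, max (Real.cos θ) 0 := by
        have key := hper.intervalIntegral_add_eq (-Real.pi - φ) (-Real.pi)
        rw [show -Real.pi - φ + 2*Real.pi = Real.pi - φ by ring,
            show -Real.pi + 2*Real.pi = Real.pi by ring] at key
        exact key
    _ = 2 := cospos_integral

lemma radial_swap (k : ℝ → ℝ) (hk : Measurable k) :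
    ∫⁻ s in Set.Ioi (0:ℝ), ∫⁻ r in Set.Ioi s, ENNReal.ofReal (k r) =
      ∫⁻ r in Set.Ioi (0:ℝ), ENNReal.ofReal (k r) * ENNReal.ofReal r := by
  have hmeas : Measurable (Function.uncurry fun s r : ℝ =>
      (Set.Ioi s).indicator (fun x => ENNReal.ofReal (k x)) r) := by
    have : (Function.uncurry fun s r : ℝ =>
        (Set.Ioi s).indicator (fun x => ENNReal.ofReal (k x)) r) =
        Set.indicator {q : ℝ × ℝ | q.1 < q.2} (fun q => ENNReal.ofReal (k q.2)) := by
      ext p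
      by_cases h : p.1 < p.2 <;>
        simp [Function.uncurry, Set.indicator, h, Set.mem_Ioi]
    rw [this]
    exact ((ENNReal.measurable_ofReal.comp (hk.comp measurable_snd)).indicator
      (measurableSet_lt measurable_fst measurable_snd))
  have hswap := lintegral_lintegral_swap (μ := volume.restrict (Set.Ioi (0:ℝ)))
    (ν := volume) hmeas.aemeasurable
  calc ∫⁻ s in Set.Ioi (0:ℝ), ∫⁻ r in Set.Ioi s, ENNReal.ofReal (k r)
      = ∫⁻ s in Set.Ioi (0:ℝ), ∫⁻ r,
          (Set.Ioi s).indicator (fun x => ENNReal.ofReal (k x)) r := by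
        exact lintegral_congr fun s => (lintegral_indicator measurableSet_Ioi _).symm
    _ = ∫⁻ r, ∫⁻ s in Set.Ioi (0:ℝ),
          (Set.Ioi s).indicator (fun x => ENNReal.ofReal (k x)) r := hswap
    _ = ∫⁻ r, ENNReal.ofReal (k r) * ENNReal.ofReal r := by
        refine lintegral_congr fun r => ?_
        have h1 : (fun s => (Set.Ioi s).indicator (fun x => ENNReal.ofReal (k x)) r) =
            fun s => (Set.Iio r).indicator (fun _ => ENNReal.ofReal (k r)) s := by
          ext s
          by_cases h : s < r <;> simp [Set.indicator, h, Set.mem_Ioi]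
        calc ∫⁻ s in Set.Ioi (0:ℝ), (Set.Ioi s).indicator (fun x => ENNReal.ofReal (k x)) r
            = ∫⁻ s in Set.Ioi (0:ℝ), (Set.Iio r).indicator
                (fun _ => ENNReal.ofReal (k r)) s := by rw [h1]
          _ = ∫⁻ _ in Set.Iio r, ENNReal.ofReal (k r) ∂(volume.restrict (Set.Ioi (0:ℝ))) :=
              lintegral_indicator measurableSet_Iio _
          _ = ENNReal.ofReal (k r) * (volume.restrict (Set.Ioi (0:ℝ))) (Set.Iio r) :=
              setLIntegral_const _ _
          _ = ENNReal.ofReal (k r) * ENNReal.ofReal r := by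
              rw [Measure.restrict_apply measurableSet_Iio,
                show Set.Iio r ∩ Set.Ioi (0:ℝ) = Set.Ioo 0 r from by
                  ext x; simp [Set.mem_Ioo, and_comm],
                Real.volume_Ioo, sub_zero]
    _ = ∫⁻ r in Set.Ioi (0:ℝ), ENNReal.ofReal (k r) * ENNReal.ofReal r := by
        have h2 : (fun r => ENNReal.ofReal (k r) * ENNReal.ofReal r) =
            fun r => (Set.Ioi (0:ℝ)).indicator
              (fun r => ENNReal.ofReal (k r) * ENNReal.ofReal r) r := by
          ext r
          by_cases h : 0 < r
          · simp [Set.indicator, h]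
          · simp [Set.indicator, h, ENNReal.ofReal_of_nonpos (le_of_not_gt h)]
        conv_lhs => rw [h2]
        exact lintegral_indicator measurableSet_Ioi _

lemma key_aux (g : ℝ → ℝ) (hg : ∀ r, 0 ≤ g r)
    (hint1 : IntegrableOn (fun r => g r * r) (Set.Ioi (0 : ℝ)))
    (hint2 : IntegrableOn (fun r => g r * r ^ 2) (Set.Ioi (0 : ℝ)))
    (n : ℝ × ℝ) (hn : n.1 ^ 2 + n.2 ^ 2 = 1) :
    Integrable (fun y : ℝ × ℝ => (max (y.1 * n.1 + y.2 * n.2) 0 / (y.1 ^ 2 + y.2 ^ 2)) *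
        ∫ r in Set.Ioi (Real.sqrt (y.1 ^ 2 + y.2 ^ 2)), g r * r) ∧
    (∫⁻ y : ℝ × ℝ, ENNReal.ofReal ((max (y.1 * n.1 + y.2 * n.2) 0 / (y.1 ^ 2 + y.2 ^ 2)) *
        ∫ r in Set.Ioi (Real.sqrt (y.1 ^ 2 + y.2 ^ 2)), g r * r)) =
      ENNReal.ofReal ((∫ r in Set.Ioi (0:ℝ), g r * r ^ 2) * 2) := by
  -- measurable representative of g r * r on (0, ∞)
  set k : ℝ → ℝ := fun r => g r * r with hkdef
  have hkm : AEStronglyMeasurable k (volume.restrict (Set.Ioi (0:ℝ))) := hint1.1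
  set k'' : ℝ → ℝ := fun r => max (hkm.mk k r) 0 with hk''def
  have hk''meas : Measurable k'' :=
    (hkm.stronglyMeasurable_mk.measurable).max measurable_const
  have hk''nn : ∀ r, 0 ≤ k'' r := fun r => le_max_right _ _
  have heq'' : k =ᵐ[volume.restrict (Set.Ioi (0:ℝ))] k'' := by
    filter_upwards [hkm.ae_eq_mk, ae_restrict_mem measurableSet_Ioi] with r h1 h2
    rw [hk''def]
    simp only
    rw [← h1, max_eq_left (mul_nonneg (hg r) (le_of_lt h2))]
  have hk''int : IntegrableOn k'' (Set.Ioi (0:ℝ)) := hint1.congr heq''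
  -- tail mass function
  set L : ℝ → ℝ≥0∞ := fun s => ∫⁻ r in Set.Ioi s, ENNReal.ofReal (k'' r) with hLdef
  have hLanti : Antitone L := fun a b hab =>
    lintegral_mono_set (Set.Ioi_subset_Ioi hab)
  have hLmeas : Measurable L := hLanti.measurable
  have hL0 : L 0 = ENNReal.ofReal (∫ r in Set.Ioi (0:ℝ), k'' r) :=
    (ofReal_integral_eq_lintegral_ofReal hk''int
      (Filter.Eventually.of_forall hk''nn)).symm
  have hLfin : ∀ s, 0 ≤ s → L s ≠ ⊤ := by
    intro s hs
    exact ((hLanti hs).trans_lt (by rw [hL0]; exact ENNReal.ofReal_lt_top)).ne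
  have hT : ∀ s, 0 ≤ s → (∫ r in Set.Ioi s, k r) = (L s).toReal := by
    intro s hs
    have hsub : Set.Ioi s ⊆ Set.Ioi (0:ℝ) := Set.Ioi_subset_Ioi hs
    have heqs : k =ᵐ[volume.restrict (Set.Ioi s)] k'' :=
      ae_restrict_of_ae_restrict_of_subset hsub heq''
    have hints : IntegrableOn k'' (Set.Ioi s) := hk''int.mono_set hsub
    have : (∫ r in Set.Ioi s, k r) = ∫ r in Set.Ioi s, k'' r :=
      integral_congr_ae heqs
    rw [this, show L s = ENNReal.ofReal (∫ r in Set.Ioi s, k'' r) from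
      (ofReal_integral_eq_lintegral_ofReal hints (Filter.Eventually.of_forall hk''nn)).symm,
      ENNReal.toReal_ofReal (setIntegral_nonneg measurableSet_Ioi fun r _ => hk''nn r)]
  -- rewrite the function in measurable form
  set B₀ : ℝ × ℝ → ℝ := fun y => (max (y.1 * n.1 + y.2 * n.2) 0 / (y.1 ^ 2 + y.2 ^ 2)) *
      (L (Real.sqrt (y.1 ^ 2 + y.2 ^ 2))).toReal with hB₀def
  have hBB₀ : ∀ y : ℝ × ℝ, (max (y.1 * n.1 + y.2 * n.2) 0 / (y.1 ^ 2 + y.2 ^ 2)) *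
      (∫ r in Set.Ioi (Real.sqrt (y.1 ^ 2 + y.2 ^ 2)), k r) = B₀ y := by
    intro y
    rw [hT _ (Real.sqrt_nonneg _)]
  have hqmeas : Measurable fun y : ℝ × ℝ => y.1 ^ 2 + y.2 ^ 2 :=
    ((measurable_fst.pow_const 2).add (measurable_snd.pow_const 2))
  have hB₀meas : Measurable B₀ := by
    apply Measurable.mul
    · exact (((measurable_fst.mul_const n.1).add (measurable_snd.mul_const n.2)).max
        measurable_const).div hqmeas
    · exact (hLmeas.comp (Real.continuous_sqrt.measurable.comp hqmeas)).ennreal_toReal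
  have hB₀nn : ∀ y, 0 ≤ B₀ y := fun y =>
    mul_nonneg (div_nonneg (le_max_right _ _) (by positivity)) ENNReal.toReal_nonneg
  -- main lintegral computation via polar coordinates
  have hlin : (∫⁻ y : ℝ × ℝ, ENNReal.ofReal (B₀ y)) =
      ENNReal.ofReal ((∫ r in Set.Ioi (0:ℝ), g r * r ^ 2) * 2) := by
    set Bm : ℝ × ℝ → ℝ × ℝ →L[ℝ] ℝ × ℝ := fun p =>
      LinearMap.toContinuousLinearMap (Matrix.toLin (Module.Basis.finTwoProd ℝ) (Module.Basis.finTwoProd ℝ)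
        !![Real.cos p.2, -p.1 * Real.sin p.2; Real.sin p.2, p.1 * Real.cos p.2]) with hBm
    have hBm_det : ∀ p, (Bm p).det = p.1 := by
      intro p
      conv_rhs => rw [← one_mul p.1, ← Real.cos_sq_add_sin_sq p.2]
      simp only [hBm, neg_mul, LinearMap.det_toContinuousLinearMap, LinearMap.det_toLin,
        Matrix.det_fin_two_of, sub_neg_eq_add]
      ring
    have hang : ∫ θ in Set.Ioo (-Real.pi) Real.pi,
        max (n.1 * Real.cos θ + n.2 * Real.sin θ) 0 = 2 := angular n hn
    have hangcont : Continuous fun θ : ℝ => max (n.1 * Real.cos θ + n.2 * Real.sin θ) 0 :=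
      (((continuous_const.mul Real.continuous_cos).add
        (continuous_const.mul Real.continuous_sin)).max continuous_const)
    calc ∫⁻ y : ℝ × ℝ, ENNReal.ofReal (B₀ y)
        = ∫⁻ y in polarCoord.source, ENNReal.ofReal (B₀ y) := by
          rw [← setLIntegral_univ]
          exact (setLIntegral_congr polarCoord_source_ae_eq_univ).symm
      _ = ∫⁻ p in polarCoord.target,
            ENNReal.ofReal |(Bm p).det| * ENNReal.ofReal (B₀ (polarCoord.symm p)) := by
          rw [← polarCoord.symm_image_target_eq_source]
          refine (lintegral_image_eq_lintegral_abs_det_fderiv_mul volume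
            polarCoord.open_target.measurableSet
            (fun p _ => (hasFDerivAt_polarCoord_symm p).hasFDerivWithinAt)
            polarCoord.symm.injOn _).trans ?_
          simp only [det_fderivPolarCoordSymm, hBm_det]
      _ = ∫⁻ p in polarCoord.target,
            L p.1 * ENNReal.ofReal (max (n.1 * Real.cos p.2 + n.2 * Real.sin p.2) 0) := by
          apply setLIntegral_congr_fun polarCoord.open_target.measurableSet
          rintro ⟨r, θ⟩ hp
          have hr : 0 < r := hp.1
          have hsymm : polarCoord.symm (r, θ) = (r * Real.cos θ, r * Real.sin θ) := rfl
          have hq : (r * Real.cos θ) ^ 2 + (r * Real.sin θ) ^ 2 = r ^ 2 := by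
            have := Real.sin_sq_add_cos_sq θ; nlinarith
          have hsq : Real.sqrt (r ^ 2) = r := Real.sqrt_sq hr.le
          have hmax : max (r * Real.cos θ * n.1 + r * Real.sin θ * n.2) 0 =
              r * max (n.1 * Real.cos θ + n.2 * Real.sin θ) 0 := by
            rw [mul_max_of_nonneg _ _ hr.le, mul_zero]
            ring_nf
          beta_reduce
          rw [hBm_det, abs_of_pos hr, hB₀def]
          simp only [hsymm, hq, hsq, hmax]
          rw [← ENNReal.ofReal_mul hr.le,
            show r * (r * max (n.1 * Real.cos θ + n.2 * Real.sin θ) 0 / r ^ 2 *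
              (L r).toReal) = max (n.1 * Real.cos θ + n.2 * Real.sin θ) 0 * (L r).toReal
              from by field_simp,
            ENNReal.ofReal_mul (le_max_right _ _), ENNReal.ofReal_toReal (hLfin r hr.le),
            mul_comm]
      _ = (∫⁻ s in Set.Ioi (0:ℝ), L s) *
            ∫⁻ θ in Set.Ioo (-Real.pi) Real.pi,
              ENNReal.ofReal (max (n.1 * Real.cos θ + n.2 * Real.sin θ) 0) := by
          rw [show polarCoord.target = Set.Ioi (0:ℝ) ×ˢ Set.Ioo (-Real.pi) Real.pi from rfl]
          rw [Measure.volume_eq_prod, ← Measure.prod_restrict]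
          exact lintegral_prod_mul hLmeas.aemeasurable
            ((ENNReal.measurable_ofReal.comp hangcont.measurable).aemeasurable)
      _ = ENNReal.ofReal (∫ r in Set.Ioi (0:ℝ), g r * r ^ 2) * ENNReal.ofReal 2 := by
          congr 1
          · -- radial part
            rw [hLdef]
            simp only
            rw [radial_swap k'' hk''meas]
            have : ∀ᵐ r ∂(volume.restrict (Set.Ioi (0:ℝ))),
                ENNReal.ofReal (k'' r) * ENNReal.ofReal r = ENNReal.ofReal (g r * r ^ 2) := by
              filter_upwards [heq'', ae_restrict_mem measurableSet_Ioi] with r h1 h2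
              rw [← h1, hkdef]
              simp only
              rw [← ENNReal.ofReal_mul (mul_nonneg (hg r) h2.le)]
              ring_nf
            rw [lintegral_congr_ae this]
            exact (ofReal_integral_eq_lintegral_ofReal hint2
              (Filter.Eventually.of_forall fun r => mul_nonneg (hg r) (sq_nonneg r))).symm
          · -- angular part
            have hintang : IntegrableOn
                (fun θ : ℝ => max (n.1 * Real.cos θ + n.2 * Real.sin θ) 0)
                (Set.Ioo (-Real.pi) Real.pi) :=
              ((hangcont.intervalIntegrable (-Real.pi) Real.pi).1).mono_set
                Set.Ioo_subset_Ioc_self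
            rw [← ofReal_integral_eq_lintegral_ofReal hintang
              (Filter.Eventually.of_forall fun θ => le_max_right _ _), hang]
      _ = ENNReal.ofReal ((∫ r in Set.Ioi (0:ℝ), g r * r ^ 2) * 2) :=
          (ENNReal.ofReal_mul (setIntegral_nonneg measurableSet_Ioi
            fun r hr => mul_nonneg (hg r) (sq_nonneg r))).symm
  simp only [hBB₀]
  refine ⟨⟨hB₀meas.aestronglyMeasurable, ?_⟩, hlin⟩
  rw [hasFiniteIntegral_iff_ofReal (Filter.Eventually.of_forall hB₀nn), hlin]
  exact ENNReal.ofReal_lt_top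

/-- Bound on the flux density `G(x)·n` of the total dispersal field for a
rotationally symmetric dispersal kernel `fd x = g ‖x‖` with radial profile `g`.
For any measurable set `Hhat` and unit vector `n`,
`∬_{y∈Hhat} (y·n/|y|²) (∫_{|y|}^∞ g(r) r dr) dA ≤ μ/π`. -/
theorem G_dot_n_le_symmetric
    (g : ℝ → ℝ) (hg : ∀ r, 0 ≤ g r)
    (hnorm : 2 * Real.pi * ∫ r in Set.Ioi (0 : ℝ), g r * r = 1)
    (hint1 : IntegrableOn (fun r => g r * r) (Set.Ioi (0 : ℝ)))
    (μ : ℝ) (hμ : μ = 2 * Real.pi * ∫ r in Set.Ioi (0 : ℝ), g r * r ^ 2)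
    (hint2 : IntegrableOn (fun r => g r * r ^ 2) (Set.Ioi (0 : ℝ)))
    (n : ℝ × ℝ) (hn : n.1 ^ 2 + n.2 ^ 2 = 1)
    (Hhat : Set (ℝ × ℝ)) (hHhat : MeasurableSet Hhat) :
    (∫ y in Hhat, ((y.1 * n.1 + y.2 * n.2) / (y.1 ^ 2 + y.2 ^ 2)) *
        ∫ r in Set.Ioi (Real.sqrt (y.1 ^ 2 + y.2 ^ 2)), g r * r)
      ≤ μ / Real.pi := by
  obtain ⟨hBint, hBlin⟩ := key_aux g hg hint1 hint2 n hn
  have hmn : (-n.1) ^ 2 + (-n.2) ^ 2 = 1 := by simpa using hn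
  obtain ⟨hCint, _⟩ := key_aux g hg hint1 hint2 (-n.1, -n.2) hmn
  have hTnn : ∀ y : ℝ × ℝ, 0 ≤ ∫ r in Set.Ioi (Real.sqrt (y.1 ^ 2 + y.2 ^ 2)), g r * r := by
    intro y
    refine setIntegral_nonneg measurableSet_Ioi fun r hr => ?_
    exact mul_nonneg (hg r) (le_trans (Real.sqrt_nonneg _) (le_of_lt hr))
  have hBnn : ∀ y : ℝ × ℝ, 0 ≤ (max (y.1 * n.1 + y.2 * n.2) 0 / (y.1 ^ 2 + y.2 ^ 2)) *
      ∫ r in Set.Ioi (Real.sqrt (y.1 ^ 2 + y.2 ^ 2)), g r * r := fun y =>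
    mul_nonneg (div_nonneg (le_max_right _ _) (by positivity)) (hTnn y)
  have hCnn : ∀ y : ℝ × ℝ, 0 ≤ (max (y.1 * (-n.1) + y.2 * (-n.2)) 0 / (y.1 ^ 2 + y.2 ^ 2)) *
      ∫ r in Set.Ioi (Real.sqrt (y.1 ^ 2 + y.2 ^ 2)), g r * r := fun y =>
    mul_nonneg (div_nonneg (le_max_right _ _) (by positivity)) (hTnn y)
  have hF : ∀ y : ℝ × ℝ, ((y.1 * n.1 + y.2 * n.2) / (y.1 ^ 2 + y.2 ^ 2)) *
        (∫ r in Set.Ioi (Real.sqrt (y.1 ^ 2 + y.2 ^ 2)), g r * r)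
      = (max (y.1 * n.1 + y.2 * n.2) 0 / (y.1 ^ 2 + y.2 ^ 2)) *
          (∫ r in Set.Ioi (Real.sqrt (y.1 ^ 2 + y.2 ^ 2)), g r * r)
        - (max (y.1 * (-n.1) + y.2 * (-n.2)) 0 / (y.1 ^ 2 + y.2 ^ 2)) *
          (∫ r in Set.Ioi (Real.sqrt (y.1 ^ 2 + y.2 ^ 2)), g r * r) := by
    intro y
    have h := max_zero_sub_max_neg_zero_eq_self (y.1 * n.1 + y.2 * n.2)
    have hm2 : y.1 * (-n.1) + y.2 * (-n.2) = -(y.1 * n.1 + y.2 * n.2) := by ring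
    rw [hm2]
    linear_combination (-((∫ r in Set.Ioi (Real.sqrt (y.1 ^ 2 + y.2 ^ 2)), g r * r) /
      (y.1 ^ 2 + y.2 ^ 2))) * h
  calc (∫ y in Hhat, ((y.1 * n.1 + y.2 * n.2) / (y.1 ^ 2 + y.2 ^ 2)) *
        ∫ r in Set.Ioi (Real.sqrt (y.1 ^ 2 + y.2 ^ 2)), g r * r)
      = (∫ y in Hhat, (max (y.1 * n.1 + y.2 * n.2) 0 / (y.1 ^ 2 + y.2 ^ 2)) *
          ∫ r in Set.Ioi (Real.sqrt (y.1 ^ 2 + y.2 ^ 2)), g r * r)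
        - ∫ y in Hhat, (max (y.1 * (-n.1) + y.2 * (-n.2)) 0 / (y.1 ^ 2 + y.2 ^ 2)) *
          ∫ r in Set.Ioi (Real.sqrt (y.1 ^ 2 + y.2 ^ 2)), g r * r := by
        rw [← integral_sub hBint.integrableOn hCint.integrableOn]
        exact setIntegral_congr_fun hHhat fun y _ => hF y
    _ ≤ ∫ y in Hhat, (max (y.1 * n.1 + y.2 * n.2) 0 / (y.1 ^ 2 + y.2 ^ 2)) *
          ∫ r in Set.Ioi (Real.sqrt (y.1 ^ 2 + y.2 ^ 2)), g r * r := by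
        have h0 : 0 ≤ ∫ y in Hhat, (max (y.1 * (-n.1) + y.2 * (-n.2)) 0 / (y.1 ^ 2 + y.2 ^ 2)) *
            ∫ r in Set.Ioi (Real.sqrt (y.1 ^ 2 + y.2 ^ 2)), g r * r :=
          setIntegral_nonneg hHhat fun y _ => hCnn y
        linarith
    _ ≤ ∫ y : ℝ × ℝ, (max (y.1 * n.1 + y.2 * n.2) 0 / (y.1 ^ 2 + y.2 ^ 2)) *
          ∫ r in Set.Ioi (Real.sqrt (y.1 ^ 2 + y.2 ^ 2)), g r * r :=
        setIntegral_le_integral hBint (Filter.Eventually.of_forall fun y => hBnn y)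
    _ = (∫⁻ y : ℝ × ℝ, ENNReal.ofReal ((max (y.1 * n.1 + y.2 * n.2) 0 / (y.1 ^ 2 + y.2 ^ 2)) *
          ∫ r in Set.Ioi (Real.sqrt (y.1 ^ 2 + y.2 ^ 2)), g r * r)).toReal :=
        integral_eq_lintegral_of_nonneg_ae (Filter.Eventually.of_forall fun y => hBnn y)
          hBint.aestronglyMeasurable
    _ = μ / Real.pi := by
        rw [hBlin, ENNReal.toReal_ofReal (by
          have : 0 ≤ ∫ r in Set.Ioi (0:ℝ), g r * r ^ 2 :=
            setIntegral_nonneg measurableSet_Ioi fun r _ => mul_nonneg (hg r) (sq_nonneg r)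
          linarith)]
        have hπ : Real.pi ≠ 0 := Real.pi_ne_zero
        rw [hμ]
        field_simp
end

section
/- Let H ⊂ ℝ² be a bounded open region with C¹ boundary of finite perimeter L and area A, and let f_d be a probability density on ℝ² with mean dispersal distance μ. If X_p is uniform on H and X_d ~ f_d is independent of X_p, then P(X_p + X_d ∉ H) ≤ μL/(2A). -/
open MeasureTheory ProbabilityTheory Set

noncomputable section

set_option maxHeartbeats 1000000

local notation "E2" => EuclideanSpace ℝ (Fin 2)

lemma seg_cross {E : Type*} [NormedAddCommGroup E] [NormedSpace ℝ E]
    {H : Set E} (hH : IsOpen H) {x y : E} (hx : x ∈ H) (hxy : x + y ∉ H) :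
    ∃ t ∈ Set.Icc (0:ℝ) 1, x + t • y ∈ frontier H := by
  have hg : Continuous fun t : ℝ => x + t • y := by continuity
  set S : Set ℝ := Set.Icc 0 1 ∩ (fun t : ℝ => x + t • y) ⁻¹' Hᶜ with hS
  have hSne : S.Nonempty := ⟨1, ⟨zero_le_one, le_refl 1⟩, by simpa using hxy⟩
  have hSc : IsClosed S := isClosed_Icc.inter (hH.isClosed_compl.preimage hg)
  have hSbdd : BddBelow S := ⟨0, fun t ht => ht.1.1⟩
  have hc : sInf S ∈ S := hSc.csInf_mem hSne hSbdd
  set c := sInf S with hcdef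
  have hc0 : c ≠ 0 := by
    intro h
    have := hc.2
    rw [Set.mem_preimage, h] at this
    simp only [zero_smul, add_zero] at this
    exact this hx
  have hcpos : 0 < c := lt_of_le_of_ne hc.1.1 (Ne.symm hc0)
  have hmem : ∀ t ∈ Set.Ioo (0:ℝ) c, x + t • y ∈ H := by
    intro t ht
    by_contra hcon
    have htS : t ∈ S := ⟨⟨le_of_lt ht.1, le_trans (le_of_lt ht.2) hc.1.2⟩, hcon⟩
    exact absurd (csInf_le hSbdd htS) (not_le.2 ht.2)
  have hclos : x + c • y ∈ closure H := by
    refine mem_closure_of_tendsto (x := x + c • y) (f := fun t : ℝ => x + t • y)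
      (b := nhdsWithin c (Set.Iio c)) ((hg.tendsto c).mono_left nhdsWithin_le_nhds) ?_
    filter_upwards [Ioo_mem_nhdsLT_of_mem (Set.right_mem_Ioc.mpr hcpos)] with t ht
      using hmem t ht
  exact ⟨c, ⟨hc.1.1, hc.1.2⟩, by rw [hH.frontier_eq]; exact ⟨hclos, hc.2⟩⟩

lemma tube_vol {L : ℝ} (hL : 0 ≤ L) (γ : ℝ → E2)
    (hγC1 : ContDiff ℝ 1 γ) (hγunit : ∀ t, ‖deriv γ t‖ = 1)
    (y : E2) :
    volume {x : E2 | ∃ s ∈ Set.Icc 0 L, ∃ t ∈ Set.Icc (0:ℝ) 1, x + t • y = γ s}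
      ≤ ENNReal.ofReal (‖y‖ * L) := by
  classical
  set B : Set (Fin 2 → ℝ) := Set.univ.pi fun i : Fin 2 => Set.Icc 0 (if i = 0 then L else 1)
    with hBdef
  have hB : MeasurableSet B := MeasurableSet.univ_pi fun i => measurableSet_Icc
  set K : Set E2 := (MeasurableEquiv.toLp 2 (Fin 2 → ℝ)).symm ⁻¹' B with hKdef
  have hK : MeasurableSet K := (MeasurableEquiv.toLp 2 (Fin 2 → ℝ)).symm.measurable hB
  set Ψ : E2 → E2 := fun v => γ (v 0) - (v 1) • y with hΨdef
  set f' : E2 → (E2 →L[ℝ] E2) := fun v =>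
    (EuclideanSpace.proj (0 : Fin 2)).smulRight (deriv γ (v 0))
      - (EuclideanSpace.proj (1 : Fin 2)).smulRight y with hf'def
  -- subset of the image
  have hsub : {x : E2 | ∃ s ∈ Set.Icc 0 L, ∃ t ∈ Set.Icc (0:ℝ) 1, x + t • y = γ s} ⊆ Ψ '' K := by
    rintro x ⟨s, hs, t, ht, hxt⟩
    refine ⟨(WithLp.equiv 2 (Fin 2 → ℝ)).symm ![s, t], ?_, ?_⟩
    · intro i _
      fin_cases i <;>
        simp only [hKdef, Set.mem_preimage, MeasurableEquiv.coe_toLp_symm,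
          WithLp.equiv_symm_apply, PiLp.toLp_apply, Equiv.apply_symm_apply] <;> simp
      · exact hs
      · exact ht
    · simp only [hΨdef, WithLp.equiv_symm_apply, PiLp.toLp_apply]
      rw [show (![s, t] : Fin 2 → ℝ) 0 = s from rfl, show (![s, t] : Fin 2 → ℝ) 1 = t from rfl]
      rw [← hxt]; abel
  -- derivative
  have hderiv : ∀ v ∈ K, HasFDerivWithinAt Ψ (f' v) K v := by
    intro v _
    apply HasFDerivAt.hasFDerivWithinAt
    have hd : HasDerivAt γ (deriv γ (v 0)) (v 0) :=
      ((hγC1.differentiable one_ne_zero) (v 0)).hasDerivAt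
    have hp0 : HasFDerivAt (⇑(EuclideanSpace.proj (0 : Fin 2) : E2 →L[ℝ] ℝ))
        (EuclideanSpace.proj (0 : Fin 2) : E2 →L[ℝ] ℝ) v :=
      (EuclideanSpace.proj (0 : Fin 2) : E2 →L[ℝ] ℝ).hasFDerivAt
    have key : (ContinuousLinearMap.smulRight (1 : ℝ →L[ℝ] ℝ) (deriv γ (v 0))).comp
        (EuclideanSpace.proj (0 : Fin 2) : E2 →L[ℝ] ℝ)
        = (EuclideanSpace.proj (0 : Fin 2)).smulRight (deriv γ (v 0)) := by
      ext w
      simp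
    have h1 : HasFDerivAt (fun v : E2 => γ (v 0))
        ((EuclideanSpace.proj (0 : Fin 2)).smulRight (deriv γ (v 0))) v :=
      ((hd.hasFDerivAt).comp v hp0).congr_fderiv key
    have h2 : HasFDerivAt (fun v : E2 => (v 1) • y)
        ((EuclideanSpace.proj (1 : Fin 2) : E2 →L[ℝ] ℝ).smulRight y) v :=
      ((EuclideanSpace.proj (1 : Fin 2) : E2 →L[ℝ] ℝ).smulRight y).hasFDerivAt
    exact h1.sub h2
  -- determinant bound
  have hdet : ∀ v : E2, |(f' v).det| ≤ ‖y‖ := by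
    intro v
    set u : E2 := deriv γ (v 0) with hudef
    set b := PiLp.basisFun 2 ℝ (Fin 2) with hbdef
    have happ : ∀ (i j : Fin 2), (LinearMap.toMatrix b b ((f' v) : E2 →ₗ[ℝ] E2)) i j
        = (if j = 0 then u else -y) i := by
      intro i j
      rw [LinearMap.toMatrix_apply]
      fin_cases j <;>
        simp [hf'def, hbdef, ContinuousLinearMap.smulRight_apply, Pi.single_apply,
          WithLp.equiv_symm_apply, hudef]
    have hM : (f' v).det = u 0 * (-y) 1 - (-y) 0 * u 1 := by
      have hdet0 : (f' v).det = LinearMap.det ((f' v) : E2 →ₗ[ℝ] E2) := rfl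
      rw [hdet0, ← LinearMap.det_toMatrix b, Matrix.det_fin_two, happ, happ, happ, happ]
      norm_num
    have hu : (u 0)^2 + (u 1)^2 = 1 := by
      have h1 := hγunit (v 0)
      rw [EuclideanSpace.norm_eq] at h1
      have h2 : Real.sqrt ((u 0)^2 + (u 1)^2) = 1 := by
        rw [← h1]; congr 1; simp [Fin.sum_univ_two, hudef]
      nlinarith [Real.sq_sqrt (by positivity : (0:ℝ) ≤ (u 0)^2 + (u 1)^2), h2]
    have hny : ‖y‖ = Real.sqrt ((y 0)^2 + (y 1)^2) := by
      rw [EuclideanSpace.norm_eq]; congr 1; simp [Fin.sum_univ_two]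
    rw [hM, hny]
    have h1 : |u 0 * (-y) 1 - (-y) 0 * u 1| =
        Real.sqrt ((u 0 * (-y) 1 - (-y) 0 * u 1)^2) := (Real.sqrt_sq_eq_abs _).symm
    rw [h1]
    apply Real.sqrt_le_sqrt
    have hy0 : (-y) 0 = -(y 0) := rfl
    have hy1 : (-y) 1 = -(y 1) := rfl
    rw [hy0, hy1]
    nlinarith [sq_nonneg (u 0 * y 0 + u 1 * y 1)]
  -- volume of K
  have hKvol : volume K = ENNReal.ofReal L := by
    rw [hKdef, (EuclideanSpace.volume_preserving_symm_measurableEquiv_toLp (Fin 2)).measure_preimage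
      hB.nullMeasurableSet, hBdef, volume_pi_pi]
    simp [Fin.prod_univ_two, Real.volume_Icc]
  calc volume {x : E2 | ∃ s ∈ Set.Icc 0 L, ∃ t ∈ Set.Icc (0:ℝ) 1, x + t • y = γ s}
      ≤ volume (Ψ '' K) := measure_mono hsub
    _ ≤ ∫⁻ v in K, ENNReal.ofReal |(f' v).det| ∂volume :=
        MeasureTheory.addHaar_image_le_lintegral_abs_det_fderiv volume hK hderiv
    _ ≤ ∫⁻ _ in K, ENNReal.ofReal ‖y‖ ∂volume :=
        lintegral_mono fun v => ENNReal.ofReal_le_ofReal (hdet v)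
    _ = ENNReal.ofReal ‖y‖ * volume K := by rw [setLIntegral_const]
    _ = ENNReal.ofReal (‖y‖ * L) := by
        rw [hKvol, ← ENNReal.ofReal_mul (norm_nonneg y)]

lemma diff_vol {H : Set E2} (hHopen : IsOpen H) (hHbdd : Bornology.IsBounded H)
    {L : ℝ} (hL : 0 ≤ L) (γ : ℝ → E2)
    (hγC1 : ContDiff ℝ 1 γ) (hγunit : ∀ t, ‖deriv γ t‖ = 1)
    (hγbd : frontier H = γ '' Set.Icc 0 L) (y : E2) :
    volume (H ∩ {x | x + y ∉ H}) ≤ ENNReal.ofReal (‖y‖ * L / 2) := by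
  set T : Set E2 := (fun x => x + y) ⁻¹' H with hTdef
  have hTopen : IsOpen T := hHopen.preimage (by continuity)
  have hHT : H ∩ {x | x + y ∉ H} = H \ T := rfl
  rw [hHT]
  have hvolH : volume H ≠ ⊤ := hHbdd.measure_lt_top.ne
  have hvolT : volume T = volume H := measure_preimage_add_right volume y H
  have hint : volume (H ∩ T) ≠ ⊤ :=
    (lt_of_le_of_lt (measure_mono Set.inter_subset_left) hHbdd.measure_lt_top).ne
  have h1 : volume (H \ T) + volume (H ∩ T) = volume H :=
    measure_diff_add_inter H hTopen.measurableSet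
  have h2 : volume (T \ H) + volume (H ∩ T) = volume H := by
    rw [Set.inter_comm]
    rw [← hvolT]
    exact measure_diff_add_inter T hHopen.measurableSet
  have heq : volume (H \ T) = volume (T \ H) := by
    have := h1.trans h2.symm
    exact WithTop.add_right_cancel hint this
  -- containment in the tube
  set W : Set E2 := {x : E2 | ∃ s ∈ Set.Icc 0 L, ∃ t ∈ Set.Icc (0:ℝ) 1, x + t • y = γ s}
    with hWdef
  have hsub : (H \ T) ∪ (T \ H) ⊆ W := by
    rintro x (⟨hxH, hxT⟩ | ⟨hxT, hxH⟩)
    · obtain ⟨t, ht, hf⟩ := seg_cross hHopen hxH hxT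
      rw [hγbd] at hf
      obtain ⟨s, hs, hgs⟩ := hf
      exact ⟨s, hs, t, ht, hgs.symm⟩
    · have hx2 : (x + y) + -y ∉ H := by simpa using hxH
      obtain ⟨t', ht', hf⟩ := seg_cross hHopen hxT hx2
      have hrw : (x + y) + t' • (-y) = x + (1 - t') • y := by
        rw [smul_neg, sub_smul, one_smul]; abel
      rw [hrw, hγbd] at hf
      obtain ⟨s, hs, hgs⟩ := hf
      exact ⟨s, hs, 1 - t', ⟨by linarith [ht'.2], by linarith [ht'.1]⟩, hgs.symm⟩
  have hdisj : Disjoint (H \ T) (T \ H) := disjoint_sdiff_sdiff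
  have hunion : volume (H \ T) + volume (T \ H) = volume ((H \ T) ∪ (T \ H)) :=
    (measure_union hdisj (hTopen.measurableSet.diff hHopen.measurableSet)).symm
  have hbound : volume (H \ T) + volume (H \ T) ≤ ENNReal.ofReal (‖y‖ * L) := by
    calc volume (H \ T) + volume (H \ T)
        = volume (H \ T) + volume (T \ H) := by rw [heq]
      _ = volume ((H \ T) ∪ (T \ H)) := hunion
      _ ≤ volume W := measure_mono hsub
      _ ≤ ENNReal.ofReal (‖y‖ * L) := tube_vol hL γ hγC1 hγunit y
  by_contra hcon
  push_neg at hcon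
  have hsplit : ENNReal.ofReal (‖y‖ * L) =
      ENNReal.ofReal (‖y‖ * L / 2) + ENNReal.ofReal (‖y‖ * L / 2) := by
    rw [← ENNReal.ofReal_add (by positivity) (by positivity)]
    ring_nf
  rw [hsplit] at hbound
  exact absurd hbound (not_le.2 (ENNReal.add_lt_add hcon hcon))

/-- Main seed-loss bound, asymmetric case.  `H` is a bounded open habitat in the
Euclidean plane whose boundary is a simple closed `C¹` curve `γ`, parametrized
by arc length with period (perimeter) `L`; the habitat area is `A`.  `Xp` is
uniformly distributed on `H` and `Xd` is an independent random displacement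
with density `fd` of mean dispersal distance `μ`.  Then the probability that
`Xp + Xd` lands outside `H` is at most `μ L / (2 A)`. -/
theorem seed_loss_le_muL_div_2A
    {Ω : Type*} [MeasureSpace Ω] [IsProbabilityMeasure (ℙ : Measure Ω)]
    (Xp Xd : Ω → EuclideanSpace ℝ (Fin 2)) (hXp : Measurable Xp) (hXd : Measurable Xd)
    (H : Set (EuclideanSpace ℝ (Fin 2))) (hHopen : IsOpen H)
    (hHbdd : Bornology.IsBounded H)
    (A : ℝ) (hA : A = (volume H).toReal) (hApos : 0 < A)
    (L : ℝ) (hLpos : 0 < L)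
    (γ : ℝ → EuclideanSpace ℝ (Fin 2)) (hγC1 : ContDiff ℝ 1 γ)
    (hγper : Function.Periodic γ L)
    (hγunit : ∀ t, ‖deriv γ t‖ = 1)
    (hγinj : Set.InjOn γ (Set.Ico 0 L))
    (hγbd : frontier H = γ '' Set.Icc 0 L)
    (fd : EuclideanSpace ℝ (Fin 2) → ℝ) (hnn : ∀ x, 0 ≤ fd x)
    (hint : Integrable fd) (hprob : ∫ x, fd x = 1)
    (μ : ℝ) (hμ : μ = ∫ x, ‖x‖ * fd x)
    (hμint : Integrable fun x : EuclideanSpace ℝ (Fin 2) => ‖x‖ * fd x)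
    (hindep : IndepFun Xp Xd ℙ)
    (hmapXp : Measure.map Xp ℙ
      = volume.withDensity fun x => ENNReal.ofReal (H.indicator (fun _ => 1 / A) x))
    (hmapXd : Measure.map Xd ℙ
      = volume.withDensity fun x => ENNReal.ofReal (fd x)) :
    (ℙ {ω | Xp ω + Xd ω ∉ H}).toReal ≤ μ * L / (2 * A) := by
  have hHmeas : MeasurableSet H := hHopen.measurableSet
  have hμ0 : 0 ≤ μ := by
    rw [hμ]; exact integral_nonneg fun y => mul_nonneg (norm_nonneg y) (hnn y)
  have hs : MeasurableSet {p : E2 × E2 | p.1 + p.2 ∉ H} :=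
    (measurable_fst.add measurable_snd) hHmeas.compl
  have hpair : Measurable fun ω => (Xp ω, Xd ω) := hXp.prodMk hXd
  haveI i1 : IsProbabilityMeasure (Measure.map Xp ℙ) := Measure.isProbabilityMeasure_map hXp.aemeasurable
  haveI i2 : IsProbabilityMeasure (Measure.map Xd ℙ) := Measure.isProbabilityMeasure_map hXd.aemeasurable
  have hPeq : ℙ {ω | Xp ω + Xd ω ∉ H}
      = ((Measure.map Xp ℙ).prod (Measure.map Xd ℙ)) {p : E2 × E2 | p.1 + p.2 ∉ H} := by
    rw [← (indepFun_iff_map_prod_eq_prod_map_map hXp.aemeasurable hXd.aemeasurable).mp hindep,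
      Measure.map_apply hpair hs]
    rfl
  have hprod : ((Measure.map Xp ℙ).prod (Measure.map Xd ℙ)) {p : E2 × E2 | p.1 + p.2 ∉ H}
      = ∫⁻ y, (Measure.map Xp ℙ) {x : E2 | x + y ∉ H} ∂(Measure.map Xd ℙ) := by
    rw [Measure.prod_apply_symm hs]
    exact lintegral_congr fun y => rfl
  have hslice : ∀ y : E2,
      (Measure.map Xp ℙ) {x : E2 | x + y ∉ H} ≤ ENNReal.ofReal (‖y‖ * (L / (2 * A))) := by
    intro y
    have hsm : MeasurableSet {x : E2 | x + y ∉ H} := (measurable_add_const y) hHmeas.compl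
    rw [hmapXp, withDensity_apply _ hsm]
    have hind : ∀ x : E2, ENNReal.ofReal (H.indicator (fun _ => 1 / A) x)
        = H.indicator (fun _ => ENNReal.ofReal (1 / A)) x := by
      intro x; by_cases hx : x ∈ H <;> simp [hx]
    calc ∫⁻ x in {x : E2 | x + y ∉ H}, ENNReal.ofReal (H.indicator (fun _ => 1 / A) x)
        = ∫⁻ x in {x : E2 | x + y ∉ H}, H.indicator (fun _ => ENNReal.ofReal (1 / A)) x := by
          simp_rw [hind]
      _ = ENNReal.ofReal (1 / A) * volume (H ∩ {x : E2 | x + y ∉ H}) := by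
          rw [lintegral_indicator hHmeas, setLIntegral_const, Measure.restrict_apply hHmeas]
      _ ≤ ENNReal.ofReal (1 / A) * ENNReal.ofReal (‖y‖ * L / 2) :=
          mul_le_mul_right (diff_vol hHopen hHbdd hLpos.le γ hγC1 hγunit hγbd y) _
      _ = ENNReal.ofReal (‖y‖ * (L / (2 * A))) := by
          have hre : 1 / A * (‖y‖ * L / 2) = ‖y‖ * (L / (2 * A)) := by
            rw [one_div_mul_eq_div, div_div, mul_div_assoc]
          rw [← ENNReal.ofReal_mul (by positivity), hre]
  have hgmeas : Measurable fun y : E2 => ENNReal.ofReal (‖y‖ * (L / (2 * A))) :=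
    (measurable_norm.mul_const _).ennreal_ofReal
  have hintbound : ∫⁻ y, (Measure.map Xp ℙ) {x : E2 | x + y ∉ H} ∂(Measure.map Xd ℙ)
      ≤ ENNReal.ofReal (μ * L / (2 * A)) := by
    calc ∫⁻ y, (Measure.map Xp ℙ) {x : E2 | x + y ∉ H} ∂(Measure.map Xd ℙ)
        ≤ ∫⁻ y, ENNReal.ofReal (‖y‖ * (L / (2 * A))) ∂(Measure.map Xd ℙ) :=
          lintegral_mono hslice
      _ = ∫⁻ y, ENNReal.ofReal (fd y) * ENNReal.ofReal (‖y‖ * (L / (2 * A))) ∂volume := by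
          rw [hmapXd, lintegral_withDensity_eq_lintegral_mul₀ hint.aemeasurable.ennreal_ofReal
            hgmeas.aemeasurable]
          rfl
      _ = ∫⁻ y, ENNReal.ofReal (L / (2 * A)) * ENNReal.ofReal (‖y‖ * fd y) ∂volume := by
          congr 1
          ext y
          rw [← ENNReal.ofReal_mul (hnn y), ← ENNReal.ofReal_mul (by positivity)]
          congr 1
          ring
      _ = ENNReal.ofReal (L / (2 * A)) * ∫⁻ y, ENNReal.ofReal (‖y‖ * fd y) ∂volume :=
          lintegral_const_mul' _ _ ENNReal.ofReal_ne_top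
      _ = ENNReal.ofReal (L / (2 * A)) * ENNReal.ofReal μ := by
          rw [hμ, ofReal_integral_eq_lintegral_ofReal hμint
            (Filter.Eventually.of_forall fun y => mul_nonneg (norm_nonneg y) (hnn y))]
      _ = ENNReal.ofReal (μ * L / (2 * A)) := by
          rw [← ENNReal.ofReal_mul (by positivity)]
          congr 1
          ring
  have hfinal : ℙ {ω | Xp ω + Xd ω ∉ H} ≤ ENNReal.ofReal (μ * L / (2 * A)) := by
    rw [hPeq, hprod]; exact hintbound
  exact ENNReal.toReal_le_of_le_ofReal (by positivity) hfinal

end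
end

section
/- Let H = (0,A)×(0,B) be a rectangle (A, B > 0) and let f_d be the uniform density 1/(ab) on (0,a)×(0,b) with 0 < a < A and 0 < b < B. Then the quantity pA := ∬_{x_p∈H} ∬_{x∈Hᶜ} f_d(x−x_p) dA dA satisfies pA ≥ aB/2. -/
open MeasureTheory Real Set

/-- Lower bound on the seed loss `pA` for a rectangular habitat
`H = (0,A) × (0,B)` and a dispersal kernel uniform on `(0,a) × (0,b)`:
`pA = ∬_{x_p∈H} ∬_{x∈Hᶜ} f_d(x−x_p) dA dA ≥ aB/2`. -/
theorem pA_ge_aB_div_two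
    (A B a b : ℝ) (ha : 0 < a) (haA : a < A) (hb : 0 < b) (hbB : b < B) :
    a * B / 2 ≤
      ∫ xp in Set.Ioo 0 A ×ˢ Set.Ioo 0 B,
        ∫ x in (Set.Ioo 0 A ×ˢ Set.Ioo 0 B)ᶜ,
          (Set.Ioo 0 a ×ˢ Set.Ioo 0 b).indicator (fun _ => 1 / (a * b)) (x - xp) := by
  have hab : (0:ℝ) < a * b := mul_pos ha hb
  set K : Set (ℝ × ℝ) := Set.Ioo 0 a ×ˢ Set.Ioo 0 b with hKdef
  set H : Set (ℝ × ℝ) := Set.Ioo 0 A ×ˢ Set.Ioo 0 B with hHdef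
  set f : ℝ × ℝ → ℝ := fun v => K.indicator (fun _ => 1 / (a * b)) v with hfdef
  have hKm : MeasurableSet K := measurableSet_Ioo.prod measurableSet_Ioo
  have hHm : MeasurableSet H := measurableSet_Ioo.prod measurableSet_Ioo
  have hvol : ∀ c d e g : ℝ, volume (Set.Ioo c d ×ˢ Set.Ioo e g)
      = ENNReal.ofReal (d - c) * ENNReal.ofReal (g - e) := by
    intro c d e g
    rw [Measure.volume_eq_prod, Measure.prod_prod, Real.volume_Ioo, Real.volume_Ioo]
  have hKvol : volume K < ⊤ := by
    rw [hKdef, hvol]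
    exact ENNReal.mul_lt_top ENNReal.ofReal_lt_top ENNReal.ofReal_lt_top
  have hHvol : volume H < ⊤ := by
    rw [hHdef, hvol]
    exact ENNReal.mul_lt_top ENNReal.ofReal_lt_top ENNReal.ofReal_lt_top
  have hf0 : ∀ v, 0 ≤ f v := fun v =>
    Set.indicator_nonneg (fun _ _ => by positivity) v
  have hfm : Measurable f := measurable_const.indicator hKm
  have hfi : Integrable f := by
    rw [hfdef, integrable_indicator_iff hKm]
    exact integrableOn_const hKvol.ne
  set F : ℝ × ℝ → ℝ := fun xp => ∫ x in Hᶜ, f (x - xp) with hFdef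
  have hF0 : ∀ xp, 0 ≤ F xp := fun xp =>
    setIntegral_nonneg hHm.compl (fun x _ => hf0 _)
  set C : ℝ := ∫ v, f v with hCdef
  have hFle : ∀ xp, F xp ≤ C := by
    intro xp
    have h1 : F xp ≤ ∫ x, f (x - xp) :=
      setIntegral_le_integral (hfi.comp_sub_right xp)
        (Filter.Eventually.of_forall fun x => hf0 _)
    have h2 : ∫ x, f (x - xp) = C := integral_sub_right_eq_self f xp
    linarith
  have hFsm : StronglyMeasurable F := by
    have hG : StronglyMeasurable fun p : (ℝ × ℝ) × (ℝ × ℝ) =>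
        ({q : (ℝ × ℝ) × (ℝ × ℝ) | q.2 ∈ Hᶜ}).indicator (fun q => f (q.2 - q.1)) p :=
      ((hfm.comp (measurable_snd.sub measurable_fst)).indicator
        (hHm.compl.preimage measurable_snd)).stronglyMeasurable
    have h2 := hG.integral_prod_right' (ν := (volume : Measure (ℝ × ℝ)))
    convert h2 using 1
    funext xp
    show F xp = _
    rw [hFdef]
    simp only []
    rw [← integral_indicator hHm.compl]
    congr 1
  have hFi : IntegrableOn F H := by
    apply Measure.integrableOn_of_bounded hHvol.ne hFsm.aestronglyMeasurable (M := C)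
    filter_upwards with x
    rw [Real.norm_eq_abs, abs_of_nonneg (hF0 x)]
    exact hFle x
  set T : Set (ℝ × ℝ) := Set.Ioo (A - a) A ×ˢ Set.Ioo 0 B with hTdef
  have hTm : MeasurableSet T := measurableSet_Ioo.prod measurableSet_Ioo
  set g : ℝ × ℝ → ℝ := fun xp => T.indicator (fun xp => (xp.1 - (A - a)) / a) xp with hgdef
  have hgi : IntegrableOn g H := by
    apply Measure.integrableOn_of_bounded hHvol.ne (M := 1)
    · exact (((measurable_fst.sub measurable_const).div_const a).indicator hTm
        ).stronglyMeasurable.aestronglyMeasurable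
    · filter_upwards with x
      rw [hgdef, Real.norm_eq_abs]
      simp only [Set.indicator_apply]
      split_ifs with hx
      · obtain ⟨⟨h1, h2⟩, _⟩ := hx
        rw [abs_of_nonneg (div_nonneg (by linarith) ha.le), div_le_one ha]
        linarith
      · simp
  have hgF : ∀ xp ∈ H, g xp ≤ F xp := by
    intro xp _
    rw [hgdef]
    simp only [Set.indicator_apply]
    split_ifs with hxp
    · obtain ⟨⟨h1, h2⟩, h3, h4⟩ := hxp
      set S : Set (ℝ × ℝ) := Set.Ioo A (xp.1 + a) ×ˢ Set.Ioo xp.2 (xp.2 + b) with hSdef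
      have hSm : MeasurableSet S := measurableSet_Ioo.prod measurableSet_Ioo
      have hSsub : S ⊆ Hᶜ := by
        intro x hx
        have hx1 : A < x.1 := hx.1.1
        exact fun hxH => absurd hxH.1.2 (not_lt.2 hx1.le)
      have key : ∫ x in S, f (x - xp) = (xp.1 - (A - a)) / a := by
        have heq : Set.EqOn (fun x => f (x - xp)) (fun _ => 1 / (a * b)) S := by
          intro x hx
          obtain ⟨⟨hx1, hx2⟩, hx3, hx4⟩ := hx
          simp only [hfdef]
          rw [Set.indicator_of_mem]
          refine ⟨⟨?_, ?_⟩, ?_, ?_⟩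
          · show (0:ℝ) < (x - xp).1
            rw [Prod.fst_sub]; linarith
          · show (x - xp).1 < a
            rw [Prod.fst_sub]; linarith
          · show (0:ℝ) < (x - xp).2
            rw [Prod.snd_sub]; linarith
          · show (x - xp).2 < b
            rw [Prod.snd_sub]; linarith
        rw [setIntegral_congr_fun hSm heq, setIntegral_const, hSdef, measureReal_def, hvol,
          smul_eq_mul, ENNReal.toReal_mul, ENNReal.toReal_ofReal (by linarith),
          ENNReal.toReal_ofReal (by linarith)]
        field_simp
        ring
      calc (xp.1 - (A - a)) / a = ∫ x in S, f (x - xp) := key.symm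
        _ ≤ F xp := setIntegral_mono_set (hfi.comp_sub_right xp).integrableOn
            (Filter.Eventually.of_forall fun x => hf0 _)
            (HasSubset.Subset.eventuallyLE hSsub)
    · exact hF0 xp
  have main : ∫ xp in H, g xp ≤ ∫ xp in H, F xp :=
    setIntegral_mono_on hgi hFi hHm hgF
  have hTH : T ⊆ H := by
    apply Set.prod_mono _ le_rfl
    exact Set.Ioo_subset_Ioo (by linarith) le_rfl
  have hgval : ∫ xp in H, g xp = a * B / 2 := by
    rw [hgdef]
    rw [setIntegral_indicator hTm, Set.inter_eq_self_of_subset_right hTH]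
    have hTfin : volume T ≠ ⊤ := by
      rw [hTdef, hvol]
      exact (ENNReal.mul_lt_top ENNReal.ofReal_lt_top ENNReal.ofReal_lt_top).ne
    have hint : IntegrableOn (fun xp : ℝ × ℝ => (xp.1 - (A - a)) / a) T := by
      apply Measure.integrableOn_of_bounded hTfin (M := 1)
      · exact ((measurable_fst.sub measurable_const).div_const a
          ).stronglyMeasurable.aestronglyMeasurable
      · rw [MeasureTheory.ae_restrict_iff' hTm]
        filter_upwards with x hx
        obtain ⟨⟨h1, h2⟩, _⟩ := hx
        rw [Real.norm_eq_abs, abs_of_nonneg (div_nonneg (by linarith) ha.le),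
          div_le_one ha]
        linarith
    rw [hTdef] at hint ⊢
    rw [Measure.volume_eq_prod] at hint ⊢
    rw [setIntegral_prod _ hint]
    have hout : ∀ x ∈ Set.Ioo (A - a) A,
        (∫ y in Set.Ioo (0:ℝ) B, ((x, y).1 - (A - a)) / a) = B / a * (x - (A - a)) := by
      intro x _
      show (∫ _ in Set.Ioo (0:ℝ) B, (x - (A - a)) / a) = B / a * (x - (A - a))
      rw [setIntegral_const, measureReal_def, Real.volume_Ioo, smul_eq_mul,
        ENNReal.toReal_ofReal (by linarith)]
      ring
    rw [setIntegral_congr_fun measurableSet_Ioo hout]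
    rw [← MeasureTheory.integral_Ioc_eq_integral_Ioo,
      ← intervalIntegral.integral_of_le (by linarith : A - a ≤ A)]
    rw [intervalIntegral.integral_const_mul, intervalIntegral.integral_sub
      intervalIntegral.intervalIntegrable_id intervalIntegrable_const,
      integral_id, intervalIntegral.integral_const]
    have hane : a ≠ 0 := ne_of_gt ha
    field_simp
    ring
  calc a * B / 2 = ∫ xp in H, g xp := hgval.symm
    _ ≤ ∫ xp in H, F xp := main
    _ = _ := rfl
end

section
/- For every ε > 0 there exist a rectangular habitat H ⊂ ℝ² with area A and perimeter L and a probability density f_d on ℝ² with mean dispersal distance μ such that the seed-loss probability p = (1/A)∬_{x_p∈H}∬_{x∈Hᶜ} f_d(x−x_p) dA dA satisfies pA/(μL) > 1/2 − ε. Hence the constant 1/2 in the bound p ≤ μL/(2A) is optimal. -/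
open MeasureTheory Real Set

lemma int_linear (l u k c : ℝ) (h : l ≤ u) :
    ∫ x in Ioo l u, (x + k) * c = ((u^2 - l^2)/2 + k*(u-l)) * c := by
  rw [← integral_Ioc_eq_integral_Ioo, ← intervalIntegral.integral_of_le h,
    intervalIntegral.integral_mul_const,
    intervalIntegral.integral_add intervalIntegral.intervalIntegrable_id
      (intervalIntegrable_const),
    integral_id, intervalIntegral.integral_const]
  simp [smul_eq_mul]
  ring_nf
  tauto

lemma vol_rect' (l u l' u' : ℝ) : (volume : Measure (ℝ × ℝ)) (Ioo l u ×ˢ Ioo l' u')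
    = ENNReal.ofReal (u - l) * ENNReal.ofReal (u' - l') := by
  rw [Measure.volume_eq_prod, Measure.prod_prod, Real.volume_Ioo, Real.volume_Ioo]

lemma num_bound (a b A B : ℝ) (ha : 0 < a) (haA : a < A) (hb : 0 < b) (hbB : b < B) :
    a * B / 2 ≤ ∫ xp in Ioo 0 A ×ˢ Ioo 0 B,
      ∫ x in (Ioo 0 A ×ˢ Ioo 0 B)ᶜ,
        (Ioo 0 a ×ˢ Ioo 0 b).indicator (fun _ => 1 / (a * b)) (x - xp) := by
  set c : ℝ := 1 / (a * b) with hc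
  have hc0 : 0 < c := by positivity
  set S : Set (ℝ × ℝ) := Ioo 0 a ×ˢ Ioo 0 b with hSdef
  set H : Set (ℝ × ℝ) := Ioo 0 A ×ˢ Ioo 0 B with hHdef
  have hSm : MeasurableSet S := measurableSet_Ioo.prod measurableSet_Ioo
  have hHm : MeasurableSet H := measurableSet_Ioo.prod measurableSet_Ioo
  -- integrability on the product
  set U : Set ((ℝ × ℝ) × (ℝ × ℝ)) := {z | z.2 - z.1 ∈ S} with hUdef
  have hUm : MeasurableSet U := hSm.preimage (measurable_snd.sub measurable_fst)
  have heq : (fun z : (ℝ × ℝ) × (ℝ × ℝ) => S.indicator (fun _ => c) (z.2 - z.1))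
      = U.indicator (fun _ => c) := by
    funext z; by_cases h : z.2 - z.1 ∈ S <;> simp [Set.indicator, hUdef, h]
  have hInt : Integrable (fun z : (ℝ × ℝ) × (ℝ × ℝ) => S.indicator (fun _ => c) (z.2 - z.1))
      ((volume.restrict H).prod (volume.restrict Hᶜ)) := by
    rw [heq, Measure.prod_restrict, integrable_indicator_iff hUm, IntegrableOn,
      Measure.restrict_restrict hUm]
    refine integrableOn_const (ne_of_lt ?_) enorm_ne_top
    calc (volume.prod volume) (U ∩ H ×ˢ Hᶜ)
        ≤ (volume.prod volume) (H ×ˢ (Ioo 0 (A+a) ×ˢ Ioo 0 (B+b))) := by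
          apply measure_mono
          rintro ⟨zp, z⟩ ⟨hzU, hzH, -⟩
          refine ⟨hzH, ?_, ?_⟩
          · have h1 := hzU.1; have h2 := hzH.1
            simp only [Prod.fst_sub, mem_Ioo] at h1 h2 ⊢
            constructor <;> linarith [h1.1, h1.2, h2.1, h2.2]
          · have h1 := hzU.2; have h2 := hzH.2
            simp only [Prod.snd_sub, mem_Ioo] at h1 h2 ⊢
            constructor <;> linarith [h1.1, h1.2, h2.1, h2.2]
        _ < ⊤ := by
          rw [Measure.prod_prod, hHdef, vol_rect', vol_rect']
          exact ENNReal.mul_lt_top (ENNReal.mul_lt_top ENNReal.ofReal_lt_top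
            ENNReal.ofReal_lt_top) (ENNReal.mul_lt_top ENNReal.ofReal_lt_top
            ENNReal.ofReal_lt_top)
  have hgInt : Integrable (fun xp => ∫ x in Hᶜ, S.indicator (fun _ => c) (x - xp))
      (volume.restrict H) := hInt.integral_prod_left
  -- the lower-bound step function
  set R : Set (ℝ × ℝ) := Ioo (A - a) A ×ˢ Ioo 0 B with hRdef
  have hRm : MeasurableSet R := measurableSet_Ioo.prod measurableSet_Ioo
  have hRH : R ⊆ H := by
    rintro x ⟨h1, h2⟩
    exact ⟨⟨by linarith [h1.1], h1.2⟩, h2⟩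
  have hlow_nonneg : ∀ xp : ℝ × ℝ,
      0 ≤ R.indicator (fun xp : ℝ × ℝ => (xp.1 - (A - a)) * (b * c)) xp := by
    intro xp
    refine indicator_nonneg (fun y hy => ?_) xp
    have h1 : A - a < y.1 := hy.1.1
    have : (0:ℝ) ≤ y.1 - (A - a) := by linarith
    positivity
  have key : ∫ xp in H, R.indicator (fun xp : ℝ × ℝ => (xp.1 - (A - a)) * (b * c)) xp
      = a * B / 2 := by
    rw [integral_indicator hRm, Measure.restrict_restrict hRm,
      inter_eq_self_of_subset_left hRH]
    have hiR : IntegrableOn (fun xp : ℝ × ℝ => (xp.1 - (A - a)) * (b * c)) R := by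
      apply Measure.integrableOn_of_bounded (M := a * (b * c))
      · rw [hRdef, vol_rect']
        exact (ENNReal.mul_lt_top ENNReal.ofReal_lt_top ENNReal.ofReal_lt_top).ne
      · exact Continuous.aestronglyMeasurable (by fun_prop)
      · filter_upwards [ae_restrict_mem hRm] with y hy
        have h1 : A - a < y.1 := hy.1.1
        have h2 : y.1 < A := hy.1.2
        have hy0 : (0:ℝ) ≤ y.1 - (A - a) := by linarith
        rw [Real.norm_eq_abs, abs_of_nonneg (by positivity)]
        apply mul_le_mul_of_nonneg_right (by linarith) (by positivity)
    rw [hRdef, Measure.volume_eq_prod] at hiR ⊢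
    rw [setIntegral_prod _ hiR]
    have hB : (0:ℝ) < B := lt_trans hb hbB
    have hinner : ∀ x : ℝ, (∫ _ in Ioo (0:ℝ) B, (x - (A - a)) * (b * c))
        = (x + (-(A - a))) * (b * c * B) := by
      intro x
      rw [setIntegral_const, measureReal_def, Real.volume_Ioo, smul_eq_mul, sub_zero,
        ENNReal.toReal_ofReal hB.le]
      ring
    simp_rw [hinner]
    rw [int_linear (A - a) A (-(A - a)) (b * c * B) (by linarith), hc]
    field_simp
    ring
  have hle : ∀ᵐ xp ∂(volume.restrict H),
      R.indicator (fun xp : ℝ × ℝ => (xp.1 - (A - a)) * (b * c)) xp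
        ≤ ∫ x in Hᶜ, S.indicator (fun _ => c) (x - xp) := by
    filter_upwards [ae_restrict_mem hHm] with xp hxp
    by_cases hR : xp ∈ R
    · rw [indicator_of_mem hR]
      have hR1 : A - a < xp.1 := hR.1.1
      have hR2 : xp.1 < A := hR.1.2
      set T : Set (ℝ × ℝ) := Ico A (xp.1 + a) ×ˢ Ioo xp.2 (xp.2 + b) with hTdef
      have hTm : MeasurableSet T := measurableSet_Ico.prod measurableSet_Ioo
      have hTsub : T ⊆ Hᶜ := fun x hx hxH => absurd hxH.1.2 (not_lt.mpr hx.1.1)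
      have claim1 : ∀ x : ℝ × ℝ,
          T.indicator (fun _ => c) x ≤ S.indicator (fun _ => c) (x - xp) := by
        intro x
        by_cases hx : x ∈ T
        · rw [indicator_of_mem hx, indicator_of_mem]
          have h1 : A ≤ x.1 := hx.1.1
          have h2 : x.1 < xp.1 + a := hx.1.2
          have h3 : xp.2 < x.2 := hx.2.1
          have h4 : x.2 < xp.2 + b := hx.2.2
          refine ⟨?_, ?_⟩
          · simp only [Prod.fst_sub, mem_Ioo]
            constructor <;> linarith
          · simp only [Prod.snd_sub, mem_Ioo]
            constructor <;> linarith
        · rw [indicator_of_notMem hx]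
          exact indicator_nonneg (fun _ _ => hc0.le) _
      have claim2 : Integrable (fun x : ℝ × ℝ => S.indicator (fun _ => c) (x - xp))
          (volume.restrict Hᶜ) := by
        set W : Set (ℝ × ℝ) := Ioo xp.1 (xp.1 + a) ×ˢ Ioo xp.2 (xp.2 + b) with hWdef
        have hWm : MeasurableSet W := measurableSet_Ioo.prod measurableSet_Ioo
        have hfW : (fun x : ℝ × ℝ => S.indicator (fun _ => c) (x - xp))
            = W.indicator (fun _ => c) := by
          funext x
          have hiff : x ∈ W ↔ x - xp ∈ S := by
            simp only [hWdef, hSdef, mem_prod, mem_Ioo, Prod.fst_sub, Prod.snd_sub]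
            constructor <;> rintro ⟨⟨u1, u2⟩, u3, u4⟩ <;>
              exact ⟨⟨by linarith, by linarith⟩, by linarith, by linarith⟩
          by_cases hx : x ∈ W
          · rw [indicator_of_mem hx, indicator_of_mem (hiff.mp hx)]
          · rw [indicator_of_notMem hx,
              indicator_of_notMem (fun hmem => hx (hiff.mpr hmem))]
        rw [hfW]
        apply Integrable.restrict
        rw [integrable_indicator_iff hWm]
        refine integrableOn_const (ne_of_lt ?_) enorm_ne_top
        rw [hWdef, vol_rect']
        exact ENNReal.mul_lt_top ENNReal.ofReal_lt_top ENNReal.ofReal_lt_top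
      have hineq := integral_mono_of_nonneg (μ := volume.restrict Hᶜ)
        (Filter.Eventually.of_forall fun x => indicator_nonneg (fun _ _ => hc0.le) x)
        claim2 (Filter.Eventually.of_forall claim1)
      have hTval : (∫ x in Hᶜ, T.indicator (fun _ => c) x) = (xp.1 - (A - a)) * (b * c) := by
        rw [integral_indicator hTm, Measure.restrict_restrict hTm,
          inter_eq_self_of_subset_left hTsub, setIntegral_const, measureReal_def, hTdef,
          Measure.volume_eq_prod, Measure.prod_prod, Real.volume_Ico, Real.volume_Ioo,
          ENNReal.toReal_mul, ENNReal.toReal_ofReal (by linarith : (0:ℝ) ≤ xp.1 + a - A),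
          ENNReal.toReal_ofReal (by linarith : (0:ℝ) ≤ xp.2 + b - xp.2), smul_eq_mul]
        ring
      rw [← hTval]
      exact hineq
    · rw [indicator_of_notMem hR]
      exact integral_nonneg fun x => indicator_nonneg (fun _ _ => hc0.le) _
  calc a * B / 2
      = ∫ xp in H, R.indicator (fun xp : ℝ × ℝ => (xp.1 - (A - a)) * (b * c)) xp :=
        key.symm
    _ ≤ ∫ xp in H, ∫ x in Hᶜ, S.indicator (fun _ => c) (x - xp) :=
        integral_mono_of_nonneg (Filter.Eventually.of_forall hlow_nonneg) hgInt hle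

lemma vol_rect (a b : ℝ) : (volume : Measure (ℝ × ℝ)) (Ioo 0 a ×ˢ Ioo 0 b)
    = ENNReal.ofReal a * ENNReal.ofReal b := by
  rw [Measure.volume_eq_prod, Measure.prod_prod, Real.volume_Ioo, Real.volume_Ioo]
  simp

lemma mu_bounds (a b : ℝ) (ha : 0 < a) (hb : 0 < b) :
    a/2 ≤ (∫ x : ℝ × ℝ, Real.sqrt (x.1 ^ 2 + x.2 ^ 2) *
        (Ioo 0 a ×ˢ Ioo 0 b).indicator (fun _ => 1 / (a * b)) x) ∧
    (∫ x : ℝ × ℝ, Real.sqrt (x.1 ^ 2 + x.2 ^ 2) *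
        (Ioo 0 a ×ˢ Ioo 0 b).indicator (fun _ => 1 / (a * b)) x) ≤ (a+b)/2 := by
  set c : ℝ := 1 / (a * b) with hc
  have hc0 : 0 < c := by positivity
  set S : Set (ℝ × ℝ) := Ioo 0 a ×ˢ Ioo 0 b with hS
  have hSm : MeasurableSet S := measurableSet_Ioo.prod measurableSet_Ioo
  have hvol : volume S ≠ ⊤ := by
    rw [hS, vol_rect]; exact (ENNReal.mul_lt_top ENNReal.ofReal_lt_top ENNReal.ofReal_lt_top).ne
  have hrw : (fun x : ℝ × ℝ => Real.sqrt (x.1 ^ 2 + x.2 ^ 2) * S.indicator (fun _ => c) x)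
      = S.indicator (fun x : ℝ × ℝ => Real.sqrt (x.1 ^ 2 + x.2 ^ 2) * c) := by
    funext x; by_cases hx : x ∈ S <;> simp [hx]
  have hcont : Continuous (fun x : ℝ × ℝ => Real.sqrt (x.1 ^ 2 + x.2 ^ 2) * c) := by
    fun_prop
  have hi1 : IntegrableOn (fun x : ℝ × ℝ => Real.sqrt (x.1 ^ 2 + x.2 ^ 2) * c) S := by
    apply Measure.integrableOn_of_bounded hvol hcont.aestronglyMeasurable
      (M := (|a| + |b|) * c)
    filter_upwards [ae_restrict_mem hSm] with x hx
    have h1 : (0:ℝ) < x.1 := hx.1.1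
    have h2 : x.1 < a := hx.1.2
    have h3 : (0:ℝ) < x.2 := hx.2.1
    have h4 : x.2 < b := hx.2.2
    have hs : Real.sqrt (x.1 ^ 2 + x.2 ^ 2) ≤ x.1 + x.2 := by
      rw [show x.1 + x.2 = Real.sqrt ((x.1 + x.2)^2) from
        (Real.sqrt_sq (by linarith)).symm]
      exact Real.sqrt_le_sqrt (by nlinarith)
    have : Real.sqrt (x.1 ^ 2 + x.2 ^ 2) * c ≤ (|a| + |b|) * c := by
      apply mul_le_mul_of_nonneg_right _ hc0.le
      calc Real.sqrt (x.1 ^ 2 + x.2 ^ 2) ≤ x.1 + x.2 := hs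
        _ ≤ |a| + |b| := by rw [abs_of_pos ha, abs_of_pos hb]; linarith
    rw [Real.norm_eq_abs, abs_of_nonneg (by positivity)]
    exact this
  have hi2 : IntegrableOn (fun x : ℝ × ℝ => (x.1 + x.2) * c) S := by
    apply Measure.integrableOn_of_bounded hvol
      (Continuous.aestronglyMeasurable (by fun_prop)) (M := (|a| + |b|) * c)
    filter_upwards [ae_restrict_mem hSm] with x hx
    rw [Real.norm_eq_abs]
    have h1 : (0:ℝ) < x.1 := hx.1.1
    have h3 : (0:ℝ) < x.2 := hx.2.1
    rw [abs_of_nonneg (by positivity)]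
    apply mul_le_mul_of_nonneg_right _ hc0.le
    rw [abs_of_pos ha, abs_of_pos hb]
    have := hx.1.2; have := hx.2.2
    linarith
  have hi3 : IntegrableOn (fun x : ℝ × ℝ => x.1 * c) S := by
    apply Measure.integrableOn_of_bounded hvol
      (Continuous.aestronglyMeasurable (by fun_prop)) (M := |a| * c)
    filter_upwards [ae_restrict_mem hSm] with x hx
    rw [Real.norm_eq_abs]
    have h1 : (0:ℝ) < x.1 := hx.1.1
    rw [abs_of_nonneg (by positivity)]
    apply mul_le_mul_of_nonneg_right _ hc0.le
    rw [abs_of_pos ha]; exact hx.1.2.le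
  rw [hrw, integral_indicator hSm]
  have key2 : ∫ x in S, (x.1 + x.2) * c ∂(volume) = (a+b)/2 := by
    rw [hS, Measure.volume_eq_prod] at hi2 ⊢
    rw [setIntegral_prod _ hi2]
    have hinner : ∀ x : ℝ, (∫ y in Ioo (0:ℝ) b, (x + y) * c) = (x + b/2) * (b * c) := by
      intro x
      simp_rw [add_comm x]
      rw [int_linear 0 b x c hb.le]; ring
    simp_rw [hinner]
    rw [int_linear 0 a (b/2) (b*c) ha.le, hc]
    field_simp
    ring
  have key3 : ∫ x in S, x.1 * c ∂(volume) = a/2 := by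
    rw [hS, Measure.volume_eq_prod] at hi3 ⊢
    rw [setIntegral_prod _ hi3]
    have hinner : ∀ x : ℝ, (∫ _ in Ioo (0:ℝ) b, x * c) = (x + 0) * (b * c) := by
      intro x
      rw [setIntegral_const, measureReal_def, Real.volume_Ioo, smul_eq_mul, sub_zero,
        ENNReal.toReal_ofReal hb.le]
      ring
    simp_rw [hinner]
    rw [int_linear 0 a 0 (b*c) ha.le, hc]
    field_simp
    ring
  constructor
  · rw [← key3]
    apply setIntegral_mono_on hi3 hi1 hSm
    intro x hx
    apply mul_le_mul_of_nonneg_right _ hc0.le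
    calc x.1 = |x.1| := (abs_of_pos hx.1.1).symm
      _ = Real.sqrt (x.1^2) := (Real.sqrt_sq_eq_abs x.1).symm
      _ ≤ _ := Real.sqrt_le_sqrt (by nlinarith)
  · rw [← key2]
    apply setIntegral_mono_on hi1 hi2 hSm
    intro x hx
    apply mul_le_mul_of_nonneg_right _ hc0.le
    rw [show x.1 + x.2 = Real.sqrt ((x.1 + x.2)^2) from
      (Real.sqrt_sq (by have := hx.1.1; have := hx.2.1; linarith)).symm]
    exact Real.sqrt_le_sqrt (by nlinarith [hx.1.1, hx.2.1])

/-- Sharpness of the asymmetric bound `p ≤ μL/(2A)`: for every `ε > 0` there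
are a rectangular habitat `H = (0,A) × (0,B)` (with area `A·B` and perimeter
`L = 2(A+B)`) and a dispersal density `f_d` (uniform on `(0,a) × (0,b)`, with
mean dispersal distance `μ`) such that `pA/(μL) > 1/2 − ε`, where
`pA = ∬_{x_p∈H} ∬_{x∈Hᶜ} f_d(x−x_p)`.  Hence the constant `1/2` is optimal. -/
theorem asymmetric_bound_sharp (ε : ℝ) (hε : 0 < ε) :
    ∃ A B a b : ℝ, 0 < a ∧ a < A ∧ 0 < b ∧ b < B ∧
      (∫ xp in Set.Ioo 0 A ×ˢ Set.Ioo 0 B,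
          ∫ x in (Set.Ioo 0 A ×ˢ Set.Ioo 0 B)ᶜ,
            (Set.Ioo 0 a ×ˢ Set.Ioo 0 b).indicator (fun _ => 1 / (a * b)) (x - xp)) /
        ((∫ x : ℝ × ℝ, Real.sqrt (x.1 ^ 2 + x.2 ^ 2) *
            (Set.Ioo 0 a ×ˢ Set.Ioo 0 b).indicator (fun _ => 1 / (a * b)) x) *
          (2 * (A + B)))
      > 1 / 2 - ε := by
  set b : ℝ := (min ε 1) / 2 with hbdef
  set B : ℝ := 2 / ε + 2 with hBdef
  have hb : 0 < b := by
    have : 0 < min ε 1 := lt_min hε one_pos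
    positivity
  have hb2 : 2 * b ≤ ε := by
    have := min_le_left ε 1
    rw [hbdef]; linarith
  have hb1 : 2 * b ≤ 1 := by
    have := min_le_right ε 1
    rw [hbdef]; linarith
  have hB2 : (2:ℝ) ≤ B := by
    have : 0 < 2 / ε := by positivity
    rw [hBdef]; linarith
  have hbB : b < B := by linarith
  have hεB : ε * B = 2 + 2 * ε := by
    rw [hBdef]; field_simp
  refine ⟨2, B, 1, b, one_pos, one_lt_two, hb, hbB, ?_⟩
  have hnum := num_bound 1 b 2 B one_pos one_lt_two hb hbB
  obtain ⟨hmu1, hmu2⟩ := mu_bounds 1 b one_pos hb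
  set J := ∫ xp in Set.Ioo (0:ℝ) 2 ×ˢ Set.Ioo (0:ℝ) B,
      ∫ x in (Set.Ioo (0:ℝ) 2 ×ˢ Set.Ioo (0:ℝ) B)ᶜ,
        (Set.Ioo (0:ℝ) 1 ×ˢ Set.Ioo (0:ℝ) b).indicator (fun _ => 1 / (1 * b)) (x - xp)
    with hJdef
  set μ := ∫ x : ℝ × ℝ, Real.sqrt (x.1 ^ 2 + x.2 ^ 2) *
      (Set.Ioo (0:ℝ) 1 ×ˢ Set.Ioo (0:ℝ) b).indicator (fun _ => 1 / (1 * b)) x with hμdef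
  have hμpos : (0:ℝ) < μ := lt_of_lt_of_le (by norm_num) hmu1
  have hLpos : (0:ℝ) < 2 * (2 + B) := by linarith
  have hDpos : (0:ℝ) < μ * (2 * (2 + B)) := mul_pos hμpos hLpos
  have hDbig : μ * (2 * (2 + B)) ≤ ((1 + b) / 2) * (2 * (2 + B)) :=
    mul_le_mul_of_nonneg_right hmu2 hLpos.le
  have hBpos : (0:ℝ) < B := by linarith
  have hDbigpos : (0:ℝ) < ((1 + b) / 2) * (2 * (2 + B)) := by positivity
  have step1 : (1 * B / 2) / (((1 + b) / 2) * (2 * (2 + B))) ≤ (1 * B / 2) / (μ * (2 * (2 + B))) :=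
    div_le_div_of_nonneg_left (by positivity) hDpos hDbig
  have step2 : (1 * B / 2) / (μ * (2 * (2 + B))) ≤ J / (μ * (2 * (2 + B))) :=
    (div_le_div_iff_of_pos_right hDpos).mpr hnum
  have step0 : 1 / 2 - ε < (1 * B / 2) / (((1 + b) / 2) * (2 * (2 + B))) := by
    rw [lt_div_iff₀ hDbigpos, ← mul_lt_mul_iff_right₀ hε]
    have e1 : ε * (2 + B) = 2 + 4 * ε := by
      rw [hBdef]; field_simp; ring
    calc ε * ((1 / 2 - ε) * ((1 + b) / 2 * (2 * (2 + B))))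
        = (1 / 2 - ε) * (1 + b) * (ε * (2 + B)) := by ring
      _ = (1 / 2 - ε) * (1 + b) * (2 + 4 * ε) := by rw [e1]
      _ < 1 + ε := by
          nlinarith [hb, hb2, hε, sq_nonneg ε, mul_nonneg hb.le (sq_nonneg ε)]
      _ = ε * (1 * B / 2) := by
          rw [show ε * (1 * B / 2) = ε * B / 2 by ring, hεB]; ring
  exact lt_of_lt_of_le (lt_of_lt_of_le step0 step1) step2
end

section
/- Let H be the open disk of radius R_H centered at the origin and f_d the uniform density on the disk of radius R_d, with 0 < R_d < R_H. Then the seed-loss probability p = (1/(πR_H²)) ∬_{x_p∈H} ∬_{x∈Hᶜ} f_d(x−x_p) dA dA satisfies pA/(μL) ≥ (R_H − R_d)/(πR_H), where A = πR_H², L = 2πR_H, μ = (2/3)R_d. -/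
open MeasureTheory Real Set
open MeasureTheory Real Set intervalIntegral

noncomputable def rotMap (a b : ℝ) : (ℝ×ℝ) →ₗ[ℝ] (ℝ×ℝ) where
  toFun := fun y => (a*y.1 + b*y.2, -b*y.1 + a*y.2)
  map_add' := by intro x y; simp [Prod.ext_iff]; constructor <;> ring
  map_smul' := by intro c x; simp [Prod.ext_iff]; constructor <;> ring

lemma rotMap_det (a b : ℝ) : LinearMap.det (rotMap a b) = a^2 + b^2 := by
  rw [← LinearMap.det_toMatrix (Module.Basis.finTwoProd ℝ), Matrix.det_fin_two]
  simp [LinearMap.toMatrix_apply, rotMap, Module.Basis.finTwoProd]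
  ring

def capSet (Rd h : ℝ) : Set (ℝ×ℝ) := {y | y.1^2 + y.2^2 < Rd^2 ∧ h ≤ y.1}

lemma measurableSet_disk (R : ℝ) : MeasurableSet {y : ℝ×ℝ | y.1^2 + y.2^2 < R^2} :=
  (isOpen_lt (by fun_prop) continuous_const).measurableSet

lemma disk_subset (R : ℝ) (hR : 0 < R) :
    {y : ℝ×ℝ | y.1^2 + y.2^2 < R^2} ⊆ Ioo (-R) R ×ˢ Ioo (-R) R := by
  rintro ⟨y1, y2⟩ hy
  simp only [mem_setOf_eq] at hy
  constructor <;> constructor <;> nlinarith [sq_nonneg y1, sq_nonneg y2]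

lemma volume_disk_lt_top (R : ℝ) (hR : 0 < R) :
    volume {y : ℝ×ℝ | y.1^2 + y.2^2 < R^2} < ⊤ := by
  refine lt_of_le_of_lt (measure_mono (disk_subset R hR)) ?_
  rw [Measure.volume_eq_prod ℝ ℝ, Measure.prod_prod]
  simp [Real.volume_Ioo]
  exact ENNReal.mul_lt_top ENNReal.ofReal_lt_top ENNReal.ofReal_lt_top

lemma capSet_subset (Rd h : ℝ) : capSet Rd h ⊆ {y : ℝ×ℝ | y.1^2 + y.2^2 < Rd^2} :=
  fun _ hy => hy.1

lemma capSet_empty (Rd h : ℝ) (hRd : 0 < Rd) (hh : Rd ≤ h) : capSet Rd h = ∅ := by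
  ext ⟨y1, y2⟩
  simp only [capSet, mem_setOf_eq, mem_empty_iff_false, iff_false, not_and]
  intro h1 h2
  nlinarith [sq_nonneg y2]

lemma measurableSet_capSet (Rd h : ℝ) : MeasurableSet (capSet Rd h) := by
  have : capSet Rd h = {y : ℝ×ℝ | y.1^2 + y.2^2 < Rd^2} ∩ {y : ℝ×ℝ | h ≤ y.1} := rfl
  rw [this]
  exact (measurableSet_disk Rd).inter (measurableSet_le measurable_const measurable_fst)

lemma volume_capSet (Rd h : ℝ) (h0 : 0 < h) (hRd : h < Rd) :
    volume (capSet Rd h) = ENNReal.ofReal (∫ t in Ico h Rd, 2 * Real.sqrt (Rd^2 - t^2)) := by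
  have hRd0 : 0 < Rd := h0.trans hRd
  have hset : capSet Rd h = regionBetween (fun t => -Real.sqrt (Rd^2 - t^2))
      (fun t => Real.sqrt (Rd^2 - t^2)) (Ico h Rd) := by
    ext ⟨y1, y2⟩
    simp only [capSet, regionBetween, mem_setOf_eq, mem_Ico, mem_Ioo]
    constructor
    · rintro ⟨h1, h2⟩
      have hy1 : y1 < Rd := by nlinarith [sq_nonneg y2]
      have hnn : (0:ℝ) ≤ Rd^2 - y1^2 := by nlinarith [sq_nonneg y2]
      have habs : |y2| < Real.sqrt (Rd^2 - y1^2) := by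
        rw [← Real.sqrt_sq_eq_abs]
        exact Real.sqrt_lt_sqrt (sq_nonneg _) (by nlinarith)
      rcases abs_lt.mp habs with ⟨hl, hr⟩
      exact ⟨⟨h2, hy1⟩, hl, hr⟩
    · rintro ⟨⟨h2, hy1⟩, hl, hr⟩
      have hnn : (0:ℝ) ≤ Rd^2 - y1^2 := by nlinarith
      have : y2^2 < Rd^2 - y1^2 := by
        have habs := abs_lt.mpr ⟨hl, hr⟩
        calc y2^2 = |y2|^2 := (sq_abs y2).symm
        _ < (Real.sqrt (Rd^2 - y1^2))^2 := by
            apply pow_lt_pow_left₀ habs (abs_nonneg _)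
            norm_num
        _ = Rd^2 - y1^2 := Real.sq_sqrt hnn
      exact ⟨by nlinarith, h2⟩
  rw [hset]
  have hc : Continuous (fun t : ℝ => Real.sqrt (Rd^2 - t^2)) := by fun_prop
  have hint : IntegrableOn (fun t => Real.sqrt (Rd^2 - t^2)) (Ico h Rd) := by
    exact (hc.integrableOn_Icc (a := h) (b := Rd)).mono_set Ico_subset_Icc_self
  have hkey := volume_regionBetween_eq_integral (f := fun t => -Real.sqrt (Rd^2 - t^2))
    (g := fun t => Real.sqrt (Rd^2 - t^2)) (s := Ico h Rd) hint.neg hint measurableSet_Ico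
    (fun x _ => by simp)
  rw [Measure.volume_eq_prod ℝ ℝ]
  rw [hkey]
  congr 1
  apply setIntegral_congr_fun measurableSet_Ico
  intro x _
  simp
  ring

noncomputable def Wfn (Rd h : ℝ) : ℝ := ∫ s in h..Rd, 2 * Real.sqrt (Rd^2 - s^2)

lemma f_cont (Rd : ℝ) : Continuous (fun s : ℝ => 2 * Real.sqrt (Rd^2 - s^2)) := by fun_prop

lemma Wfn_hasDerivAt (Rd t : ℝ) :
    HasDerivAt (Wfn Rd) (-(2 * Real.sqrt (Rd^2 - t^2))) t := by
  have h1 : HasDerivAt (fun x => ∫ s in Rd..x, 2 * Real.sqrt (Rd^2 - s^2))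
      (2 * Real.sqrt (Rd^2 - t^2)) t := by
    apply integral_hasDerivAt_right
    · exact ((f_cont Rd).intervalIntegrable _ _)
    · exact (f_cont Rd).stronglyMeasurable.stronglyMeasurableAtFilter
    · exact (f_cont Rd).continuousAt
  have : Wfn Rd = fun x => -(∫ s in Rd..x, 2 * Real.sqrt (Rd^2 - s^2)) := by
    funext x; rw [Wfn, integral_symm]
  rw [this]
  exact h1.neg

lemma Wfn_cont (Rd : ℝ) : Continuous (Wfn Rd) :=
  continuous_iff_continuousAt.mpr fun t => (Wfn_hasDerivAt Rd t).continuousAt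

lemma integral_Wfn (Rd : ℝ) (hRd : 0 < Rd) :
    ∫ t in (0:ℝ)..Rd, Wfn Rd t = 2/3 * Rd^3 := by
  set Φ : ℝ → ℝ := fun t => t * Wfn Rd t - 2/3 * (Real.sqrt (Rd^2 - t^2))^3 with hΦ
  have hcont : ContinuousOn Φ (Icc 0 Rd) := by
    apply Continuous.continuousOn
    exact (continuous_id.mul (Wfn_cont Rd)).sub
      ((continuous_const.mul (((continuous_const.sub (continuous_pow 2)).sqrt).pow 3)))
  have hderiv : ∀ x ∈ Ioo (0:ℝ) Rd, HasDerivWithinAt Φ (Wfn Rd x) (Ioi x) x := by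
    intro x hx
    have hu : (0:ℝ) < Rd^2 - x^2 := by nlinarith [hx.1, hx.2]
    have hune : Rd^2 - x^2 ≠ 0 := ne_of_gt hu
    have hx2 : HasDerivAt (fun t : ℝ => Rd^2 - t^2) (-(2*x)) x := by
      simpa using (hasDerivAt_pow 2 x).const_sub (Rd^2)
    have hsq : HasDerivAt (fun t : ℝ => Real.sqrt (Rd^2 - t^2))
        (1 / (2 * Real.sqrt (Rd^2 - x^2)) * (-(2*x))) x :=
      (Real.hasDerivAt_sqrt hune).comp x hx2
    have hcube := hsq.pow 3
    have h1 : HasDerivAt (fun t => t * Wfn Rd t)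
        (1 * Wfn Rd x + x * (-(2 * Real.sqrt (Rd^2 - x^2)))) x :=
      (hasDerivAt_id x).mul (Wfn_hasDerivAt Rd x)
    have h2 := h1.sub (hcube.const_mul (2/3 : ℝ))
    have heq : 1 * Wfn Rd x + x * (-(2 * Real.sqrt (Rd^2 - x^2)))
        - 2/3 * ((3 : ℕ) * Real.sqrt (Rd^2 - x^2) ^ (3-1) *
          (1 / (2 * Real.sqrt (Rd^2 - x^2)) * (-(2*x)))) = Wfn Rd x := by
      have hs : Real.sqrt (Rd^2 - x^2) ≠ 0 := ne_of_gt (Real.sqrt_pos.mpr hu)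
      have hss := Real.sq_sqrt hu.le
      field_simp
      have hss2 : Real.sqrt (-x^2+Rd^2)^2 = -x^2+Rd^2 := by
        rw [show -x^2+Rd^2 = Rd^2-x^2 by ring]; exact hss
      simp only [Nat.cast_ofNat, show (3:ℕ) - 1 = 2 from rfl]
      ring
    rw [heq] at h2
    exact h2.hasDerivWithinAt
  have hint : IntervalIntegrable (Wfn Rd) volume 0 Rd :=
    (Wfn_cont Rd).intervalIntegrable _ _
  have := intervalIntegral.integral_eq_sub_of_hasDeriv_right_of_le hRd.le hcont hderiv hint
  rw [this, hΦ]
  simp [Wfn, intervalIntegral.integral_same, Real.sqrt_sq hRd.le]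

noncomputable def Sfn (Rd h : ℝ) : ℝ := (volume (capSet Rd h)).toReal

lemma Sfn_zero (Rd h : ℝ) (hRd : 0 < Rd) (hh : Rd ≤ h) : Sfn Rd h = 0 := by
  rw [Sfn, capSet_empty Rd h hRd hh]; simp

lemma volume_capSet_ne_top (Rd h : ℝ) (hRd : 0 < Rd) : volume (capSet Rd h) ≠ ⊤ :=
  ne_of_lt (lt_of_le_of_lt (measure_mono (capSet_subset Rd h)) (volume_disk_lt_top Rd hRd))

lemma Sfn_antitone (Rd : ℝ) (hRd : 0 < Rd) : Antitone (Sfn Rd) := by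
  intro h h' hle
  apply ENNReal.toReal_mono (volume_capSet_ne_top Rd h hRd)
  apply measure_mono
  intro y hy
  exact ⟨hy.1, hle.trans hy.2⟩

lemma Sfn_measurable (Rd : ℝ) (hRd : 0 < Rd) : Measurable (Sfn Rd) :=
  (Sfn_antitone Rd hRd).measurable

lemma Sfn_nonneg (Rd h : ℝ) : 0 ≤ Sfn Rd h := ENNReal.toReal_nonneg

lemma Sfn_le (Rd h : ℝ) (hRd : 0 < Rd) :
    Sfn Rd h ≤ (volume {y : ℝ×ℝ | y.1^2 + y.2^2 < Rd^2}).toReal := by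
  apply ENNReal.toReal_mono (ne_of_lt (volume_disk_lt_top Rd hRd))
  exact measure_mono (capSet_subset Rd h)

lemma Sfn_eq_Wfn (Rd h : ℝ) (h0 : 0 < h) (hh : h ≤ Rd) : Sfn Rd h = Wfn Rd h := by
  rcases eq_or_lt_of_le hh with heq | hlt
  · rw [heq, Sfn_zero Rd Rd (h0.trans_le hh) le_rfl, Wfn, intervalIntegral.integral_same]
  · rw [Sfn, volume_capSet Rd h h0 hlt, ENNReal.toReal_ofReal, Wfn,
      intervalIntegral.integral_of_le hlt.le, MeasureTheory.integral_Ioc_eq_integral_Ioo,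
      ← MeasureTheory.integral_Ico_eq_integral_Ioo]
    apply setIntegral_nonneg measurableSet_Ico
    intro x _
    positivity

lemma Sfn_intervalIntegrable (Rd : ℝ) (hRd : 0 < Rd) (a b : ℝ) :
    IntervalIntegrable (Sfn Rd) volume a b := by
  apply IntervalIntegrable.mono_fun'
    (g := fun _ => (volume {y : ℝ×ℝ | y.1^2 + y.2^2 < Rd^2}).toReal)
  · exact intervalIntegrable_const
  · exact ((Sfn_measurable Rd hRd).aestronglyMeasurable)
  · filter_upwards with x
    rw [Real.norm_eq_abs, abs_of_nonneg (Sfn_nonneg Rd x)]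
    exact Sfn_le Rd x hRd

lemma radial_integral (Rd RH : ℝ) (hRd : 0 < Rd) (hRdH : Rd < RH) :
    ∫ r in Ioo (0:ℝ) RH, Sfn Rd (RH - r) = 2/3 * Rd^3 := by
  have h0RH : (0:ℝ) < RH := hRd.trans hRdH
  rw [← MeasureTheory.integral_Ioc_eq_integral_Ioo,
    ← intervalIntegral.integral_of_le h0RH.le,
    intervalIntegral.integral_comp_sub_left (Sfn Rd) RH]
  simp only [sub_self, sub_zero]
  rw [← intervalIntegral.integral_add_adjacent_intervals (a := (0:ℝ)) (b := Rd) (c := RH)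
      (Sfn_intervalIntegrable Rd hRd 0 Rd) (Sfn_intervalIntegrable Rd hRd Rd RH)]
  have h1 : ∫ t in (0:ℝ)..Rd, Sfn Rd t = 2/3 * Rd^3 := by
    rw [← integral_Wfn Rd hRd, intervalIntegral.integral_of_le hRd.le,
      intervalIntegral.integral_of_le hRd.le]
    apply setIntegral_congr_fun measurableSet_Ioc
    intro x hx
    exact Sfn_eq_Wfn Rd x hx.1 hx.2
  have h2 : ∫ t in Rd..RH, Sfn Rd t = 0 := by
    rw [intervalIntegral.integral_of_le hRdH.le]
    rw [show (0:ℝ) = ∫ t in Ioc Rd RH, (0:ℝ) by simp]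
    apply setIntegral_congr_fun measurableSet_Ioc
    intro x hx
    exact Sfn_zero Rd x hRd hx.1.le
  rw [h1, h2, add_zero]

lemma cap_le_loss (Rd RH : ℝ) (hRd : 0 < Rd) (hRdH : Rd < RH) (xp : ℝ×ℝ)
    (hxp : xp.1^2 + xp.2^2 < RH^2) :
    volume (capSet Rd (RH - Real.sqrt (xp.1^2 + xp.2^2)))
      ≤ volume ({y : ℝ×ℝ | y.1^2 + y.2^2 < RH^2}ᶜ
          ∩ {x : ℝ×ℝ | x - xp ∈ {y : ℝ×ℝ | y.1^2 + y.2^2 < Rd^2}}) := by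
  have h0RH : (0:ℝ) < RH := hRd.trans hRdH
  set r : ℝ := Real.sqrt (xp.1^2 + xp.2^2) with hrdef
  set h : ℝ := RH - r with hhdef
  rcases le_or_gt Rd h with hc | hc
  · rw [capSet_empty Rd h hRd hc]
    simp
  · -- h < Rd, so r > RH - Rd > 0
    have hrpos : 0 < r := by
      have : RH - Rd < r := by linarith
      linarith [hRdH, hRd]
    have hr2 : r^2 = xp.1^2 + xp.2^2 := Real.sq_sqrt (by positivity)
    have hrne : r ≠ 0 := ne_of_gt hrpos
    set a : ℝ := xp.1 / r with hadef
    set b : ℝ := xp.2 / r with hbdef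
    have hab : a^2 + b^2 = 1 := by
      rw [hadef, hbdef]
      field_simp
      linarith [hr2]
    have hxp1 : xp.1 = a * r := by rw [hadef]; field_simp
    have hxp2 : xp.2 = b * r := by rw [hbdef]; field_simp
    have hincl : (fun x : ℝ×ℝ => x - xp) ⁻¹' ((rotMap a b) ⁻¹' capSet Rd h)
        ⊆ {y : ℝ×ℝ | y.1^2 + y.2^2 < RH^2}ᶜ
          ∩ {x : ℝ×ℝ | x - xp ∈ {y : ℝ×ℝ | y.1^2 + y.2^2 < Rd^2}} := by
      intro x hx
      simp only [mem_preimage, rotMap, capSet, LinearMap.coe_mk, AddHom.coe_mk,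
        mem_setOf_eq, Prod.fst_sub, Prod.snd_sub] at hx
      set v1 : ℝ := x.1 - xp.1 with hv1
      set v2 : ℝ := x.2 - xp.2 with hv2
      obtain ⟨hx1, hx2⟩ := hx
      have hsum : (a*v1 + b*v2)^2 + (-b*v1 + a*v2)^2 = v1^2 + v2^2 := by
        linear_combination (v1^2 + v2^2) * hab
      constructor
      · simp only [mem_compl_iff, mem_setOf_eq, not_lt]
        have hkey : RH ≤ r + (a*v1 + b*v2) := by
          have : RH - r ≤ a*v1 + b*v2 := hx2
          linarith
        have hx1eq : x.1 = a*r + v1 := by rw [hv1, hxp1]; ring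
        have hx2eq : x.2 = b*r + v2 := by rw [hv2, hxp2]; ring
        have step1 : (r + (a*v1 + b*v2))^2 ≤ x.1^2 + x.2^2 := by
          rw [hx1eq, hx2eq]
          nlinarith [sq_nonneg (a*v2 - b*v1)]
        have step2 : RH^2 ≤ (r + (a*v1 + b*v2))^2 := by nlinarith
        linarith
      · simp only [mem_setOf_eq, Prod.fst_sub, Prod.snd_sub, ← hv1, ← hv2]
        linarith [hsum, hx1]
    calc volume (capSet Rd h)
        = volume ((fun x : ℝ×ℝ => x - xp) ⁻¹' ((rotMap a b) ⁻¹' capSet Rd h)) := by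
          rw [show (fun x : ℝ×ℝ => x - xp) = (fun x : ℝ×ℝ => x + (-xp)) from
            funext fun x => sub_eq_add_neg x xp]
          rw [measure_preimage_add_right]
          have hdet : LinearMap.det (rotMap a b) ≠ 0 := by
            rw [rotMap_det, hab]; norm_num
          rw [Measure.addHaar_preimage_linearMap volume hdet, rotMap_det, hab]
          norm_num
      _ ≤ _ := measure_mono hincl

/-- Lower bound for the disk habitat.  `H` is the open disk of radius `R_H`
(area `A = πR_H²`, perimeter `L = 2πR_H`) and `f_d` is uniform on the disk of
radius `R_d < R_H` (mean dispersal distance `μ = (2/3)R_d`).  With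
`pA = ∬_{x_p∈H} ∬_{x∈Hᶜ} f_d(x−x_p)` and `p = pA/A`, we have
`pA/(μL) ≥ (R_H − R_d)/(πR_H)`. -/
theorem disk_pA_div_muL_ge
    (RH Rd : ℝ) (hRd : 0 < Rd) (hRdH : Rd < RH) :
    (∫ xp in {y : ℝ × ℝ | y.1 ^ 2 + y.2 ^ 2 < RH ^ 2},
        ∫ x in {y : ℝ × ℝ | y.1 ^ 2 + y.2 ^ 2 < RH ^ 2}ᶜ,
          ({y : ℝ × ℝ | y.1 ^ 2 + y.2 ^ 2 < Rd ^ 2}.indicator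
            (fun _ => 1 / (Real.pi * Rd ^ 2)) (x - xp))) /
      (((2 / 3) * Rd) * (2 * Real.pi * RH))
    ≥ (RH - Rd) / (Real.pi * RH) := by
  have h0RH : (0:ℝ) < RH := hRd.trans hRdH
  set H : Set (ℝ×ℝ) := {y : ℝ × ℝ | y.1 ^ 2 + y.2 ^ 2 < RH ^ 2} with hHdef
  set D : Set (ℝ×ℝ) := {y : ℝ × ℝ | y.1 ^ 2 + y.2 ^ 2 < Rd ^ 2} with hDdef
  set c : ℝ := 1 / (Real.pi * Rd ^ 2) with hcdef
  have hc : 0 < c := by rw [hcdef]; positivity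
  have hHmeas : MeasurableSet H := measurableSet_disk RH
  have hDmeas : MeasurableSet D := measurableSet_disk Rd
  have hDvol : volume D ≠ ⊤ := ne_of_lt (volume_disk_lt_top Rd hRd)
  -- translate set
  have hAvol : ∀ xp : ℝ×ℝ, volume {x : ℝ×ℝ | x - xp ∈ D} = volume D := by
    intro xp
    have : {x : ℝ×ℝ | x - xp ∈ D} = (fun x : ℝ×ℝ => x + (-xp)) ⁻¹' D := by
      ext x; simp [sub_eq_add_neg]
    rw [this, measure_preimage_add_right]
  -- Step A: compute the inner integral
  have hinner : ∀ xp : ℝ×ℝ,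
      (∫ x in Hᶜ, D.indicator (fun _ => c) (x - xp))
        = c * (volume (Hᶜ ∩ {x : ℝ×ℝ | x - xp ∈ D})).toReal := by
    intro xp
    have hAm : MeasurableSet {x : ℝ×ℝ | x - xp ∈ D} :=
      hDmeas.preimage (measurable_id.sub measurable_const)
    have h1 : ∀ x : ℝ×ℝ, D.indicator (fun _ => c) (x - xp)
        = ({x : ℝ×ℝ | x - xp ∈ D}).indicator (fun _ => c) x := by
      intro x
      by_cases hx : x - xp ∈ D <;> simp [Set.indicator, hx]
    simp only [h1]
    rw [setIntegral_indicator hAm, setIntegral_const, smul_eq_mul, mul_comm]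
    rfl
  -- the two comparison functions
  set g : ℝ×ℝ → ℝ := fun xp => c * (volume (Hᶜ ∩ {x : ℝ×ℝ | x - xp ∈ D})).toReal with hgdef
  set G : ℝ×ℝ → ℝ := fun xp => c * Sfn Rd (RH - Real.sqrt (xp.1^2 + xp.2^2)) with hGdef
  have hGg : ∀ xp ∈ H, G xp ≤ g xp := by
    intro xp hxp
    apply mul_le_mul_of_nonneg_left _ hc.le
    apply ENNReal.toReal_mono
    · exact ne_of_lt (lt_of_le_of_lt (measure_mono Set.inter_subset_right)
        ((hAvol xp).le.trans_lt (lt_of_le_of_ne le_top hDvol)))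
    · exact cap_le_loss Rd RH hRd hRdH xp hxp
  -- measurability of g
  have hgmeas : Measurable g := by
    have hsprod : MeasurableSet {p : (ℝ×ℝ)×(ℝ×ℝ) | p.2 ∈ Hᶜ ∧ p.2 - p.1 ∈ D} :=
      (hHmeas.compl.preimage measurable_snd).inter
        (hDmeas.preimage (measurable_snd.sub measurable_fst))
    have hkey : Measurable fun xp : ℝ×ℝ =>
        volume (Prod.mk xp ⁻¹' {p : (ℝ×ℝ)×(ℝ×ℝ) | p.2 ∈ Hᶜ ∧ p.2 - p.1 ∈ D}) :=
      measurable_measure_prodMk_left hsprod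
    have hsets : ∀ xp : ℝ×ℝ, Prod.mk xp ⁻¹' {p : (ℝ×ℝ)×(ℝ×ℝ) | p.2 ∈ Hᶜ ∧ p.2 - p.1 ∈ D}
        = Hᶜ ∩ {x : ℝ×ℝ | x - xp ∈ D} := by
      intro xp; ext x; exact Iff.rfl
    simp only [hsets] at hkey
    exact measurable_const.mul (hkey.ennreal_toReal)
  have hGmeas : Measurable G := by
    apply measurable_const.mul
    exact (Sfn_measurable Rd hRd).comp (by fun_prop)
  have hHvol : volume H ≠ ⊤ := ne_of_lt (volume_disk_lt_top RH h0RH)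
  -- integrability
  have hgint : IntegrableOn g H := by
    apply Measure.integrableOn_of_bounded hHvol
      (hgmeas.aestronglyMeasurable) (M := c * (volume D).toReal)
    filter_upwards with xp
    rw [hgdef, Real.norm_eq_abs, abs_of_nonneg (mul_nonneg hc.le ENNReal.toReal_nonneg)]
    apply mul_le_mul_of_nonneg_left _ hc.le
    apply ENNReal.toReal_mono hDvol
    exact (measure_mono Set.inter_subset_right).trans (hAvol xp).le
  have hGint : IntegrableOn G H := by
    apply Measure.integrableOn_of_bounded hHvol
      (hGmeas.aestronglyMeasurable) (M := c * (volume D).toReal)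
    filter_upwards with xp
    rw [hGdef, Real.norm_eq_abs, abs_of_nonneg (mul_nonneg hc.le (Sfn_nonneg _ _))]
    apply mul_le_mul_of_nonneg_left _ hc.le
    have := Sfn_le Rd (RH - Real.sqrt (xp.1^2 + xp.2^2)) hRd
    rw [hDdef]
    exact this
  -- the main comparison
  have hcomp : (∫ xp in H, G xp) ≤ ∫ xp in H, g xp :=
    setIntegral_mono_on hGint hgint hHmeas hGg
  -- polar computation of ∫ G over H
  have hpolar : (∫ xp in H, G xp)
      = (∫ r in Ioo (0:ℝ) RH, r * (c * Sfn Rd (RH - r))) * (2 * Real.pi) := by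
    have hind : (∫ xp in H, G xp) = ∫ xp, H.indicator G xp := (MeasureTheory.integral_indicator hHmeas).symm
    rw [hind, ← integral_comp_polarCoord_symm (H.indicator G)]
    have hcong : ∀ p ∈ polarCoord.target,
        p.1 • (H.indicator G) (polarCoord.symm p)
          = (Ioo (0:ℝ) RH ×ˢ Ioo (-Real.pi) Real.pi).indicator
              (fun q => q.1 * (c * Sfn Rd (RH - q.1))) p := by
      rintro ⟨pr, pθ⟩ hp
      rw [polarCoord_target] at hp
      obtain ⟨hpr, hpθ⟩ := hp
      simp only [mem_Ioi] at hpr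
      have hsymm : polarCoord.symm (pr, pθ) = (pr * Real.cos pθ, pr * Real.sin pθ) := by
        rw [polarCoord_symm_apply]
      have hsq : (pr * Real.cos pθ)^2 + (pr * Real.sin pθ)^2 = pr^2 := by
        nlinarith [Real.sin_sq_add_cos_sq pθ]
      by_cases hlt : pr < RH
      · have hmem : polarCoord.symm (pr, pθ) ∈ H := by
          rw [hsymm, hHdef]
          simp only [mem_setOf_eq]
          rw [hsq]
          nlinarith
        have hmem2 : ((pr, pθ) : ℝ×ℝ) ∈ Ioo (0:ℝ) RH ×ˢ Ioo (-Real.pi) Real.pi :=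
          ⟨⟨hpr, hlt⟩, hpθ⟩
        rw [Set.indicator_of_mem hmem, Set.indicator_of_mem hmem2]
        rw [hGdef]
        simp only [hsymm, smul_eq_mul]
        rw [hsq, Real.sqrt_sq hpr.le]
      · have hmem : polarCoord.symm (pr, pθ) ∉ H := by
          rw [hsymm, hHdef]
          simp only [mem_setOf_eq, not_lt]
          rw [hsq]
          nlinarith [not_lt.mp hlt]
        have hmem2 : ((pr, pθ) : ℝ×ℝ) ∉ Ioo (0:ℝ) RH ×ˢ Ioo (-Real.pi) Real.pi := by
          intro hmm
          exact hlt hmm.1.2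
        rw [Set.indicator_of_notMem hmem, Set.indicator_of_notMem hmem2, smul_zero]
    rw [setIntegral_congr_fun polarCoord.open_target.measurableSet hcong]
    have hsub : (Ioo (0:ℝ) RH ×ˢ Ioo (-Real.pi) Real.pi) ⊆ polarCoord.target := by
      rw [polarCoord_target]
      exact Set.prod_mono (Ioo_subset_Ioi_self) (subset_rfl)
    rw [setIntegral_indicator (measurableSet_Ioo.prod measurableSet_Ioo),
      Set.inter_eq_self_of_subset_right hsub]
    have : (fun q : ℝ×ℝ => q.1 * (c * Sfn Rd (RH - q.1)))
        = fun q : ℝ×ℝ => (fun r => r * (c * Sfn Rd (RH - r))) q.1 * (fun _ : ℝ => (1:ℝ)) q.2 := by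
      funext q; simp
    rw [this, Measure.volume_eq_prod ℝ ℝ,
      setIntegral_prod_mul (fun r : ℝ => r * (c * Sfn Rd (RH - r))) (fun _ : ℝ => (1:ℝ))
        (Ioo (0:ℝ) RH) (Ioo (-Real.pi) Real.pi)]
    congr 1
    rw [setIntegral_const, measureReal_def, Real.volume_Ioo, smul_eq_mul, mul_one,
      ENNReal.toReal_ofReal (by linarith [Real.pi_pos])]
    ring
  -- lower bound on the radial integral
  have hradge : ((RH - Rd) * (c * (2/3 * Rd^3)))
      ≤ ∫ r in Ioo (0:ℝ) RH, r * (c * Sfn Rd (RH - r)) := by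
    have hmono : ∀ r ∈ Ioo (0:ℝ) RH,
        (RH - Rd) * (c * Sfn Rd (RH - r)) ≤ r * (c * Sfn Rd (RH - r)) := by
      intro r hr
      rcases le_or_gt r (RH - Rd) with h1 | h1
      · rw [Sfn_zero Rd (RH - r) hRd (by linarith)]
        simp
      · exact mul_le_mul_of_nonneg_right h1.le (mul_nonneg hc.le (Sfn_nonneg _ _))
    have hSmeas : Measurable fun r : ℝ => Sfn Rd (RH - r) :=
      (Sfn_measurable Rd hRd).comp (by fun_prop)
    have hIoovol : volume (Ioo (0:ℝ) RH) ≠ ⊤ := by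
      rw [Real.volume_Ioo]; exact ENNReal.ofReal_ne_top
    have hint1 : IntegrableOn (fun r : ℝ => r * (c * Sfn Rd (RH - r))) (Ioo (0:ℝ) RH) := by
      apply Measure.integrableOn_of_bounded hIoovol
        ((measurable_id'.mul (hSmeas.const_mul c)).aestronglyMeasurable)
        (M := RH * (c * (volume D).toReal))
      rw [ae_restrict_iff' measurableSet_Ioo]
      filter_upwards with r hr
      simp only [Pi.mul_apply]
      rw [Real.norm_eq_abs, abs_of_nonneg (mul_nonneg hr.1.le (mul_nonneg hc.le (Sfn_nonneg _ _)))]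
      apply mul_le_mul hr.2.le (mul_le_mul_of_nonneg_left (by rw [hDdef]; exact Sfn_le _ _ hRd) hc.le)
        (mul_nonneg hc.le (Sfn_nonneg _ _)) h0RH.le
    have hint2 : IntegrableOn (fun r : ℝ => (RH - Rd) * (c * Sfn Rd (RH - r))) (Ioo (0:ℝ) RH) := by
      apply Measure.integrableOn_of_bounded hIoovol
        (((hSmeas.const_mul c).const_mul (RH - Rd)).aestronglyMeasurable)
        (M := (RH - Rd) * (c * (volume D).toReal))
      filter_upwards with r
      rw [Real.norm_eq_abs, abs_of_nonneg (mul_nonneg (by linarith) (mul_nonneg hc.le (Sfn_nonneg _ _)))]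
      apply mul_le_mul_of_nonneg_left
        (mul_le_mul_of_nonneg_left (by rw [hDdef]; exact Sfn_le _ _ hRd) hc.le) (by linarith)
    calc (RH - Rd) * (c * (2/3 * Rd^3))
        = ∫ r in Ioo (0:ℝ) RH, (RH - Rd) * (c * Sfn Rd (RH - r)) := by
          rw [MeasureTheory.integral_const_mul, MeasureTheory.integral_const_mul, radial_integral Rd RH hRd hRdH]
      _ ≤ _ := setIntegral_mono_on hint2 hint1 measurableSet_Ioo hmono
  -- put everything together
  have hfinal : (4/3) * Rd * (RH - Rd) ≤ ∫ xp in H, ∫ x in Hᶜ, D.indicator (fun _ => c) (x - xp) := by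
    have heq : (∫ xp in H, ∫ x in Hᶜ, D.indicator (fun _ => c) (x - xp)) = ∫ xp in H, g xp :=
      setIntegral_congr_fun hHmeas (fun xp _ => hinner xp)
    rw [heq]
    have h1 : ((RH - Rd) * (c * (2/3 * Rd^3))) * (2 * Real.pi) = (4/3) * Rd * (RH - Rd) := by
      rw [hcdef]
      field_simp
      ring
    calc (4/3) * Rd * (RH - Rd) = ((RH - Rd) * (c * (2/3 * Rd^3))) * (2 * Real.pi) := h1.symm
      _ ≤ (∫ r in Ioo (0:ℝ) RH, r * (c * Sfn Rd (RH - r))) * (2 * Real.pi) := by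
          apply mul_le_mul_of_nonneg_right hradge (by positivity)
      _ = ∫ xp in H, G xp := hpolar.symm
      _ ≤ ∫ xp in H, g xp := hcomp
  rw [ge_iff_le]
  have hd : (0:ℝ) < ((2 / 3) * Rd) * (2 * Real.pi * RH) := by positivity
  have hrw : (RH - Rd) / (Real.pi * RH)
      = ((4/3) * Rd * (RH - Rd)) / (((2 / 3) * Rd) * (2 * Real.pi * RH)) := by
    rw [eq_div_iff (ne_of_gt hd)]
    field_simp
    ring
  rw [hrw]
  gcongr
end

section
/- For every ε > 0 there exist a disk habitat H with area A and perimeter L and a rotationally symmetric probability density f_d with mean dispersal distance μ such that pA/(μL) > 1/π − ε, where p is the probability that a seed from a uniformly random plant in H, displaced by an independent draw from f_d, lands outside H. Hence the constant 1/π in the symmetric bound p ≤ μL/(πA) is optimal. -/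
open MeasureTheory Real Set

open scoped ENNReal


theorem lintegral_comp_polarCoord_symm' (f : ℝ × ℝ → ℝ≥0∞) :
    (∫⁻ p in polarCoord.target, ENNReal.ofReal p.1 * f (polarCoord.symm p)) = ∫⁻ p, f p := by
  set B : ℝ × ℝ → ℝ × ℝ →L[ℝ] ℝ × ℝ := fun p =>
    LinearMap.toContinuousLinearMap (Matrix.toLin (Module.Basis.finTwoProd ℝ) (Module.Basis.finTwoProd ℝ)
      !![cos p.2, -p.1 * sin p.2; sin p.2, p.1 * cos p.2])
  have A : ∀ p ∈ polarCoord.target, HasFDerivWithinAt polarCoord.symm (B p) polarCoord.target p :=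
    fun p _ => (hasFDerivAt_polarCoord_symm p).hasFDerivWithinAt
  have B_det : ∀ p, (B p).det = p.1 := by
    intro p
    conv_rhs => rw [← one_mul p.1, ← cos_sq_add_sin_sq p.2]
    simp only [B, neg_mul, LinearMap.det_toContinuousLinearMap, LinearMap.det_toLin,
      Matrix.det_fin_two_of, sub_neg_eq_add]
    ring
  symm
  calc
    ∫⁻ p, f p = ∫⁻ p in polarCoord.source, f p := by
      rw [← setLIntegral_univ]
      exact (setLIntegral_congr polarCoord_source_ae_eq_univ.symm)
    _ = ∫⁻ p in polarCoord.symm '' polarCoord.target, f p := by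
      rw [polarCoord.symm_image_target_eq_source]
    _ = ∫⁻ p in polarCoord.target, ENNReal.ofReal |(B p).det| * f (polarCoord.symm p) := by
      exact lintegral_image_eq_lintegral_abs_det_fderiv_mul volume
        polarCoord.open_target.measurableSet A polarCoord.symm.injOn f
    _ = ∫⁻ p in polarCoord.target, ENNReal.ofReal p.1 * f (polarCoord.symm p) := by
      refine setLIntegral_congr_fun polarCoord.open_target.measurableSet
        (fun x hx => ?_)
      rw [B_det, abs_of_pos hx.1]


theorem polarCoord_symm_eq (p : ℝ × ℝ) :
    polarCoord.symm p = (p.1 * Real.cos p.2, p.1 * Real.sin p.2) := rfl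

theorem polarCoord_target_eq : polarCoord.target = Ioi (0:ℝ) ×ˢ Ioo (-π) π := rfl

theorem denom_eval :
    (∫ x : ℝ × ℝ, Real.sqrt (x.1 ^ 2 + x.2 ^ 2) *
      ({y : ℝ × ℝ | y.1 ^ 2 + y.2 ^ 2 < 1}.indicator (fun _ => 1 / Real.pi) x)) = 2 / 3 := by
  rw [← integral_comp_polarCoord_symm]
  have h1 : ∀ p ∈ polarCoord.target,
      p.1 • (Real.sqrt ((polarCoord.symm p).1 ^ 2 + (polarCoord.symm p).2 ^ 2) *
        ({y : ℝ × ℝ | y.1 ^ 2 + y.2 ^ 2 < 1}.indicator (fun _ => 1 / Real.pi)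
          (polarCoord.symm p)))
      = (Ioo (0:ℝ) 1).indicator (fun r => r ^ 2 * (1 / Real.pi)) p.1 := by
    rintro ⟨r, θ⟩ hp
    rw [polarCoord_target_eq] at hp
    obtain ⟨hr, hθ⟩ := hp
    rw [polarCoord_symm_eq]
    have hr' : (0:ℝ) < r := hr
    have hsq : (r * Real.cos θ) ^ 2 + (r * Real.sin θ) ^ 2 = r ^ 2 := by
      have := Real.sin_sq_add_cos_sq θ; nlinarith
    simp only
    rw [hsq, Real.sqrt_sq hr'.le]
    by_cases h : r < 1
    · rw [Set.indicator_of_mem, Set.indicator_of_mem]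
      · simp only [smul_eq_mul]; ring
      · exact ⟨hr', h⟩
      · show (r * Real.cos θ) ^ 2 + (r * Real.sin θ) ^ 2 < 1
        rw [hsq]; nlinarith
    · rw [Set.indicator_of_notMem, Set.indicator_of_notMem]
      · simp
      · intro hmem; exact h hmem.2
      · show ¬ ((r * Real.cos θ) ^ 2 + (r * Real.sin θ) ^ 2 < 1)
        rw [hsq]; push_neg at h ⊢; nlinarith
  rw [setIntegral_congr_fun polarCoord.open_target.measurableSet h1]
  rw [polarCoord_target_eq]
  rw [show (volume : Measure (ℝ × ℝ)) = (volume : Measure ℝ).prod volume from Measure.volume_eq_prod ℝ ℝ,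
    ← Measure.prod_restrict]
  have hmul := MeasureTheory.integral_prod_mul (μ := volume.restrict (Ioi (0:ℝ)))
    (ν := volume.restrict (Ioo (-π) π))
    (f := fun r => (Ioo (0:ℝ) 1).indicator (fun r => r ^ 2 * (1 / Real.pi)) r)
    (g := fun _ => (1:ℝ))
  simp only [mul_one] at hmul
  rw [hmul]
  rw [setIntegral_indicator measurableSet_Ioo]
  have hIoi : Ioi (0:ℝ) ∩ Ioo 0 1 = Ioo 0 1 := by
    ext x; simp only [mem_inter_iff, mem_Ioi, mem_Ioo]; tauto
  rw [hIoi, integral_const]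
  simp only [smul_eq_mul, mul_one, Measure.restrict_apply_univ, Real.volume_Ioo]
  rw [← MeasureTheory.integral_Ioc_eq_integral_Ioo, ← intervalIntegral.integral_of_le (by norm_num : (0:ℝ) ≤ 1)]
  have hval : (∫ r in (0:ℝ)..1, r ^ 2 * (1 / Real.pi)) = (1/3) * (1 / Real.pi) := by
    rw [intervalIntegral.integral_mul_const, integral_pow]; norm_num
  rw [hval, measureReal_restrict_apply_univ, measureReal_def, Real.volume_Ioo, sub_neg_eq_add, ENNReal.toReal_ofReal (by positivity)]
  have hπ : Real.pi ≠ 0 := Real.pi_ne_zero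
  field_simp
  ring

-- max(cos, 0) integral over a period
theorem cos_max_integral (θ : ℝ) :
    (∫ φ in Ioo (-π) π, max (Real.cos (φ - θ)) 0) = 2 := by
  rw [← MeasureTheory.integral_Ioc_eq_integral_Ioo,
    ← intervalIntegral.integral_of_le (by linarith [Real.pi_pos] : -π ≤ π)]
  rw [intervalIntegral.integral_comp_sub_right (fun ψ => max (Real.cos ψ) 0) θ]
  have hper : Function.Periodic (fun ψ => max (Real.cos ψ) 0) (2 * π) := by
    intro x; simp [Real.cos_add_two_pi]
  have h1 := hper.intervalIntegral_add_eq (-π - θ) (-π)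
  have e1 : -π - θ + 2 * π = π - θ := by ring
  have e2 : -π + 2 * π = π := by ring
  rw [e1, e2] at h1
  rw [h1]
  have hint : ∀ a b : ℝ, IntervalIntegrable (fun ψ => max (Real.cos ψ) 0) volume a b :=
    fun a b => (Real.continuous_cos.max continuous_const).intervalIntegrable a b
  have hsplit1 := intervalIntegral.integral_add_adjacent_intervals (a := -π) (b := -(π/2))
    (c := π) (hint _ _) (hint _ _)
  have hsplit2 := intervalIntegral.integral_add_adjacent_intervals (a := -(π/2)) (b := π/2)
    (c := π) (hint _ _) (hint _ _)
  have hπ := Real.pi_pos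
  have p1 : (∫ ψ in (-π)..(-(π/2)), max (Real.cos ψ) 0) = 0 := by
    rw [intervalIntegral.integral_congr (g := fun _ => (0:ℝ)) ?_]
    · simp
    · intro ψ hψ
      rw [Set.uIcc_of_le (by linarith)] at hψ
      have h1 : Real.cos ψ ≤ 0 := by
        rw [← Real.cos_neg]
        exact Real.cos_nonpos_of_pi_div_two_le_of_le (by linarith [hψ.2]) (by linarith [hψ.1])
      simpa using max_eq_right h1
  have p3 : (∫ ψ in (π/2)..π, max (Real.cos ψ) 0) = 0 := by
    rw [intervalIntegral.integral_congr (g := fun _ => (0:ℝ)) ?_]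
    · simp
    · intro ψ hψ
      rw [Set.uIcc_of_le (by linarith)] at hψ
      have h1 : Real.cos ψ ≤ 0 :=
        Real.cos_nonpos_of_pi_div_two_le_of_le hψ.1 (by linarith [hψ.2])
      simpa using max_eq_right h1
  have p2 : (∫ ψ in (-(π/2))..(π/2), max (Real.cos ψ) 0) = 2 := by
    rw [intervalIntegral.integral_congr (g := fun ψ => Real.cos ψ) ?_]
    · rw [integral_cos]; simp; norm_num
    · intro ψ hψ
      rw [Set.uIcc_of_le (by linarith)] at hψ
      exact max_eq_left (Real.cos_nonneg_of_mem_Icc hψ)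
  linarith


section Numer
variable (RH : ℝ)

-- the indicator kernel in ℝ≥0∞
noncomputable def Fk : ℝ × ℝ → ℝ≥0∞ :=
  fun d => if d.1 ^ 2 + d.2 ^ 2 < 1 then ENNReal.ofReal (1 / π) else 0

-- condition function after translation
noncomputable def ek (xp d : ℝ × ℝ) : ℝ≥0∞ :=
  if (RH - Real.sqrt (xp.1 ^ 2 + xp.2 ^ 2)) * Real.sqrt (xp.1 ^ 2 + xp.2 ^ 2)
      < d.1 * xp.1 + d.2 * xp.2 then 1 else 0

-- polar version of the inner integrand
noncomputable def Psi (r θ s φ : ℝ) : ℝ≥0∞ :=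
  if s < 1 ∧ RH - r < s * Real.cos (φ - θ) then ENNReal.ofReal (s * (1 / π)) else 0

end Numer

theorem Fk_meas : Measurable Fk := by
  have : Fk = Set.indicator {y : ℝ × ℝ | y.1 ^ 2 + y.2 ^ 2 < 1}
      (fun _ => ENNReal.ofReal (1 / π)) := by
    funext d; simp [Fk, Set.indicator_apply]
  rw [this]
  exact measurable_const.indicator
    ((isOpen_lt (by continuity) continuous_const).measurableSet)

theorem Psi_meas (RH : ℝ) :
    Measurable (fun z : (ℝ × ℝ) × (ℝ × ℝ) => Psi RH z.1.1 z.1.2 z.2.1 z.2.2) := by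
  unfold Psi
  have hs1 : MeasurableSet {z : (ℝ × ℝ) × (ℝ × ℝ) | z.2.1 < 1 ∧
      RH - z.1.1 < z.2.1 * Real.cos (z.2.2 - z.1.2)} := by
    apply MeasurableSet.inter
    · exact measurableSet_lt (f := fun z : (ℝ × ℝ) × (ℝ × ℝ) => z.2.1)
        (g := fun _ => (1:ℝ)) (by fun_prop) (by fun_prop)
    · exact measurableSet_lt (f := fun z : (ℝ × ℝ) × (ℝ × ℝ) => RH - z.1.1)
        (g := fun z : (ℝ × ℝ) × (ℝ × ℝ) => z.2.1 * Real.cos (z.2.2 - z.1.2))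
        (by fun_prop) (by fun_prop)
  exact Measurable.ite hs1 (by fun_prop) measurable_const

theorem rs_bound (RH : ℝ) (hRH : 2 ≤ RH) (θ φ : ℝ) :
    ENNReal.ofReal ((RH - 1) / (3 * π) * max (Real.cos (φ - θ)) 0)
      ≤ ∫⁻ r in Ioi (0:ℝ),
          (if r < RH then ENNReal.ofReal r * ∫⁻ s in Ioi (0:ℝ), Psi RH r θ s φ else 0) := by
  have hππ := Real.pi_pos
  set c := Real.cos (φ - θ) with hcdef
  by_cases hc : 0 < c
  swap
  · push_neg at hc
    rw [max_eq_right hc]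
    simp
  rw [max_eq_left hc.le]
  have hc1 : c ≤ 1 := Real.cos_le_one _
  have hcne : c ≠ 0 := hc.ne'
  -- pointwise claim on Ioo (RH - c) RH
  have key : ∀ r ∈ Ioo (RH - c) RH,
      ENNReal.ofReal ((RH - 1) * ((1 - ((RH - r)/c)^2) / 2 * (1/π)))
        ≤ (if r < RH then ENNReal.ofReal r * ∫⁻ s in Ioi (0:ℝ), Psi RH r θ s φ else 0) := by
    rintro r ⟨hr1, hr2⟩
    rw [if_pos hr2]
    have hrpos : (0:ℝ) < r := by linarith
    set a := (RH - r)/c with hadef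
    have ha0 : 0 ≤ a := div_nonneg (by linarith) hc.le
    have ha1 : a < 1 := (div_lt_one hc).mpr (by linarith)
    have hs1 : ∫⁻ s in Ioo a 1, Psi RH r θ s φ ≤ ∫⁻ s in Ioi (0:ℝ), Psi RH r θ s φ := by
      apply lintegral_mono_set
      intro s hs
      exact lt_of_le_of_lt ha0 hs.1
    have hs2 : (∫⁻ s in Ioo a 1, Psi RH r θ s φ)
        = ∫⁻ s in Ioo a 1, ENNReal.ofReal (s * (1/π)) := by
      apply setLIntegral_congr_fun measurableSet_Ioo
      rintro s ⟨hsa, hs1'⟩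
      beta_reduce
      rw [Psi, if_pos]
      exact ⟨hs1', by rw [hcdef] at *; exact (div_lt_iff₀ hc).mp hsa⟩
    have hs3 : (∫⁻ s in Ioo a 1, ENNReal.ofReal (s * (1/π)))
        = ENNReal.ofReal ((1 - a^2) / 2 * (1/π)) := by
      rw [← ofReal_integral_eq_lintegral_ofReal]
      · congr 1
        rw [← MeasureTheory.integral_Ioc_eq_integral_Ioo,
          ← intervalIntegral.integral_of_le ha1.le,
          intervalIntegral.integral_mul_const, integral_id]
        ring
      · exact ((continuous_id.mul continuous_const).integrableOn_Icc).mono_set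
          Ioo_subset_Icc_self
      · refine (ae_restrict_iff' measurableSet_Ioo).mpr (Filter.Eventually.of_forall ?_)
        rintro s ⟨hsa, _⟩
        have : 0 ≤ s := le_of_lt (lt_of_le_of_lt ha0 hsa)
        positivity
    calc ENNReal.ofReal ((RH - 1) * ((1 - a^2) / 2 * (1/π)))
        ≤ ENNReal.ofReal (r * ((1 - a^2) / 2 * (1/π))) := by
          apply ENNReal.ofReal_le_ofReal
          have hfac : (0:ℝ) ≤ (1 - a^2) / 2 * (1/π) := by
            have h1 : a^2 ≤ 1 := by nlinarith
            have h2 : (0:ℝ) ≤ 1 - a^2 := by linarith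
            positivity
          apply mul_le_mul_of_nonneg_right _ hfac
          linarith
      _ = ENNReal.ofReal r * ENNReal.ofReal ((1 - a^2) / 2 * (1/π)) :=
          ENNReal.ofReal_mul hrpos.le
      _ = ENNReal.ofReal r * ∫⁻ s in Ioo a 1, Psi RH r θ s φ := by rw [hs2, hs3]
      _ ≤ _ := by gcongr
  -- integrate the pointwise claim over Ioo (RH - c) RH
  have hmono : (∫⁻ r in Ioo (RH - c) RH,
      ENNReal.ofReal ((RH - 1) * ((1 - ((RH - r)/c)^2) / 2 * (1/π))))
      ≤ ∫⁻ r in Ioi (0:ℝ),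
        (if r < RH then ENNReal.ofReal r * ∫⁻ s in Ioi (0:ℝ), Psi RH r θ s φ else 0) := by
    refine le_trans (setLIntegral_mono' measurableSet_Ioo key) ?_
    apply lintegral_mono_set
    intro r hr
    have : (0:ℝ) < RH - c := by linarith
    exact lt_trans this hr.1
  refine le_trans ?_ hmono
  rw [← ofReal_integral_eq_lintegral_ofReal]
  · apply ENNReal.ofReal_le_ofReal
    have heq : ∀ r : ℝ, (RH - 1) * ((1 - ((RH - r)/c)^2) / 2 * (1/π))
        = ((RH - 1)/(2*π)) * (1 - ((RH - r)/c)^2) := by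
      intro r; ring
    rw [MeasureTheory.integral_congr_ae (Filter.Eventually.of_forall fun r => heq r)]
    rw [MeasureTheory.integral_const_mul, ← MeasureTheory.integral_Ioc_eq_integral_Ioo,
      ← intervalIntegral.integral_of_le (by linarith : RH - c ≤ RH)]
    have hJ : (∫ r in (RH - c)..RH, (1 - ((RH - r)/c)^2)) = 2*c/3 := by
      have hderiv : ∀ x ∈ Set.uIcc (RH - c) RH,
          HasDerivAt (fun r => r + (RH - r)^3/(3*c^2)) (1 - ((RH - x)/c)^2) x := by
        intro x _
        have h1 : HasDerivAt (fun r : ℝ => RH - r) (-1) x := (hasDerivAt_id x).const_sub RH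
        have h2 : HasDerivAt (fun r : ℝ => (RH - r)^3) ((3:ℕ) * (RH - x)^(3-1) * (-1)) x :=
          h1.pow 3
        have h3 := (hasDerivAt_id x).add (h2.div_const (3*c^2))
        refine h3.congr_deriv ?_
        push_cast
        field_simp
        ring
      rw [intervalIntegral.integral_eq_sub_of_hasDerivAt hderiv]
      · field_simp
        ring
      · apply Continuous.intervalIntegrable
        continuity
    rw [hJ]
    have : (RH - 1)/(2*π) * (2*c/3) = (RH - 1) / (3*π) * c := by
      field_simp
    rw [this]
  · exact (Continuous.integrableOn_Icc (by continuity)).mono_set Ioo_subset_Icc_self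
  · refine (ae_restrict_iff' measurableSet_Ioo).mpr (Filter.Eventually.of_forall ?_)
    rintro r ⟨hr1, hr2⟩
    have ha0 : 0 ≤ (RH - r)/c := div_nonneg (by linarith) hc.le
    have ha1 : (RH - r)/c < 1 := (div_lt_one hc).mpr (by linarith)
    have h1 : ((RH - r)/c)^2 ≤ 1 := by nlinarith
    have h2 : (0:ℝ) ≤ RH - 1 := by linarith
    have h3 : (0:ℝ) ≤ 1 - ((RH - r)/c)^2 := by linarith
    positivity

theorem phi_step (RH : ℝ) (hRH : 2 ≤ RH) (θ : ℝ) :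
    (∫⁻ φ in Ioo (-π) π, ENNReal.ofReal ((RH - 1) / (3 * π) * max (Real.cos (φ - θ)) 0))
      = ENNReal.ofReal ((RH - 1) / (3 * π) * 2) := by
  have hππ := Real.pi_pos
  rw [← ofReal_integral_eq_lintegral_ofReal]
  · congr 1
    rw [MeasureTheory.integral_const_mul, cos_max_integral]
  · apply (Continuous.integrableOn_Icc ?_).mono_set Ioo_subset_Icc_self
    exact continuous_const.mul ((Real.continuous_cos.comp
      (continuous_id.sub continuous_const)).max continuous_const)
  · refine Filter.Eventually.of_forall fun φ => ?_
    have h2 : (0:ℝ) ≤ RH - 1 := by linarith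
    exact mul_nonneg (by positivity) (le_max_right _ _)

theorem lintegral_T_eq (g : ℝ × ℝ → ℝ≥0∞) (hg : Measurable g) :
    (∫⁻ p in Ioi (0:ℝ) ×ˢ Ioo (-π) π, g p)
      = ∫⁻ θ in Ioo (-π) π, ∫⁻ r in Ioi (0:ℝ), g (r, θ) := by
  rw [show (volume : Measure (ℝ × ℝ)) = (volume : Measure ℝ).prod volume from
    Measure.volume_eq_prod ℝ ℝ, ← Measure.prod_restrict,
    MeasureTheory.lintegral_prod_symm _ hg.aemeasurable]

theorem polar_eq (RH : ℝ) (hRH : 2 ≤ RH) :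
    (∫⁻ xp in {y : ℝ × ℝ | y.1 ^ 2 + y.2 ^ 2 < RH ^ 2}, ∫⁻ d, Fk d * ek RH xp d)
    = ∫⁻ θ in Ioo (-π) π, ∫⁻ φ in Ioo (-π) π, ∫⁻ r in Ioi (0:ℝ),
        (if r < RH then ENNReal.ofReal r * ∫⁻ s in Ioi (0:ℝ), Psi RH r θ s φ else 0) := by
  have hππ := Real.pi_pos
  have hRH0 : (0:ℝ) < RH := by linarith
  set H : Set (ℝ × ℝ) := {y : ℝ × ℝ | y.1 ^ 2 + y.2 ^ 2 < RH ^ 2} with hHdef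
  have hHmeas : MeasurableSet H :=
    (isOpen_lt (by continuity) continuous_const).measurableSet
  set L' : ℝ × ℝ → ℝ≥0∞ := fun xp => ∫⁻ d, Fk d * ek RH xp d with hL'def
  have measQ : Measurable (fun p : ℝ × ℝ =>
      ∫⁻ q in Ioi (0:ℝ) ×ˢ Ioo (-π) π, Psi RH p.1 p.2 q.1 q.2) :=
    Measurable.lintegral_prod_right'
      (f := fun z : (ℝ × ℝ) × (ℝ × ℝ) => Psi RH z.1.1 z.1.2 z.2.1 z.2.2) (Psi_meas RH)
  -- Step 1: outer polar
  have step1 : (∫⁻ xp in H, L' xp)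
      = ∫⁻ p in polarCoord.target, ENNReal.ofReal p.1 * H.indicator L' (polarCoord.symm p) := by
    rw [← lintegral_indicator hHmeas, ← lintegral_comp_polarCoord_symm']
  -- Step 2: pointwise evaluation on target
  have step2 : ∀ p ∈ polarCoord.target,
      ENNReal.ofReal p.1 * H.indicator L' (polarCoord.symm p)
      = (if p.1 < RH then ENNReal.ofReal p.1 *
          (∫⁻ q in Ioi (0:ℝ) ×ˢ Ioo (-π) π, Psi RH p.1 p.2 q.1 q.2) else 0) := by
    rintro ⟨r, θ⟩ hp
    rw [polarCoord_target_eq] at hp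
    obtain ⟨hr, hθ⟩ := hp
    have hr' : (0:ℝ) < r := hr
    rw [polarCoord_symm_eq]
    simp only
    have hsq : (r * Real.cos θ) ^ 2 + (r * Real.sin θ) ^ 2 = r ^ 2 := by
      have := Real.sin_sq_add_cos_sq θ; nlinarith
    have hmem : ((r * Real.cos θ, r * Real.sin θ) : ℝ × ℝ) ∈ H ↔ r < RH := by
      simp only [hHdef, mem_setOf_eq]
      rw [hsq]
      constructor
      · intro h; nlinarith
      · intro h; nlinarith
    by_cases hrRH : r < RH
    · rw [Set.indicator_of_mem (hmem.mpr hrRH), if_pos hrRH]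
      congr 1
      have hekeq : ∀ d : ℝ × ℝ, ek RH (r * Real.cos θ, r * Real.sin θ) d
          = (if RH - r < d.1 * Real.cos θ + d.2 * Real.sin θ then (1:ℝ≥0∞) else 0) := by
        intro d
        unfold ek
        simp only
        rw [hsq, Real.sqrt_sq hr'.le]
        congr 1
        rw [eq_iff_iff]
        rw [mul_comm (RH - r) r,
          show d.1 * (r * Real.cos θ) + d.2 * (r * Real.sin θ)
            = r * (d.1 * Real.cos θ + d.2 * Real.sin θ) by ring,
          mul_lt_mul_iff_right₀ hr']
      have hthis : L' (r * Real.cos θ, r * Real.sin θ)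
          = ∫⁻ d, Fk d *
            (if RH - r < d.1 * Real.cos θ + d.2 * Real.sin θ then (1:ℝ≥0∞) else 0) := by
        apply lintegral_congr
        intro d
        rw [hekeq d]
      rw [hthis]
      rw [← lintegral_comp_polarCoord_symm'
        (fun d => Fk d * (if RH - r < d.1 * Real.cos θ + d.2 * Real.sin θ then (1:ℝ≥0∞) else 0))]
      rw [polarCoord_target_eq]
      apply setLIntegral_congr_fun (measurableSet_Ioi.prod measurableSet_Ioo)
      rintro ⟨s, φ⟩ hq
      obtain ⟨hs, hφ⟩ := hq
      have hs' : (0:ℝ) < s := hs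
      beta_reduce
      rw [polarCoord_symm_eq]
      simp only
      have hsq2 : (s * Real.cos φ) ^ 2 + (s * Real.sin φ) ^ 2 = s ^ 2 := by
        have := Real.sin_sq_add_cos_sq φ; nlinarith
      have hFk : Fk (s * Real.cos φ, s * Real.sin φ)
          = (if s < 1 then ENNReal.ofReal (1 / π) else 0) := by
        unfold Fk
        simp only
        rw [hsq2]
        congr 1
        rw [eq_iff_iff]
        constructor
        · intro h; nlinarith
        · intro h; nlinarith
      have hcond : (s * Real.cos φ) * Real.cos θ + (s * Real.sin φ) * Real.sin θ
          = s * Real.cos (φ - θ) := by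
        rw [Real.cos_sub]; ring
      rw [hFk, Psi, hcond]
      by_cases h1 : s < 1 <;> by_cases h2 : RH - r < s * Real.cos (φ - θ)
      · rw [if_pos h1, if_pos h2, if_pos ⟨h1, h2⟩, ENNReal.ofReal_mul hs'.le, mul_one]
      · rw [if_pos h1, if_neg h2, if_neg (by tauto), mul_zero, mul_zero]
      · rw [if_neg h1, if_pos h2, if_neg (by tauto), zero_mul, mul_zero]
      · rw [if_neg h1, if_neg h2, if_neg (by tauto), zero_mul, mul_zero]
    · rw [Set.indicator_of_notMem (fun hm => hrRH (hmem.mp hm)), if_neg hrRH, mul_zero]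
  rw [step1, setLIntegral_congr_fun polarCoord.open_target.measurableSet
    (fun p hp => step2 p hp)]
  -- Step 3: iterate the outer polar integral, θ outside
  rw [polarCoord_target_eq]
  rw [lintegral_T_eq _ ?_]
  swap
  · apply Measurable.ite (measurableSet_lt measurable_fst measurable_const)
    · exact (ENNReal.measurable_ofReal.comp measurable_fst).mul measQ
    · exact measurable_const
  -- Step 4: for each θ, massage the inner integral
  apply lintegral_congr_ae
  apply Filter.Eventually.of_forall
  intro θ
  have step4 : ∀ r : ℝ, (∫⁻ q in Ioi (0:ℝ) ×ˢ Ioo (-π) π, Psi RH r θ q.1 q.2)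
      = ∫⁻ φ in Ioo (-π) π, ∫⁻ s in Ioi (0:ℝ), Psi RH r θ s φ := by
    intro r
    have hcomp : Measurable (fun q : ℝ × ℝ => Psi RH r θ q.1 q.2) := by
      have hm : Measurable (fun q : ℝ × ℝ => (((r, θ) : ℝ × ℝ), q)) :=
        measurable_const.prodMk measurable_id
      exact (Psi_meas RH).comp hm
    exact lintegral_T_eq _ hcomp
  simp_rw [step4]
  -- pull the factor inside the φ-integral
  have step5 : ∀ r : ℝ,
      (if r < RH then ENNReal.ofReal r *
        ∫⁻ φ in Ioo (-π) π, ∫⁻ s in Ioi (0:ℝ), Psi RH r θ s φ else 0)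
      = ∫⁻ φ in Ioo (-π) π,
          (if r < RH then ENNReal.ofReal r * ∫⁻ s in Ioi (0:ℝ), Psi RH r θ s φ else 0) := by
    intro r
    by_cases hrRH : r < RH
    · rw [if_pos hrRH, ← lintegral_const_mul' _ _ ENNReal.ofReal_ne_top]
      apply lintegral_congr
      intro φ
      rw [if_pos hrRH]
    · rw [if_neg hrRH]
      symm
      have : ∀ φ : ℝ, (if r < RH then ENNReal.ofReal r *
          ∫⁻ s in Ioi (0:ℝ), Psi RH r θ s φ else 0) = 0 := fun φ => if_neg hrRH
      rw [lintegral_congr this, lintegral_zero]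
  simp_rw [step5]
  -- swap r and φ
  rw [lintegral_lintegral_swap]
  apply Measurable.aemeasurable
  have hinner : Measurable (fun z : ℝ × ℝ => ∫⁻ s in Ioi (0:ℝ), Psi RH z.1 θ s z.2) := by
    apply Measurable.lintegral_prod_right'
      (f := fun w : (ℝ × ℝ) × ℝ => Psi RH w.1.1 θ w.2 w.1.2)
    have hm : Measurable
        (fun w : (ℝ × ℝ) × ℝ => (((w.1.1, θ) : ℝ × ℝ), ((w.2, w.1.2) : ℝ × ℝ))) := by
      fun_prop
    exact (Psi_meas RH).comp hm
  apply Measurable.ite (measurableSet_lt measurable_fst measurable_const)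
  · exact (ENNReal.measurable_ofReal.comp measurable_fst).mul hinner
  · exact measurable_const

theorem translate_lower (RH : ℝ) (hRH : 2 ≤ RH) (xp : ℝ × ℝ) :
    (∫⁻ d, Fk d * ek RH xp d)
      ≤ ∫⁻ x in {y : ℝ × ℝ | y.1 ^ 2 + y.2 ^ 2 < RH ^ 2}ᶜ, Fk (x - xp) := by
  have hRH0 : (0:ℝ) < RH := by linarith
  set np := Real.sqrt (xp.1 ^ 2 + xp.2 ^ 2) with hnpdef
  have hnp0 : 0 ≤ np := Real.sqrt_nonneg _
  have hnpsq : np ^ 2 = xp.1 ^ 2 + xp.2 ^ 2 := Real.sq_sqrt (by positivity)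
  set S : Set (ℝ × ℝ) := {x | RH * np < x.1 * xp.1 + x.2 * xp.2} with hSdef
  have hSmeas : MeasurableSet S := by
    exact measurableSet_lt (f := fun _ : ℝ × ℝ => RH * np)
      (g := fun x : ℝ × ℝ => x.1 * xp.1 + x.2 * xp.2) (by fun_prop) (by fun_prop)
  have hSsub : S ⊆ {y : ℝ × ℝ | y.1 ^ 2 + y.2 ^ 2 < RH ^ 2}ᶜ := by
    intro x hx
    simp only [mem_compl_iff, mem_setOf_eq, not_lt]
    by_contra hcon
    push_neg at hcon
    have hx' : RH * np < x.1 * xp.1 + x.2 * xp.2 := hx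
    have hnx0 : (0:ℝ) ≤ x.1 ^ 2 + x.2 ^ 2 := by positivity
    have hCS : x.1 * xp.1 + x.2 * xp.2 ≤ Real.sqrt (x.1 ^ 2 + x.2 ^ 2) * np := by
      have h1 : (x.1 * xp.1 + x.2 * xp.2) ^ 2
          ≤ (x.1 ^ 2 + x.2 ^ 2) * (xp.1 ^ 2 + xp.2 ^ 2) := by
        nlinarith [sq_nonneg (x.1 * xp.2 - x.2 * xp.1)]
      calc x.1 * xp.1 + x.2 * xp.2 ≤ |x.1 * xp.1 + x.2 * xp.2| := le_abs_self _
        _ = Real.sqrt ((x.1 * xp.1 + x.2 * xp.2) ^ 2) := (Real.sqrt_sq_eq_abs _).symm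
        _ ≤ Real.sqrt ((x.1 ^ 2 + x.2 ^ 2) * (xp.1 ^ 2 + xp.2 ^ 2)) := Real.sqrt_le_sqrt h1
        _ = Real.sqrt (x.1 ^ 2 + x.2 ^ 2) * np := by
            rw [hnpdef, Real.sqrt_mul hnx0]
    have hnx : Real.sqrt (x.1 ^ 2 + x.2 ^ 2) < RH := by
      have := Real.sqrt_lt_sqrt hnx0 hcon
      rwa [Real.sqrt_sq hRH0.le] at this
    have : Real.sqrt (x.1 ^ 2 + x.2 ^ 2) * np ≤ RH * np :=
      mul_le_mul_of_nonneg_right hnx.le hnp0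
    linarith
  have heq : (∫⁻ d, Fk d * ek RH xp d) = ∫⁻ x in S, Fk (x - xp) := by
    rw [← lintegral_indicator hSmeas]
    rw [← lintegral_add_right_eq_self (fun x => S.indicator (fun x' => Fk (x' - xp)) x) xp]
    apply lintegral_congr
    intro d
    by_cases hd : d + xp ∈ S
    · rw [Set.indicator_of_mem hd, add_sub_cancel_right, ek, if_pos, mul_one]
      have hd' : RH * np < (d.1 + xp.1) * xp.1 + (d.2 + xp.2) * xp.2 := hd
      nlinarith
    · rw [Set.indicator_of_notMem hd, ek, if_neg, mul_zero]
      intro hcond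
      apply hd
      have : RH * np < (d.1 + xp.1) * xp.1 + (d.2 + xp.2) * xp.2 := by nlinarith
      exact this
  rw [heq]
  exact lintegral_mono_set hSsub

theorem vol_disk_lt_top (R : ℝ) (hR : 0 ≤ R) :
    volume {y : ℝ × ℝ | y.1 ^ 2 + y.2 ^ 2 < R ^ 2} < ⊤ := by
  have hsub : {y : ℝ × ℝ | y.1 ^ 2 + y.2 ^ 2 < R ^ 2} ⊆ Icc ((-R, -R) : ℝ × ℝ) (R, R) := by
    intro y hy
    simp only [mem_setOf_eq] at hy
    constructor
    · constructor
      · show -R ≤ y.1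
        nlinarith [sq_nonneg y.1, sq_nonneg y.2]
      · show -R ≤ y.2
        nlinarith [sq_nonneg y.1, sq_nonneg y.2]
    · constructor
      · show y.1 ≤ R
        nlinarith [sq_nonneg y.1, sq_nonneg y.2]
      · show y.2 ≤ R
        nlinarith [sq_nonneg y.1, sq_nonneg y.2]
  exact lt_of_le_of_lt (measure_mono hsub) (isCompact_Icc).measure_lt_top


theorem angular_lower (RH : ℝ) (hRH : 2 ≤ RH) :
    ENNReal.ofReal (4 * (RH - 1) / 3)
      ≤ ∫⁻ θ in Ioo (-π) π, ∫⁻ φ in Ioo (-π) π, ∫⁻ r in Ioi (0:ℝ),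
          (if r < RH then ENNReal.ofReal r * ∫⁻ s in Ioi (0:ℝ), Psi RH r θ s φ else 0) := by
  have hππ := Real.pi_pos
  have h1 : ∀ θ : ℝ, ENNReal.ofReal ((RH - 1) / (3 * π) * 2)
      ≤ ∫⁻ φ in Ioo (-π) π, ∫⁻ r in Ioi (0:ℝ),
          (if r < RH then ENNReal.ofReal r * ∫⁻ s in Ioi (0:ℝ), Psi RH r θ s φ else 0) := by
    intro θ
    rw [← phi_step RH hRH θ]
    exact lintegral_mono fun φ => rs_bound RH hRH θ φ
  calc ENNReal.ofReal (4 * (RH - 1) / 3)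
      = ENNReal.ofReal ((RH - 1) / (3 * π) * 2) * volume (Ioo (-π) π) := by
        rw [Real.volume_Ioo, sub_neg_eq_add, ← ENNReal.ofReal_mul ?hn]
        case hn =>
          have h2 : (0:ℝ) ≤ RH - 1 := by linarith
          positivity
        congr 1
        field_simp
        ring
    _ = ∫⁻ _ in Ioo (-π) π, ENNReal.ofReal ((RH - 1) / (3 * π) * 2) :=
        (setLIntegral_const _ _).symm
    _ ≤ _ := lintegral_mono fun θ => h1 θ

theorem numer_lower (RH : ℝ) (hRH : 2 ≤ RH) :
    4 * (RH - 1) / 3 ≤ ∫ xp in {y : ℝ × ℝ | y.1 ^ 2 + y.2 ^ 2 < RH ^ 2},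
        ∫ x in {y : ℝ × ℝ | y.1 ^ 2 + y.2 ^ 2 < RH ^ 2}ᶜ,
          ({y : ℝ × ℝ | y.1 ^ 2 + y.2 ^ 2 < 1}.indicator (fun _ => 1 / π) (x - xp)) := by
  have hππ := Real.pi_pos
  have hRH0 : (0:ℝ) < RH := by linarith
  set H : Set (ℝ × ℝ) := {y : ℝ × ℝ | y.1 ^ 2 + y.2 ^ 2 < RH ^ 2} with hHdef
  have hHmeas : MeasurableSet H :=
    (isOpen_lt (by continuity) continuous_const).measurableSet
  have hdisk1meas : MeasurableSet {y : ℝ × ℝ | y.1 ^ 2 + y.2 ^ 2 < 1} :=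
    (isOpen_lt (by continuity) continuous_const).measurableSet
  have hofFk : ∀ z : ℝ × ℝ,
      ENNReal.ofReal ({y : ℝ × ℝ | y.1 ^ 2 + y.2 ^ 2 < 1}.indicator (fun _ => 1 / π) z)
        = Fk z := by
    intro z
    unfold Fk
    by_cases h : z.1 ^ 2 + z.2 ^ 2 < 1
    · rw [Set.indicator_of_mem (show z ∈ {y : ℝ × ℝ | y.1 ^ 2 + y.2 ^ 2 < 1} from h), if_pos h]
    · rw [Set.indicator_of_notMem
        (show z ∉ {y : ℝ × ℝ | y.1 ^ 2 + y.2 ^ 2 < 1} from h), if_neg h, ENNReal.ofReal_zero]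
  set L : ℝ × ℝ → ℝ≥0∞ := fun xp => ∫⁻ x in Hᶜ, Fk (x - xp) with hLdef
  -- inner integrals in terms of lintegrals
  have inner1 : ∀ xp : ℝ × ℝ,
      (∫ x in Hᶜ, ({y : ℝ × ℝ | y.1 ^ 2 + y.2 ^ 2 < 1}.indicator (fun _ => 1 / π) (x - xp)))
        = (L xp).toReal := by
    intro xp
    rw [MeasureTheory.integral_eq_lintegral_of_nonneg_ae]
    · congr 1
      apply lintegral_congr
      intro x
      exact hofFk (x - xp)
    · exact Filter.Eventually.of_forall fun x =>
        Set.indicator_nonneg (fun _ _ => by positivity) _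
    · exact ((measurable_const.indicator hdisk1meas).comp
        (measurable_id.sub measurable_const)).aestronglyMeasurable
  have hLmeas : Measurable L := by
    apply Measurable.lintegral_prod_right'
      (f := fun z : (ℝ × ℝ) × (ℝ × ℝ) => Fk (z.2 - z.1))
    exact Fk_meas.comp (measurable_snd.sub measurable_fst)
  -- uniform bound on L
  set C : ℝ≥0∞ := ENNReal.ofReal (1 / π) * volume {y : ℝ × ℝ | y.1 ^ 2 + y.2 ^ 2 < 1} with hCdef
  have hCne : C ≠ ⊤ := by
    apply ENNReal.mul_ne_top ENNReal.ofReal_ne_top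
    have := vol_disk_lt_top 1 (by norm_num)
    rw [one_pow] at this
    exact this.ne
  have hLle : ∀ xp : ℝ × ℝ, L xp ≤ C := by
    intro xp
    have h1 : L xp ≤ ∫⁻ x, Fk (x - xp) := lintegral_mono' Measure.restrict_le_self le_rfl
    have h2 : (∫⁻ x, Fk (x - xp)) = ∫⁻ x, Fk x := by
      have := lintegral_add_right_eq_self (μ := (volume : Measure (ℝ × ℝ))) (fun x => Fk x) (-xp)
      simpa [sub_eq_add_neg] using this
    have h3 : (∫⁻ x, Fk x) = C := by
      have hFkind : Fk = Set.indicator {y : ℝ × ℝ | y.1 ^ 2 + y.2 ^ 2 < 1}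
          (fun _ => ENNReal.ofReal (1 / π)) := by
        funext d; simp [Fk, Set.indicator_apply]
      rw [hFkind, lintegral_indicator_const hdisk1meas]
    rw [← h3, ← h2]
    exact h1
  have hNfin : (∫⁻ xp in H, L xp) ≠ ⊤ := by
    apply ne_of_lt
    calc (∫⁻ xp in H, L xp) ≤ ∫⁻ _ in H, C := lintegral_mono fun xp => hLle xp
      _ = C * volume H := setLIntegral_const _ _
      _ < ⊤ := ENNReal.mul_lt_top hCne.lt_top (vol_disk_lt_top RH hRH0.le)
  -- main chain
  have main : ENNReal.ofReal (4 * (RH - 1) / 3) ≤ ∫⁻ xp in H, L xp := by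
    calc ENNReal.ofReal (4 * (RH - 1) / 3)
        ≤ ∫⁻ θ in Ioo (-π) π, ∫⁻ φ in Ioo (-π) π, ∫⁻ r in Ioi (0:ℝ),
            (if r < RH then ENNReal.ofReal r * ∫⁻ s in Ioi (0:ℝ), Psi RH r θ s φ else 0) :=
          angular_lower RH hRH
      _ = ∫⁻ xp in H, ∫⁻ d, Fk d * ek RH xp d := (polar_eq RH hRH).symm
      _ ≤ ∫⁻ xp in H, L xp := lintegral_mono fun xp => translate_lower RH hRH xp
  have hout : (∫ xp in H,
      ∫ x in Hᶜ, ({y : ℝ × ℝ | y.1 ^ 2 + y.2 ^ 2 < 1}.indicator (fun _ => 1 / π) (x - xp)))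
      = (∫⁻ xp in H, L xp).toReal := by
    rw [MeasureTheory.integral_congr_ae (Filter.Eventually.of_forall fun xp => inner1 xp)]
    rw [MeasureTheory.integral_toReal (hLmeas.aemeasurable.restrict)]
    exact Filter.Eventually.of_forall fun xp => lt_of_le_of_lt (hLle xp) hCne.lt_top
  rw [hout]
  calc 4 * (RH - 1) / 3 = (ENNReal.ofReal (4 * (RH - 1) / 3)).toReal := by
        rw [ENNReal.toReal_ofReal]
        have : (0:ℝ) ≤ RH - 1 := by linarith
        positivity
    _ ≤ (∫⁻ xp in H, L xp).toReal := ENNReal.toReal_mono hNfin main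


/-- Sharpness of the symmetric bound `p ≤ μL/(πA)`: for every `ε > 0` there
are a disk habitat `H` of radius `R_H` (perimeter `L = 2πR_H`) and a
rotationally symmetric dispersal density `f_d` (uniform on a disk of radius
`R_d`, with mean dispersal distance `μ`) such that `pA/(μL) > 1/π − ε`, where
`pA = ∬_{x_p∈H} ∬_{x∈Hᶜ} f_d(x−x_p)`.  Hence the constant `1/π` is optimal. -/
theorem symmetric_bound_sharp (ε : ℝ) (hε : 0 < ε) :
    ∃ RH Rd : ℝ, 0 < Rd ∧ Rd < RH ∧
      (∫ xp in {y : ℝ × ℝ | y.1 ^ 2 + y.2 ^ 2 < RH ^ 2},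
          ∫ x in {y : ℝ × ℝ | y.1 ^ 2 + y.2 ^ 2 < RH ^ 2}ᶜ,
            ({y : ℝ × ℝ | y.1 ^ 2 + y.2 ^ 2 < Rd ^ 2}.indicator
              (fun _ => 1 / (Real.pi * Rd ^ 2)) (x - xp))) /
        ((∫ x : ℝ × ℝ, Real.sqrt (x.1 ^ 2 + x.2 ^ 2) *
            ({y : ℝ × ℝ | y.1 ^ 2 + y.2 ^ 2 < Rd ^ 2}.indicator
              (fun _ => 1 / (Real.pi * Rd ^ 2)) x)) *
          (2 * Real.pi * RH))
      > 1 / Real.pi - ε := by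

  have hππ := Real.pi_pos
  set RH : ℝ := max 2 (1 / (π * ε) + 2) with hRHdef
  have hRH2 : (2:ℝ) ≤ RH := le_max_left _ _
  have hRH0 : (0:ℝ) < RH := by linarith
  refine ⟨RH, 1, one_pos, by linarith, ?_⟩
  simp only [one_pow, mul_one]
  rw [denom_eval]
  have hN := numer_lower RH hRH2
  have hD : (0:ℝ) < 2 / 3 * (2 * π * RH) := by positivity
  set N : ℝ := ∫ xp in {y : ℝ × ℝ | y.1 ^ 2 + y.2 ^ 2 < RH ^ 2},
      ∫ x in {y : ℝ × ℝ | y.1 ^ 2 + y.2 ^ 2 < RH ^ 2}ᶜ,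
        ({y : ℝ × ℝ | y.1 ^ 2 + y.2 ^ 2 < 1}.indicator (fun _ => 1 / π) (x - xp)) with hNdef
  have key : (RH - 1) / (π * RH) ≤ N / (2 / 3 * (2 * π * RH)) := by
    have h1 : 4 * (RH - 1) / 3 / (2 / 3 * (2 * π * RH)) = (RH - 1) / (π * RH) := by
      field_simp
      ring
    rw [← h1]
    gcongr
  have hfrac : 1 / π - ε < (RH - 1) / (π * RH) := by
    have heq : (RH - 1) / (π * RH) = 1 / π - 1 / (π * RH) := by
      field_simp
    have hRHge : 1 / (π * ε) + 2 ≤ RH := le_max_right _ _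
    have h2 : 1 / ε < π * RH := by
      have h3 : π * (1 / (π * ε) + 2) ≤ π * RH := by
        exact mul_le_mul_of_nonneg_left hRHge hππ.le
      have h4 : π * (1 / (π * ε)) = 1 / ε := by field_simp
      nlinarith
    have h5 : 1 / (π * RH) < ε := by
      have := one_div_lt_one_div_of_lt (by positivity : (0:ℝ) < 1 / ε) h2
      rwa [one_div_one_div] at this
    rw [heq]
    linarith
  calc 1 / π - ε < (RH - 1) / (π * RH) := hfrac
    _ ≤ N / (2 / 3 * (2 * π * RH)) := key
end
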